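/- arXiv:0807.3580 — 7 statements merged into one kernel-verified Lean document; each statement's English description precedes it below -/
import Mathlib

section
/- If I ∈ P_n is a proper pattern (i.e., (i,i) ∉ I for at least one i ∈ {1,…,n}) and I is n-universal, then |I| ≤ n(n−1)/2. -/
open Matrix Module Set Finset
open scoped ENNReal

noncomputable section

namespace UPat

variable {n : ℕ}

def csum (u : Fin n → ℂ) : ℂ := ∑ c, (starRingEnd ℂ) (u c) * u c

def wmat (u : Fin n → ℂ) : Matrix (Fin n) (Fin n) ℂ :=
  Matrix.of fun a b => (starRingEnd ℂ) (u a) * u b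

def cmat (u : Fin n → ℂ) : Matrix (Fin n) (Fin n) ℂ :=
  Matrix.of fun a b =>
    2 * (csum u)⁻¹ * ((starRingEnd ℂ) (u a) * u b) - (if a = b then (1:ℂ) else 0)

lemma cmat_eq (u : Fin n → ℂ) : cmat u = (2 * (csum u)⁻¹) • wmat u - 1 := by
  ext a b
  simp [cmat, wmat, Matrix.one_apply, mul_assoc]

lemma conj_csum (u : Fin n → ℂ) : (starRingEnd ℂ) (csum u) = csum u := by
  simp only [csum, map_sum]
  refine Finset.sum_congr rfl fun c _ => ?_
  rw [_root_.map_mul]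
  simp [mul_comm]

lemma wmat_mul_wmat (u : Fin n → ℂ) : wmat u * wmat u = csum u • wmat u := by
  ext a b
  simp only [Matrix.mul_apply, wmat, Matrix.of_apply, Matrix.smul_apply, csum, smul_eq_mul,
    Finset.sum_mul]
  refine Finset.sum_congr rfl fun c _ => by ring

lemma wmat_conjTranspose (u : Fin n → ℂ) : (wmat u)ᴴ = wmat u := by
  ext a b
  simp [wmat, Matrix.conjTranspose_apply, mul_comm]

lemma star_two_inv_csum (u : Fin n → ℂ) :
    star (2 * (csum u)⁻¹) = 2 * (csum u)⁻¹ := by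
  have hs : star (csum u) = csum u := by
    rw [← starRingEnd_apply]; exact conj_csum u
  rw [star_mul', star_inv₀, hs, show (star (2:ℂ)) = 2 by
    rw [← starRingEnd_apply, map_ofNat]]

lemma cmat_conjTranspose (u : Fin n → ℂ) : (cmat u)ᴴ = cmat u := by
  rw [cmat_eq, conjTranspose_sub, conjTranspose_smul, conjTranspose_one, wmat_conjTranspose,
    star_two_inv_csum]

lemma cmat_mul_self {u : Fin n → ℂ} (h : csum u ≠ 0) : cmat u * cmat u = 1 := by
  rw [cmat_eq]
  set α := 2 * (csum u)⁻¹ with hα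
  set W := wmat u with hW
  have h1 : (α • W - 1) * (α • W - 1) = (α • W) * (α • W) - α • W - α • W + 1 := by
    simp only [sub_mul, mul_sub, mul_one, one_mul]
    abel
  have h2 : (α • W) * (α • W) = (α * α * csum u) • W := by
    rw [smul_mul_smul_comm, hW, wmat_mul_wmat, smul_smul]
  have h3 : α * α * csum u = α + α := by
    rw [hα]; field_simp; ring
  rw [h1, h2, h3, add_smul]
  abel

lemma cmat_mem_unitaryGroup {u : Fin n → ℂ} (h : csum u ≠ 0) :
    cmat u ∈ Matrix.unitaryGroup (Fin n) ℂ := by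
  rw [Matrix.mem_unitaryGroup_iff]
  show cmat u * (cmat u)ᴴ = 1
  rw [cmat_conjTranspose, cmat_mul_self h]

/-- permutation matrix: `pm σ` has `(pm σ) (σ b) b = 1`, i.e. `pm σ • e_b = e_{σ b}`. -/
def pm (σ : Equiv.Perm (Fin n)) : Matrix (Fin n) (Fin n) ℂ :=
  Matrix.of fun a b => if σ b = a then 1 else 0

lemma mul_pm_apply (X : Matrix (Fin n) (Fin n) ℂ) (σ : Equiv.Perm (Fin n)) (a b : Fin n) :
    (X * pm σ) a b = X a (σ b) := by
  simp only [Matrix.mul_apply, pm, Matrix.of_apply]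
  rw [Finset.sum_eq_single (σ b)]
  · simp
  · intro c _ hc; simp [Ne.symm hc]
  · simp

lemma pm_mul_pm (σ τ : Equiv.Perm (Fin n)) : pm σ * pm τ = pm (σ * τ) := by
  ext a b
  rw [mul_pm_apply]
  simp [pm]
  congr 1

lemma pm_one : (pm (1 : Equiv.Perm (Fin n))) = 1 := by
  ext a b
  simp [pm, Matrix.one_apply, eq_comm]

lemma star_pm (σ : Equiv.Perm (Fin n)) : star (pm σ) = pm σ⁻¹ := by
  ext a b
  show (starRingEnd ℂ) (pm σ b a) = pm σ⁻¹ a b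
  simp only [pm, Matrix.of_apply]
  by_cases h : σ a = b
  · have h1 : σ⁻¹ b = a := by rw [← h]; simp
    simp [h, h1]
  · have h2 : ¬ (σ⁻¹ b = a) := fun hh => h (by rw [← hh]; simp)
    simp [h, h2]
    exact h2

lemma pm_mem_unitaryGroup (σ : Equiv.Perm (Fin n)) : pm σ ∈ Matrix.unitaryGroup (Fin n) ℂ := by
  rw [Matrix.mem_unitaryGroup_iff, star_pm, pm_mul_pm]
  simp [pm_one]

lemma diagonal_mem_unitaryGroup {d : Fin n → ℂ} (h : ∀ i, d i * (starRingEnd ℂ) (d i) = 1) :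
    Matrix.diagonal d ∈ Matrix.unitaryGroup (Fin n) ℂ := by
  rw [Matrix.mem_unitaryGroup_iff]
  have : star (Matrix.diagonal d) = Matrix.diagonal (star d) := Matrix.diagonal_conjTranspose d
  rw [this, Matrix.diagonal_mul_diagonal]
  have h2 : (fun i => d i * star d i) = fun _ => (1:ℂ) := by
    funext i
    rw [Pi.star_apply, ← starRingEnd_apply]
    exact h i
  rw [h2]
  exact Matrix.diagonal_one


/-- `u` has nonzero `csum` whenever some coordinate equals 1. -/
lemma csum_ne_zero {u : Fin n → ℂ} {k : Fin n} (hk : u k = 1) : csum u ≠ 0 := by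
  intro h0
  have hre : (csum u).re = ∑ c, Complex.normSq (u c) := by
    rw [csum, Complex.re_sum]
    refine Finset.sum_congr rfl fun c _ => ?_
    rw [mul_comm, Complex.mul_conj]
    simp
  have hge : (1:ℝ) ≤ (csum u).re := by
    rw [hre]
    have : ∀ c ∈ Finset.univ, (0:ℝ) ≤ Complex.normSq (u c) := fun c _ => Complex.normSq_nonneg _
    calc (1:ℝ) = Complex.normSq (u k) := by rw [hk]; simp
    _ ≤ ∑ c, Complex.normSq (u c) := Finset.single_le_sum this (Finset.mem_univ k)
  rw [h0] at hge
  simp at hge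
  linarith

/-- the chart matrices -/
def nmat (i k : Fin n) (z : Fin n → ℂ) : Matrix (Fin n) (Fin n) ℂ :=
  pm (Equiv.swap k i) * cmat (z + Pi.single k 1)

def gprod : (j : ℕ) → (Fin n → Fin n) → (Fin n → Fin n → ℂ) → Matrix (Fin n) (Fin n) ℂ
  | 0, _, _ => 1
  | j+1, κ, z => gprod j κ z *
      (if h : j < n then nmat ⟨j, h⟩ (κ ⟨j, h⟩) (z ⟨j, h⟩) else 1)

lemma gprod_congr {κ κ' : Fin n → Fin n} {z z' : Fin n → Fin n → ℂ} :
    ∀ (j : ℕ), (∀ i : Fin n, (i : ℕ) < j → κ i = κ' i ∧ z i = z' i) →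
      gprod j κ z = gprod j κ' z'
  | 0, _ => rfl
  | j+1, hyp => by
    have h1 : gprod j κ z = gprod j κ' z' :=
      gprod_congr j fun i hi => hyp i (Nat.lt_succ_of_lt hi)
    by_cases h : j < n
    · obtain ⟨hk, hz⟩ := hyp ⟨j, h⟩ (Nat.lt_succ_self j)
      simp only [gprod, dif_pos h, h1, hk, hz]
    · simp only [gprod, dif_neg h, h1]


lemma decomp : ∀ (j : ℕ) (U : Matrix (Fin n) (Fin n) ℂ),
    U ∈ Matrix.unitaryGroup (Fin n) ℂ →
    (∀ r : Fin n, j ≤ (r : ℕ) → ∀ b, U r b = if r = b then (1:ℂ) else 0) →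
    ∃ (d : Fin n → ℂ) (κ : Fin n → Fin n) (z : Fin n → Fin n → ℂ),
      (∀ i, d i * (starRingEnd ℂ) (d i) = 1) ∧
      (∀ i : Fin n, ((κ i : ℕ) ≤ (i : ℕ))) ∧
      (∀ (i a : Fin n), ((i : ℕ) < (a : ℕ) ∨ a = κ i) → z i a = 0) ∧
      U = Matrix.diagonal d * gprod j κ z := by
  intro j
  induction j with
  | zero =>
    intro U _ hrows
    refine ⟨fun _ => 1, id, 0, by simp, by simp, by simp, ?_⟩
    have : U = 1 := by
      ext a b
      rw [hrows a (Nat.zero_le _) b, Matrix.one_apply]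
    rw [this]
    show (1 : Matrix (Fin n) (Fin n) ℂ) = Matrix.diagonal (fun _ => 1) * 1
    rw [Matrix.diagonal_one, one_mul]
  | succ j IH =>
    intro U hU hrows
    by_cases h : j < n
    case neg =>
      obtain ⟨d, κ, z, h1, h2, h3, h4⟩ := IH U hU
        (fun r hr b => absurd r.isLt (by omega))
      exact ⟨d, κ, z, h1, h2, h3, by
        rw [h4]
        show _ = Matrix.diagonal d * (gprod j κ z * _)
        rw [dif_neg h, mul_one]⟩
    case pos =>
    set jf : Fin n := ⟨j, h⟩ with hjf
    set v : Fin n → ℂ := U jf with hv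
    have hUU : U * star U = 1 := Matrix.mem_unitaryGroup_iff.mp hU
    -- row j has norm 1
    have hnorm : ∑ b, (starRingEnd ℂ) (v b) * v b = 1 := by
      have h1 := congrArg (fun M => M jf jf) hUU
      simp only [Matrix.mul_apply, Matrix.one_apply_eq] at h1
      rw [← h1]
      refine Finset.sum_congr rfl fun c _ => ?_
      show (starRingEnd ℂ) (U jf c) * U jf c = U jf c * star U c jf
      rw [Matrix.star_apply]
      exact mul_comm _ _
    -- row j is supported on indices ≤ j
    have hsupp : ∀ b : Fin n, j < (b : ℕ) → v b = 0 := by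
      intro b hb
      have hbne : jf ≠ b := by
        intro hh
        rw [← hh] at hb
        exact Nat.lt_irrefl j hb
      have h1 := congrArg (fun M => M jf b) hUU
      simp only [Matrix.mul_apply] at h1
      rw [Matrix.one_apply_ne hbne] at h1
      rw [← h1]
      symm
      have : ∀ c, U jf c * star U c b = if b = c then v c else 0 := by
        intro c
        rw [Matrix.star_apply, hrows b (by omega) c]
        by_cases hbc : b = c
        · simp [hbc]; rfl
        · simp [hbc]
      rw [Finset.sum_congr rfl fun c _ => this c]
      rw [Finset.sum_ite_eq Finset.univ b v]
      simp
    -- pivot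
    have hex : ∃ k : Fin n, (k : ℕ) ≤ j ∧ v k ≠ 0 := by
      by_contra hno
      push_neg at hno
      have hz : ∀ b, v b = 0 := by
        intro b
        rcases le_or_gt (b : ℕ) j with hb | hb
        · exact hno b hb
        · exact hsupp b hb
      rw [Finset.sum_eq_zero (fun b _ => by rw [hz b]; simp)] at hnorm
      exact one_ne_zero hnorm.symm
    obtain ⟨k, hkj, hvk⟩ := hex
    set s : ℝ := ‖v k‖ with hs
    have hs0 : 0 < s := by
      rw [hs]
      exact norm_pos_iff.mpr hvk
    have hsC : ((s:ℂ)) ≠ 0 := Complex.ofReal_ne_zero.mpr (ne_of_gt hs0)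
    set d₀ : ℂ := (starRingEnd ℂ) (v k) / (s : ℂ) with hd₀def
    have hd₀unit : d₀ * (starRingEnd ℂ) d₀ = 1 := by
      rw [hd₀def, map_div₀, Complex.conj_conj, Complex.conj_ofReal]
      rw [div_mul_div_comm]
      rw [mul_comm ((starRingEnd ℂ) (v k)) (v k), Complex.mul_conj]
      rw [Complex.normSq_eq_norm_sq, ← hs]
      push_cast
      field_simp
    have hd₀unit' : (starRingEnd ℂ) d₀ * d₀ = 1 := by rw [mul_comm]; exact hd₀unit
    set v' : Fin n → ℂ := fun b => d₀ * v b with hv'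
    have hv'k : v' k = (s : ℂ) := by
      rw [hv']
      show d₀ * v k = _
      rw [hd₀def, div_mul_eq_mul_div, mul_comm ((starRingEnd ℂ) (v k)) (v k), Complex.mul_conj,
        Complex.normSq_eq_norm_sq, ← hs]
      push_cast
      field_simp
    have hvv' : ∀ b, v b = (starRingEnd ℂ) d₀ * v' b := by
      intro b
      rw [hv']
      show v b = (starRingEnd ℂ) d₀ * (d₀ * v b)
      rw [← mul_assoc, hd₀unit', one_mul]
    have hv'supp : ∀ b : Fin n, j < (b : ℕ) → v' b = 0 := by
      intro b hb
      rw [hv']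
      show d₀ * v b = 0
      rw [hsupp b hb, mul_zero]
    have hv'norm : ∑ b, (starRingEnd ℂ) (v' b) * v' b = 1 := by
      rw [← hnorm]
      refine Finset.sum_congr rfl fun b _ => ?_
      rw [hv']
      show (starRingEnd ℂ) (d₀ * v b) * (d₀ * v b) = _
      rw [map_mul (starRingEnd ℂ) d₀ (v b)]
      calc (starRingEnd ℂ) d₀ * (starRingEnd ℂ) (v b) * (d₀ * v b)
          = (d₀ * (starRingEnd ℂ) d₀) * ((starRingEnd ℂ) (v b) * v b) := by ring
        _ = (starRingEnd ℂ) (v b) * v b := by rw [hd₀unit, one_mul]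
    have hsum_er : ∑ a ∈ Finset.univ.erase k, (starRingEnd ℂ) (v' a) * v' a
        = 1 - (s:ℂ) * (s:ℂ) := by
      have h1 := Finset.sum_erase_add Finset.univ
        (fun a => (starRingEnd ℂ) (v' a) * v' a) (Finset.mem_univ k)
      have h2 : (∑ a ∈ Finset.univ.erase k, (starRingEnd ℂ) (v' a) * v' a)
          + (starRingEnd ℂ) (v' k) * v' k = 1 := by rw [h1, hv'norm]
      rw [hv'k, Complex.conj_ofReal] at h2
      linear_combination h2
    set c1 : ℂ := 1 + (s : ℂ) with hc1def
    have hc1 : c1 ≠ 0 := by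
      intro h0
      have := congrArg Complex.re h0
      simp [hc1def] at this
      linarith
    have hconj_c1 : (starRingEnd ℂ) c1 = c1 := by
      rw [hc1def, map_add, _root_.map_one, Complex.conj_ofReal]
    set zj : Fin n → ℂ := fun a => if a = k then 0 else v' a / c1 with hzj
    set u : Fin n → ℂ := zj + Pi.single k 1 with hudef
    have hu : ∀ a, u a = if a = k then 1 else v' a / c1 := by
      intro a
      by_cases ha : a = k
      · simp [hudef, hzj, ha]
      · simp [hudef, hzj, ha, Pi.single_apply]
    have huk : u k = 1 := by rw [hu k, if_pos rfl]
    have husupp : ∀ b : Fin n, j < (b : ℕ) → u b = 0 := by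
      intro b hb
      have hbk : b ≠ k := fun hh => by rw [hh] at hb; omega
      rw [hu b, if_neg hbk, hv'supp b hb, zero_div]
    have hcsum_ne : csum u ≠ 0 := csum_ne_zero huk
    have hcsum : csum u = 2 / c1 := by
      have e1 : ∀ a ∈ Finset.univ.erase k, (starRingEnd ℂ) (u a) * u a
          = ((starRingEnd ℂ) (v' a) * v' a) / (c1 * c1) := by
        intro a ha
        have hak : a ≠ k := Finset.ne_of_mem_erase ha
        rw [hu a, if_neg hak, map_div₀, hconj_c1, div_mul_div_comm]
      have h2 : (∑ a ∈ Finset.univ.erase k, (starRingEnd ℂ) (u a) * u a)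
          + (starRingEnd ℂ) (u k) * u k = csum u :=
        Finset.sum_erase_add Finset.univ (fun a => (starRingEnd ℂ) (u a) * u a)
          (Finset.mem_univ k)
      rw [Finset.sum_congr rfl e1, ← Finset.sum_div, hsum_er, huk, _root_.map_one, mul_one] at h2
      rw [← h2]
      field_simp
      ring
    have hcsum_inv : 2 * (csum u)⁻¹ = c1 := by
      rw [hcsum]
      field_simp
    have hrowsum : ∑ a, v a * (starRingEnd ℂ) (u a) = (starRingEnd ℂ) d₀ := by
      have e1 : ∀ a ∈ Finset.univ.erase k, v a * (starRingEnd ℂ) (u a)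
          = (starRingEnd ℂ) d₀ * (((starRingEnd ℂ) (v' a) * v' a) / c1) := by
        intro a ha
        have hak : a ≠ k := Finset.ne_of_mem_erase ha
        rw [hu a, if_neg hak, map_div₀, hconj_c1, hvv' a]
        field_simp
      have h2 : (∑ a ∈ Finset.univ.erase k, v a * (starRingEnd ℂ) (u a))
          + v k * (starRingEnd ℂ) (u k) = ∑ a, v a * (starRingEnd ℂ) (u a) :=
        Finset.sum_erase_add Finset.univ (fun a => v a * (starRingEnd ℂ) (u a))
          (Finset.mem_univ k)
      rw [Finset.sum_congr rfl e1, ← Finset.mul_sum, ← Finset.sum_div, hsum_er,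
        huk, _root_.map_one, mul_one, hvv' k, hv'k] at h2
      rw [← h2]
      field_simp
      ring
    set σ : Equiv.Perm (Fin n) := Equiv.swap k jf with hσdef
    have hσj : σ jf = k := Equiv.swap_apply_right k jf
    have hσk : σ k = jf := Equiv.swap_apply_left k jf
    have hσfix : ∀ r : Fin n, r ≠ k → r ≠ jf → σ r = r := fun r h1 h2 =>
      Equiv.swap_apply_of_ne_of_ne h1 h2
    have hUC : ∀ b, (U * cmat u) jf b = (starRingEnd ℂ) d₀ * (if b = k then 1 else 0) := by
      intro b
      rw [Matrix.mul_apply]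
      have e1 : ∀ a, U jf a * cmat u a b
          = (2 * (csum u)⁻¹ * u b) * (v a * (starRingEnd ℂ) (u a))
            - (if a = b then v a else 0) := by
        intro a
        show v a * (2 * (csum u)⁻¹ * ((starRingEnd ℂ) (u a) * u b)
            - (if a = b then (1:ℂ) else 0)) = _
        rw [mul_sub, mul_ite, mul_one, mul_zero]
        congr 1
        ring
      rw [Finset.sum_congr rfl fun a _ => e1 a, Finset.sum_sub_distrib, ← Finset.mul_sum,
        hrowsum, Finset.sum_ite_eq' Finset.univ b v, if_pos (Finset.mem_univ b), hcsum_inv]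
      by_cases hb : b = k
      · rw [hb, if_pos rfl, huk, hvv' k, hv'k, hc1def]
        ring
      · rw [if_neg hb, hu b, if_neg hb, hvv' b]
        field_simp
        ring
    have hUCP_rowj : ∀ b, (U * cmat u * pm σ) jf b
        = (starRingEnd ℂ) d₀ * (if jf = b then 1 else 0) := by
      intro b
      rw [mul_pm_apply, hUC (σ b)]
      congr 1
      by_cases hb : b = jf
      · rw [hb, hσj, if_pos rfl, if_pos rfl]
      · have h1 : σ b ≠ k := by
          intro hh
          apply hb
          have := congrArg σ hh
          rw [hσk] at this
          rwa [← Equiv.Perm.mul_apply, Equiv.swap_mul_self, Equiv.Perm.one_apply] at this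
        rw [if_neg h1, if_neg (fun hh => hb hh.symm)]
    have hUC_rowr : ∀ r : Fin n, j < (r : ℕ) → ∀ b,
        (U * cmat u) r b = -(if r = b then 1 else 0) := by
      intro r hr b
      rw [Matrix.mul_apply]
      have e1 : ∀ a, U r a * cmat u a b = if a = r then cmat u r b else 0 := by
        intro a
        rw [hrows r (by omega) a]
        by_cases har : r = a
        · rw [if_pos har, one_mul, if_pos har.symm, har]
        · rw [if_neg har, zero_mul, if_neg (fun hh => har hh.symm)]
      rw [Finset.sum_congr rfl fun a _ => e1 a,
        Finset.sum_ite_eq' Finset.univ r (fun _ => cmat u r b), if_pos (Finset.mem_univ r)]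
      show 2 * (csum u)⁻¹ * ((starRingEnd ℂ) (u r) * u b) - (if r = b then (1:ℂ) else 0) = _
      rw [husupp r hr]
      simp
    have hUCP_rowr : ∀ r : Fin n, j < (r : ℕ) → ∀ b,
        (U * cmat u * pm σ) r b = -(if r = b then 1 else 0) := by
      intro r hr b
      have hrk : r ≠ k := fun hh => by rw [hh] at hr; omega
      have hrjf : r ≠ jf := fun hh => by rw [hh] at hr; exact Nat.lt_irrefl j hr
      rw [mul_pm_apply, hUC_rowr r hr (σ b)]
      congr 1
      by_cases hb : b = k
      · rw [hb, hσk, if_neg hrjf, if_neg hrk]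
      · by_cases hb2 : b = jf
        · rw [hb2, hσj, if_neg hrk, if_neg hrjf]
        · rw [hσfix b hb hb2]
    set E₁ : Fin n → ℂ := fun i => if (i : ℕ) < j then 1 else if i = jf then d₀ else -1
      with hE₁def
    have hE₁unit : ∀ i, E₁ i * (starRingEnd ℂ) (E₁ i) = 1 := by
      intro i
      simp only [hE₁def]
      by_cases h1 : (i : ℕ) < j
      · simp [h1]
      · by_cases h2 : i = jf
        · rw [if_neg h1, if_pos h2]
          exact hd₀unit
        · simp [h1, h2]
    set U₁ : Matrix (Fin n) (Fin n) ℂ := Matrix.diagonal E₁ * (U * cmat u * pm σ)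
      with hU₁def
    have hU₁mem : U₁ ∈ Matrix.unitaryGroup (Fin n) ℂ :=
      mul_mem (diagonal_mem_unitaryGroup hE₁unit)
        (mul_mem (mul_mem hU (cmat_mem_unitaryGroup hcsum_ne)) (pm_mem_unitaryGroup σ))
    have hU₁rows : ∀ r : Fin n, j ≤ (r : ℕ) → ∀ b, U₁ r b = if r = b then (1:ℂ) else 0 := by
      intro r hr b
      rw [hU₁def, Matrix.diagonal_mul]
      rcases eq_or_lt_of_le hr with heq | hlt
      · have hrjf : r = jf := Fin.ext heq.symm
        have e3 : E₁ jf = d₀ := by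
          have hnl : ¬ ((jf : Fin n) : ℕ) < j := Nat.lt_irrefl j
          simp [hE₁def, hnl]
        rw [hrjf, hUCP_rowj b, e3, ← mul_assoc, hd₀unit, one_mul]
      · have h1 : ¬ ((r : ℕ) < j) := by omega
        have h2 : r ≠ jf := fun hh => by rw [hh] at hlt; exact Nat.lt_irrefl j hlt
        have e4 : E₁ r = -1 := by simp [hE₁def, h1, h2]
        rw [hUCP_rowr r hlt b, e4, neg_one_mul, neg_neg]
    obtain ⟨d₂, κ₂, z₂, hd₂, hκ₂, hz₂, hfac⟩ := IH U₁ hU₁mem hU₁rows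
    refine ⟨fun i => (starRingEnd ℂ) (E₁ i) * d₂ i, Function.update κ₂ jf k,
      Function.update z₂ jf zj, ?_, ?_, ?_, ?_⟩
    · intro i
      have e1 := hE₁unit i
      have e2 := hd₂ i
      calc (starRingEnd ℂ) (E₁ i) * d₂ i * (starRingEnd ℂ) ((starRingEnd ℂ) (E₁ i) * d₂ i)
          = (E₁ i * (starRingEnd ℂ) (E₁ i)) * (d₂ i * (starRingEnd ℂ) (d₂ i)) := by
            rw [map_mul (starRingEnd ℂ) ((starRingEnd ℂ) (E₁ i)) (d₂ i), Complex.conj_conj]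
            ring
        _ = 1 := by rw [e1, e2, one_mul]
    · intro i
      by_cases hi : i = jf
      · rw [hi, Function.update_self]
        exact hkj
      · rw [Function.update_of_ne hi]
        exact hκ₂ i
    · intro i a hia
      by_cases hi : i = jf
      · subst hi
        rw [Function.update_self] at hia ⊢
        rcases hia with hia | hia
        · have hia' : j < (a : ℕ) := hia
          have hak : a ≠ k := fun hh => by rw [hh] at hia'; omega
          rw [hzj]
          show (if a = k then 0 else v' a / c1) = 0
          rw [if_neg hak, hv'supp a hia', zero_div]
        · rw [hzj]
          show (if a = k then 0 else v' a / c1) = 0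
          rw [if_pos hia]
      · rw [Function.update_of_ne hi] at hia ⊢
        exact hz₂ i a hia
    · have hPP : pm σ * pm σ = 1 := by
        rw [pm_mul_pm, hσdef, Equiv.swap_mul_self, pm_one]
      have hCC : cmat u * cmat u = 1 := cmat_mul_self hcsum_ne
      have hdE : Matrix.diagonal (fun i => (starRingEnd ℂ) (E₁ i)) * Matrix.diagonal E₁
          = 1 := by
        rw [Matrix.diagonal_mul_diagonal]
        have : (fun i => (starRingEnd ℂ) (E₁ i) * E₁ i) = fun _ => (1:ℂ) := by
          funext i
          rw [mul_comm]
          exact hE₁unit i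
        rw [this]
        exact Matrix.diagonal_one
      have key : Matrix.diagonal (fun i => (starRingEnd ℂ) (E₁ i)) * U₁ * (pm σ * cmat u)
          = U := by
        rw [hU₁def,
          ← mul_assoc (Matrix.diagonal fun i => (starRingEnd ℂ) (E₁ i)) (Matrix.diagonal E₁)
            (U * cmat u * pm σ), hdE, one_mul,
          mul_assoc (U * cmat u) (pm σ) (pm σ * cmat u), ← mul_assoc (pm σ) (pm σ) (cmat u),
          hPP, one_mul, mul_assoc U (cmat u) (cmat u), hCC, mul_one]
      have hnm : nmat jf k zj = pm σ * cmat u := rfl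
      have hgc : gprod j (Function.update κ₂ jf k) (Function.update z₂ jf zj)
          = gprod j κ₂ z₂ := by
        refine gprod_congr j fun i hi => ?_
        have hi' : i ≠ jf := fun hh => by rw [hh] at hi; exact Nat.lt_irrefl j hi
        rw [Function.update_of_ne hi', Function.update_of_ne hi']
        exact ⟨rfl, rfl⟩
      have hg : gprod (j+1) (Function.update κ₂ jf k) (Function.update z₂ jf zj)
          = gprod j κ₂ z₂ * (pm σ * cmat u) := by
        show gprod j _ _ * _ = _
        rw [dif_pos h, hgc, Function.update_self, Function.update_self, hnm]
      rw [hg, ← key, hfac]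
      rw [← mul_assoc (Matrix.diagonal fun i => (starRingEnd ℂ) (E₁ i)) (Matrix.diagonal d₂)
        (gprod j κ₂ z₂), Matrix.diagonal_mul_diagonal, mul_assoc]


/-! ### Pattern subspaces and their ranks -/

def ebas (q : Fin n × Fin n) : Matrix (Fin n) (Fin n) ℂ :=
  Matrix.of fun a b => if a = q.1 ∧ b = q.2 then 1 else 0

lemma ebas_apply (q : Fin n × Fin n) (a b : Fin n) :
    ebas q a b = if a = q.1 ∧ b = q.2 then (1:ℂ) else 0 := rfl

lemma trace_ebas (q : Fin n × Fin n) :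
    (ebas q).trace = if q.1 = q.2 then (1:ℂ) else 0 := by
  rw [Matrix.trace]
  by_cases hq : q.1 = q.2
  · rw [if_pos hq]
    have e1 : ∀ a : Fin n, (ebas q).diag a = if a = q.1 then (1:ℂ) else 0 := by
      intro a
      rw [Matrix.diag_apply, ebas_apply]
      by_cases ha : a = q.1
      · rw [if_pos ⟨ha, hq ▸ ha⟩, if_pos ha]
      · rw [if_neg (fun hh => ha hh.1), if_neg ha]
    rw [Finset.sum_congr rfl fun a _ => e1 a, Finset.sum_ite_eq' Finset.univ q.1 fun _ => (1:ℂ)]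
    simp
  · rw [if_neg hq]
    refine Finset.sum_eq_zero fun a _ => ?_
    rw [Matrix.diag_apply, ebas_apply, if_neg]
    rintro ⟨h1, h2⟩
    exact hq (h1 ▸ h2 ▸ rfl)

def entryLM (p : Fin n × Fin n) : Matrix (Fin n) (Fin n) ℂ →ₗ[ℂ] ℂ where
  toFun X := X p.1 p.2
  map_add' _ _ := rfl
  map_smul' _ _ := rfl

def phiLM (S : Finset (Fin n × Fin n)) :
    Matrix (Fin n) (Fin n) ℂ →ₗ[ℂ] ((S → ℂ) × ℂ) :=
  (LinearMap.pi fun p : S => entryLM p.val).prod (Matrix.traceLinearMap (Fin n) ℂ ℂ)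

lemma phi_surj (S : Finset (Fin n × Fin n)) {i₀ : Fin n} (hi₀ : (i₀, i₀) ∉ S) :
    Function.Surjective (phiLM (n := n) S) := by
  rintro ⟨f, c⟩
  classical
  set X : Matrix (Fin n) (Fin n) ℂ :=
    (∑ p : S, f p • ebas p.val)
      + (c - ∑ p : S, if p.val.1 = p.val.2 then f p else 0) • ebas (i₀, i₀) with hX
  have hentry : ∀ q : S, X q.val.1 q.val.2 = f q := by
    intro q
    have h1 : ∀ p : S, (f p • ebas p.val) q.val.1 q.val.2 = if p = q then f p else 0 := by
      intro p
      rw [Matrix.smul_apply, ebas_apply, smul_eq_mul]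
      by_cases hpq : p = q
      · rw [if_pos ⟨(hpq ▸ rfl), (hpq ▸ rfl)⟩, if_pos hpq, mul_one]
      · have : ¬ (q.val.1 = p.val.1 ∧ q.val.2 = p.val.2) := by
          rintro ⟨e1, e2⟩
          exact hpq (Subtype.ext (Prod.ext e1.symm e2.symm))
        rw [if_neg this, if_neg hpq, mul_zero]
    have h2 : ebas (i₀, i₀) q.val.1 q.val.2 = 0 := by
      rw [ebas_apply, if_neg]
      rintro ⟨e1, e2⟩
      apply hi₀
      have : q.val = (i₀, i₀) := Prod.ext e1 e2
      rw [← this]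
      exact q.property
    rw [hX, Matrix.add_apply, Matrix.smul_apply, h2, smul_zero, add_zero,
      Matrix.sum_apply]
    have h3 : ∀ p : S, (∑ p : S, f p • ebas p.val) q.val.1 q.val.2
        = ∑ p : S, (f p • ebas p.val) q.val.1 q.val.2 := by
      intro p
      rw [Matrix.sum_apply]
    rw [Finset.sum_congr rfl fun p _ => h1 p, Finset.sum_ite_eq' Finset.univ q f]
    simp
  have htrace : X.trace = c := by
    rw [hX, Matrix.trace_add, Matrix.trace_smul, trace_ebas]
    have h4 : (Matrix.trace (∑ p : S, f p • ebas p.val))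
        = ∑ p : S, if p.val.1 = p.val.2 then f p else 0 := by
      rw [Matrix.trace_sum]
      refine Finset.sum_congr rfl fun p _ => ?_
      rw [Matrix.trace_smul, trace_ebas]
      by_cases hp : p.val.1 = p.val.2
      · rw [if_pos hp, if_pos hp, smul_eq_mul, mul_one]
      · rw [if_neg hp, if_neg hp, smul_zero]
    rw [h4]
    simp
  refine ⟨X, ?_⟩
  have : phiLM S X = (fun q : S => X q.val.1 q.val.2, X.trace) := rfl
  rw [this, htrace]
  congr 1
  funext q
  exact hentry q

lemma finrank_ker_phi (S : Finset (Fin n × Fin n)) {i₀ : Fin n} (hi₀ : (i₀, i₀) ∉ S) :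
    finrank ℂ (LinearMap.ker (phiLM (n := n) S)) + (S.card + 1) = n * n := by
  have h1 := LinearMap.finrank_range_add_finrank_ker (phiLM (n := n) S)
  rw [LinearMap.range_eq_top.mpr (phi_surj S hi₀), finrank_top] at h1
  have h2 : finrank ℂ ((S → ℂ) × ℂ) = S.card + 1 := by
    rw [Module.finrank_prod, Module.finrank_pi, Module.finrank_self, Fintype.card_coe]
  have h3 : finrank ℂ (Matrix (Fin n) (Fin n) ℂ) = n * n := by
    rw [Module.finrank_matrix, Fintype.card_fin, Module.finrank_self, mul_one]
  omega

lemma finrank_real_ker (S : Finset (Fin n × Fin n)) {i₀ : Fin n} (hi₀ : (i₀, i₀) ∉ S) :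
    finrank ℝ (Submodule.restrictScalars ℝ (LinearMap.ker (phiLM (n := n) S)))
      + 2 * S.card + 2 = 2 * (n * n) := by
  have h1 : finrank ℝ (Submodule.restrictScalars ℝ (LinearMap.ker (phiLM (n := n) S)))
      = finrank ℝ (LinearMap.ker (phiLM (n := n) S)) :=
    ((Submodule.restrictScalarsEquiv ℝ ℂ _ (LinearMap.ker (phiLM (n := n) S))).restrictScalars
      ℝ).finrank_eq
  have h2 := finrank_mul_finrank ℝ ℂ (LinearMap.ker (phiLM (n := n) S))
  rw [Complex.finrank_real_complex] at h2
  have h3 := finrank_ker_phi S hi₀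
  omega

/-! ### The parameter subspace -/

def Zsub (κ : Fin n → Fin n) : Submodule ℝ (Fin n → Fin n → ℂ) where
  carrier := {x | ∀ i a : Fin n, ((i : ℕ) < (a : ℕ) ∨ a = κ i) → x i a = 0}
  add_mem' := by
    intro x y hx hy i a hia
    show x i a + y i a = 0
    rw [hx i a hia, hy i a hia, add_zero]
  zero_mem' := fun _ _ _ => rfl
  smul_mem' := by
    intro c x hx i a hia
    show c • x i a = 0
    rw [hx i a hia, smul_zero]

lemma finrank_Zsub_le (κ : Fin n → Fin n) (hκ : ∀ i : Fin n, (κ i : ℕ) ≤ (i : ℕ)) :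
    finrank ℝ (Zsub κ) ≤ n * (n - 1) := by
  classical
  set T : Finset (Fin n × Fin n) :=
    Finset.univ.filter (fun q : Fin n × Fin n => (q.2 : ℕ) ≤ (q.1 : ℕ) ∧ q.2 ≠ κ q.1) with hT
  set r : (Fin n → Fin n → ℂ) →ₗ[ℝ] (T → ℂ) :=
    { toFun := fun x q => x q.val.1 q.val.2
      map_add' := fun _ _ => rfl
      map_smul' := fun _ _ => rfl } with hr
  have hinj : Function.Injective (r.comp (Zsub κ).subtype) := by
    intro x y hxy
    apply Subtype.ext
    funext i a
    rcases Classical.em ((i : ℕ) < (a : ℕ) ∨ a = κ i) with hc | hc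
    · rw [x.property i a hc, y.property i a hc]
    · push_neg at hc
      have hmem : (i, a) ∈ T := by
        rw [hT, Finset.mem_filter]
        exact ⟨Finset.mem_univ _, hc.1, hc.2⟩
      exact congrFun hxy ⟨(i, a), hmem⟩
  have h1 : finrank ℝ (Zsub κ) ≤ finrank ℝ (T → ℂ) := by
    rw [← LinearMap.finrank_range_of_inj hinj]
    exact Submodule.finrank_le _
  have h2 : finrank ℝ (T → ℂ) = T.card * 2 := by
    rw [Module.finrank_pi_fintype]
    rw [Finset.sum_const, Complex.finrank_real_complex, Finset.card_univ, Fintype.card_coe,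
      smul_eq_mul]
  have h3 : T.card ≤ n * (n - 1) / 2 := by
    have hcard := Finset.card_eq_sum_card_fiberwise
      (f := Prod.fst) (s := T) (t := Finset.univ) (fun x _ => Finset.mem_univ _)
    have hfib : ∀ i : Fin n, (T.filter (fun q => q.1 = i)).card ≤ (i : ℕ) := by
      intro i
      have hsub : (T.filter (fun q => q.1 = i)).card
          ≤ ((Finset.Iic i).erase (κ i)).card := by
        apply Finset.card_le_card_of_injOn (fun q => q.2)
        · intro q hq
          rw [Finset.mem_coe, Finset.mem_filter] at hq
          obtain ⟨hq1, hq2⟩ := hq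
          rw [hT, Finset.mem_filter] at hq1
          obtain ⟨-, hle, hne⟩ := hq1
          rw [Finset.mem_coe, Finset.mem_erase, Finset.mem_Iic]
          constructor
          · rw [← hq2]; exact hne
          · rw [← hq2] at *; exact Fin.le_def.mpr hle
        · intro q1 h1' q2 h2' he
          rw [Finset.mem_coe, Finset.mem_filter] at h1' h2'
          exact Prod.ext (h1'.2.trans h2'.2.symm) he
      have : ((Finset.Iic i).erase (κ i)).card = (i : ℕ) := by
        rw [Finset.card_erase_of_mem (Finset.mem_Iic.mpr (Fin.le_def.mpr (hκ i))),
          Fin.card_Iic]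
        omega
      omega
    calc T.card = ∑ i : Fin n, (T.filter (fun q => q.1 = i)).card := hcard
      _ ≤ ∑ i : Fin n, (i : ℕ) := Finset.sum_le_sum fun i _ => hfib i
      _ = ∑ i ∈ Finset.range n, i := by rw [← Fin.sum_univ_eq_sum_range (fun i => i) n]
      _ = n * (n - 1) / 2 := by
          rw [← Finset.sum_range_id_mul_two n]
          omega
  have h4 : n * (n - 1) / 2 * 2 ≤ n * (n - 1) := Nat.div_mul_le_self _ _
  calc finrank ℝ (Zsub κ) ≤ T.card * 2 := h2 ▸ h1
    _ ≤ n * (n - 1) / 2 * 2 := by omega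
    _ ≤ n * (n - 1) := h4


/-! ### Hausdorff dimension helpers -/

section DimH

variable {E F : Type*} [NormedAddCommGroup E] [NormedSpace ℝ E] [FiniteDimensional ℝ E]
  [NormedAddCommGroup F] [NormedSpace ℝ F] [FiniteDimensional ℝ F]

lemma dimH_submodule (p : Submodule ℝ E) : dimH (p : Set E) = finrank ℝ p := by
  have h1 : (p : Set E) = p.subtypeₗᵢ '' Set.univ := by
    rw [Set.image_univ, show ⇑p.subtypeₗᵢ = (Subtype.val : p → E) from rfl, Subtype.range_coe]
  rw [h1, p.subtypeₗᵢ.isometry.dimH_image, Real.dimH_univ_eq_finrank]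

lemma dimH_prod_submodule (p : Submodule ℝ E) (q : Submodule ℝ F) :
    dimH ((p : Set E) ×ˢ (q : Set F)) = (finrank ℝ p + finrank ℝ q : ℕ) := by
  set f : (↥p × ↥q) → E × F := fun x => (x.1.val, x.2.val) with hf
  have hiso : Isometry f := by
    intro a b
    rw [Prod.edist_eq, Prod.edist_eq]
    rfl
  have himg : f '' Set.univ = (p : Set E) ×ˢ (q : Set F) := by
    rw [Set.image_univ]
    ext x
    constructor
    · rintro ⟨⟨a, b⟩, rfl⟩
      exact ⟨a.property, b.property⟩
    · rintro ⟨hx1, hx2⟩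
      exact ⟨(⟨x.1, hx1⟩, ⟨x.2, hx2⟩), rfl⟩
  rw [← himg, hiso.dimH_image, Real.dimH_univ_eq_finrank, Module.finrank_prod]

end DimH

/-! ### Analysis -/

section Analysis

attribute [local instance] Matrix.frobeniusNormedRing Matrix.frobeniusNormedAlgebra

variable {n : ℕ}

lemma contDiffOn_matrix {P : Type*} [NormedAddCommGroup P] [NormedSpace ℝ P]
    [FiniteDimensional ℝ P]
    {f : P → Matrix (Fin n) (Fin n) ℂ} {s : Set P}
    (h : ∀ a b : Fin n, ContDiffOn ℝ 1 (fun p => f p a b) s) :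
    ContDiffOn ℝ 1 f s := by
  set L : (Fin n → Fin n → ℂ) →L[ℝ] Matrix (Fin n) (Fin n) ℂ :=
    LinearMap.toContinuousLinearMap
      ((Matrix.ofLinearEquiv ℝ (m := Fin n) (n := Fin n) (α := ℂ)).toLinearMap) with hL
  have h1 : ContDiffOn ℝ 1 (fun p => (fun a b => f p a b : Fin n → Fin n → ℂ)) s := by
    rw [contDiffOn_pi]
    intro a
    rw [contDiffOn_pi]
    intro b
    exact h a b
  exact (L.contDiff.comp_contDiffOn h1 :)

def evalLM (i a : Fin n) :
    ((Fin n → Fin n → ℂ) × Matrix (Fin n) (Fin n) ℂ) →ₗ[ℝ] ℂ where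
  toFun p := p.1 i a
  map_add' _ _ := rfl
  map_smul' _ _ := rfl

/-- smoothness of the factor `p ↦ cmat (p.1 i + Pi.single k 1)` on a set where
the `k` coordinate of `p.1 i` vanishes -/
lemma contDiffOn_cmat_factor (i k : Fin n)
    {s : Set ((Fin n → Fin n → ℂ) × Matrix (Fin n) (Fin n) ℂ)}
    (hs : ∀ p ∈ s, p.1 i k = 0) :
    ContDiffOn ℝ 1 (fun p => cmat (p.1 i + Pi.single k 1)) s := by
  set w : ((Fin n → Fin n → ℂ) × Matrix (Fin n) (Fin n) ℂ) → (Fin n → ℂ) :=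
    fun p => p.1 i + Pi.single k 1 with hwdef
  have hw : ∀ a : Fin n, ContDiffOn ℝ 1 (fun p => w p a) s := by
    intro a
    have h1 : ContDiff ℝ 1 (fun p : ((Fin n → Fin n → ℂ) × Matrix (Fin n) (Fin n) ℂ) =>
        p.1 i a) := (evalLM i a).toContinuousLinearMap.contDiff
    exact (h1.add contDiff_const).contDiffOn
  have hwc : ∀ a : Fin n, ContDiffOn ℝ 1 (fun p => (starRingEnd ℂ) (w p a)) s := by
    intro a
    exact ((Complex.conjCLE.toContinuousLinearMap.contDiff (n := 1)).comp_contDiffOn (hw a) :)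
  have hcsum : ContDiffOn ℝ 1 (fun p => csum (w p)) s := by
    show ContDiffOn ℝ 1 (fun p => ∑ c, (starRingEnd ℂ) (w p c) * w p c) s
    exact ContDiffOn.sum fun c _ => (hwc c).mul (hw c)
  have hne : ∀ p ∈ s, csum (w p) ≠ 0 := by
    intro p hp
    have hwk : w p k = 1 := by
      simp only [hwdef, Pi.add_apply, hs p hp, Pi.single_eq_same, zero_add]
    exact csum_ne_zero hwk
  have hinv : ContDiffOn ℝ 1 (fun p => (csum (w p))⁻¹) s := hcsum.inv hne
  apply contDiffOn_matrix
  intro a b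
  show ContDiffOn ℝ 1
    (fun p => 2 * (csum (w p))⁻¹ * ((starRingEnd ℂ) (w p a) * w p b)
      - (if a = b then (1:ℂ) else 0)) s
  exact ((contDiffOn_const.mul hinv).mul ((hwc a).mul (hw b))).sub contDiffOn_const

lemma contDiffOn_gprod (κ : Fin n → Fin n)
    {s : Set ((Fin n → Fin n → ℂ) × Matrix (Fin n) (Fin n) ℂ)}
    (hs : ∀ p ∈ s, ∀ i : Fin n, p.1 i (κ i) = 0) (j : ℕ) :
    ContDiffOn ℝ 1 (fun p => gprod j κ p.1) s := by
  induction j with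
  | zero => exact contDiffOn_const
  | succ j IH =>
    by_cases h : j < n
    · have he : (fun p : ((Fin n → Fin n → ℂ) × Matrix (Fin n) (Fin n) ℂ) =>
          gprod (j+1) κ p.1)
          = fun p => gprod j κ p.1 *
            (pm (Equiv.swap (κ ⟨j, h⟩) ⟨j, h⟩) * cmat (p.1 ⟨j, h⟩ + Pi.single (κ ⟨j, h⟩) 1)) := by
        funext p
        show gprod j κ p.1 * _ = _
        rw [dif_pos h]
        rfl
      rw [he]
      exact IH.mul (contDiffOn_const.mul
        (contDiffOn_cmat_factor ⟨j, h⟩ (κ ⟨j, h⟩) (fun p hp => hs p hp ⟨j, h⟩)))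
    · have he : (fun p : ((Fin n → Fin n → ℂ) × Matrix (Fin n) (Fin n) ℂ) =>
          gprod (j+1) κ p.1) = fun p => gprod j κ p.1 * 1 := by
        funext p
        show gprod j κ p.1 * _ = _
        rw [dif_neg h]
      rw [he]
      exact IH.mul contDiffOn_const

def ctLM : Matrix (Fin n) (Fin n) ℂ →ₗ[ℝ] Matrix (Fin n) (Fin n) ℂ where
  toFun X := Xᴴ
  map_add' A B := Matrix.conjTranspose_add A B
  map_smul' r A := by
    ext a b
    show (starRingEnd ℂ) ((r • A) b a) = r • (starRingEnd ℂ) (A b a)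
    show (starRingEnd ℂ) (r • (A b a)) = _
    rw [Complex.real_smul, Complex.real_smul, _root_.map_mul, Complex.conj_ofReal]

lemma contDiffOn_Fmap (κ : Fin n → Fin n)
    {s : Set ((Fin n → Fin n → ℂ) × Matrix (Fin n) (Fin n) ℂ)}
    (hs : ∀ p ∈ s, ∀ i : Fin n, p.1 i (κ i) = 0) :
    ContDiffOn ℝ 1
      (fun p => (gprod n κ p.1)ᴴ * p.2 * gprod n κ p.1) s := by
  have hG := contDiffOn_gprod κ hs n
  have hstar : ContDiffOn ℝ 1 (fun p => (gprod n κ p.1)ᴴ) s :=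
    ((ctLM.toContinuousLinearMap.contDiff (n := 1)).comp_contDiffOn hG :)
  exact (hstar.mul (contDiff_snd.contDiffOn)).mul hG

lemma finrank_trace_ker (hn : 0 < n) :
    finrank ℝ (Submodule.restrictScalars ℝ
      (LinearMap.ker (Matrix.traceLinearMap (Fin n) ℂ ℂ))) + 2 = 2 * (n * n) := by
  have hsurj : Function.Surjective (Matrix.traceLinearMap (Fin n) ℂ ℂ) := by
    intro c
    refine ⟨c • ebas (⟨0, hn⟩, ⟨0, hn⟩), ?_⟩
    show (c • ebas (⟨0, hn⟩, ⟨0, hn⟩)).trace = c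
    rw [Matrix.trace_smul, trace_ebas, if_pos rfl, smul_eq_mul, mul_one]
  have h1 := LinearMap.finrank_range_add_finrank_ker (Matrix.traceLinearMap (Fin n) ℂ ℂ)
  rw [LinearMap.range_eq_top.mpr hsurj, finrank_top, Module.finrank_self] at h1
  have h3 : finrank ℂ (Matrix (Fin n) (Fin n) ℂ) = n * n := by
    rw [Module.finrank_matrix, Fintype.card_fin, Module.finrank_self, mul_one]
  have h4 : finrank ℝ (Submodule.restrictScalars ℝ
      (LinearMap.ker (Matrix.traceLinearMap (Fin n) ℂ ℂ)))
      = finrank ℝ (LinearMap.ker (Matrix.traceLinearMap (Fin n) ℂ ℂ)) :=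
    ((Submodule.restrictScalarsEquiv ℝ ℂ _
      (LinearMap.ker (Matrix.traceLinearMap (Fin n) ℂ ℂ))).restrictScalars ℝ).finrank_eq
  have h2 := finrank_mul_finrank ℝ ℂ
    (LinearMap.ker (Matrix.traceLinearMap (Fin n) ℂ ℂ))
  rw [Complex.finrank_real_complex] at h2
  omega

theorem key (S : Finset (Fin n × Fin n)) (hn : 0 < n) {i₀ : Fin n} (hi₀ : (i₀, i₀) ∉ S)
    (hcard : n * (n - 1) / 2 + 1 ≤ S.card)
    (hU : ∀ A : Matrix (Fin n) (Fin n) ℂ, A.trace = 0 →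
      ∃ U ∈ Matrix.unitaryGroup (Fin n) ℂ,
        ∀ a b : Fin n, (a, b) ∈ S → (U * A * star U) a b = 0) : False := by
  classical
  set K := {κ : Fin n → Fin n // ∀ i : Fin n, ((κ i : ℕ) ≤ (i : ℕ))} with hK
  set Lr := Submodule.restrictScalars ℝ (LinearMap.ker (phiLM (n := n) S)) with hLr
  set Wr := Submodule.restrictScalars ℝ
    (LinearMap.ker (Matrix.traceLinearMap (Fin n) ℂ ℂ)) with hWr
  set Dom : K → Set ((Fin n → Fin n → ℂ) × Matrix (Fin n) (Fin n) ℂ) :=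
    fun κ => (Zsub κ.1 : Set (Fin n → Fin n → ℂ)) ×ˢ
      (Lr : Set (Matrix (Fin n) (Fin n) ℂ)) with hDom
  set Fm : K → ((Fin n → Fin n → ℂ) × Matrix (Fin n) (Fin n) ℂ) →
      Matrix (Fin n) (Fin n) ℂ :=
    fun κ p => (gprod n κ.1 p.1)ᴴ * p.2 * gprod n κ.1 p.1 with hFm
  have hcover : (Wr : Set (Matrix (Fin n) (Fin n) ℂ)) ⊆ ⋃ κ : K, Fm κ '' Dom κ := by
    intro A hA
    have hAtr : A.trace = 0 := hA
    obtain ⟨U, hUmem, hzero⟩ := hU A hAtr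
    obtain ⟨d, κ, z, hd, hκ, hzc, hfac⟩ := decomp n U hUmem
      (fun r hr b => absurd r.isLt (by omega))
    set Y := U * A * star U with hY
    have h1 : star U * U = 1 := (Unitary.mem_iff.mp hUmem).1
    have hA2 : A = star U * Y * U := by
      rw [hY]
      calc A = 1 * A * 1 := by rw [one_mul, mul_one]
        _ = (star U * U) * A * (star U * U) := by rw [h1]
        _ = star U * (U * A * star U) * U := by simp only [mul_assoc]
    set d' := fun i => (starRingEnd ℂ) (d i) with hd'
    set Y' := Matrix.diagonal d' * Y * Matrix.diagonal d with hY'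
    have hstarU : star U = (gprod n κ z)ᴴ * Matrix.diagonal d' := by
      rw [hfac]
      show (Matrix.diagonal d * gprod n κ z)ᴴ = _
      rw [Matrix.conjTranspose_mul, Matrix.diagonal_conjTranspose]
      rfl
    have hY'ent : ∀ a b : Fin n, Y' a b = d' a * Y a b * d b := by
      intro a b
      rw [hY', Matrix.mul_diagonal, Matrix.diagonal_mul]
    have hY'mem : Y' ∈ Lr := by
      show Y' ∈ LinearMap.ker (phiLM (n := n) S)
      rw [LinearMap.mem_ker]
      have hent : ∀ q : S, Y' q.val.1 q.val.2 = 0 := by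
        intro q
        have hq : (q.val.1, q.val.2) ∈ S := by
          have := q.property
          rwa [show (q.val.1, q.val.2) = q.val from rfl]
        rw [hY'ent, hzero q.val.1 q.val.2 hq, mul_zero, zero_mul]
      have htr : Y'.trace = 0 := by
        have e1 : Y'.trace = Y.trace := by
          rw [Matrix.trace, Matrix.trace]
          refine Finset.sum_congr rfl fun a _ => ?_
          rw [Matrix.diag_apply, Matrix.diag_apply, hY'ent]
          calc d' a * Y a a * d a = Y a a * (d a * (starRingEnd ℂ) (d a)) := by
                rw [hd']; ring
            _ = Y a a := by rw [hd a, mul_one]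
        have e2 : Y.trace = A.trace := by
          rw [hY, Matrix.trace_mul_cycle, h1, one_mul]
        rw [e1, e2, hAtr]
      have : phiLM (n := n) S Y'
          = (fun q : S => Y' q.val.1 q.val.2, Y'.trace) := rfl
      rw [this]
      have hz0 : (fun q : S => Y' q.val.1 q.val.2) = 0 := funext fun q => hent q
      rw [hz0, htr]
      rfl
    have hmem : (z, Y') ∈ Dom ⟨κ, hκ⟩ := by
      constructor
      · exact fun i a hia => hzc i a hia
      · exact hY'mem
    refine Set.mem_iUnion.mpr ⟨⟨κ, hκ⟩, ⟨(z, Y'), hmem, ?_⟩⟩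
    show (gprod n κ z)ᴴ * Y' * gprod n κ z = A
    rw [hA2, hstarU, hfac, hY']
    simp only [mul_assoc]
  have hdim1 : dimH (Wr : Set (Matrix (Fin n) (Fin n) ℂ)) = (finrank ℝ Wr : ℝ≥0∞) :=
    dimH_submodule Wr
  have hbound : ∀ κ : K, dimH (Fm κ '' Dom κ)
      ≤ ((n * (n - 1) + finrank ℝ Lr : ℕ) : ℝ≥0∞) := by
    intro κ
    have hconv : Convex ℝ (Dom κ) := ((Zsub κ.1).convex).prod (Lr.convex)
    have hsdom : ∀ p ∈ Dom κ, ∀ i : Fin n, p.1 i (κ.1 i) = 0 :=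
      fun p hp i => hp.1 i (κ.1 i) (Or.inr rfl)
    have h1 := (contDiffOn_Fmap κ.1 hsdom).dimH_image_le hconv subset_rfl
    calc dimH (Fm κ '' Dom κ) ≤ dimH (Dom κ) := h1
      _ = ((finrank ℝ (Zsub κ.1) + finrank ℝ Lr : ℕ) : ℝ≥0∞) := dimH_prod_submodule _ _
      _ ≤ _ := Nat.cast_le.mpr (Nat.add_le_add_right (finrank_Zsub_le κ.1 κ.2) _)
  have hchain : (finrank ℝ Wr : ℝ≥0∞) ≤ ((n * (n - 1) + finrank ℝ Lr : ℕ) : ℝ≥0∞) := by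
    rw [← hdim1]
    calc dimH (Wr : Set (Matrix (Fin n) (Fin n) ℂ)) ≤ dimH (⋃ κ : K, Fm κ '' Dom κ) :=
        dimH_mono hcover
      _ = ⨆ κ : K, dimH (Fm κ '' Dom κ) := dimH_iUnion _
      _ ≤ _ := iSup_le hbound
  have hle := Nat.cast_le.mp hchain
  have hnum := finrank_trace_ker (n := n) hn
  have hL := finrank_real_ker S hi₀
  rw [← hWr] at hnum
  rw [← hLr] at hL
  have hEvn : Even (n * (n - 1)) := by
    rcases Nat.even_or_odd n with h | h
    · exact h.mul_right _
    · have h1 : Even (n - 1) := Nat.Odd.sub_odd h odd_one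
      exact h1.mul_left n
  have hEv : n * (n - 1) / 2 * 2 = n * (n - 1) := Nat.div_two_mul_two_of_even hEvn
  omega

end Analysis

end UPat

/-- A pattern `I` (finite set of 1-based positions) is `n`-universal if every traceless
complex `n × n` matrix is unitarily similar to a matrix vanishing on all positions of `I`. -/
def IsUniversal (n : ℕ) (I : Finset (ℕ × ℕ)) : Prop :=
  ∀ A : Matrix (Fin n) (Fin n) ℂ, A.trace = 0 →
    ∃ U ∈ Matrix.unitaryGroup (Fin n) ℂ,
      ∀ i j : Fin n, ((i : ℕ) + 1, (j : ℕ) + 1) ∈ I → (U * A * star U) i j = 0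

/-- If a proper pattern `I ∈ P_n` is `n`-universal, then `|I| ≤ n(n-1)/2`. -/
theorem proper_universal_card_le (n : ℕ) (I : Finset (ℕ × ℕ))
    (hI : I ⊆ Finset.Icc 1 n ×ˢ Finset.Icc 1 n)
    (hproper : ∃ i ∈ Finset.Icc 1 n, (i, i) ∉ I)
    (huniv : IsUniversal n I) :
    I.card ≤ n * (n - 1) / 2 := by
  classical
  obtain ⟨i, hiI, hiNot⟩ := hproper
  rw [Finset.mem_Icc] at hiI
  have hn : 0 < n := by omega
  by_contra hcard
  push_neg at hcard
  set f : ℕ × ℕ → Fin n × Fin n :=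
    fun p => (⟨(p.1 - 1) % n, Nat.mod_lt _ hn⟩, ⟨(p.2 - 1) % n, Nat.mod_lt _ hn⟩) with hf
  set S := I.image f with hS
  have hmemf : ∀ p ∈ I, 1 ≤ p.1 ∧ p.1 ≤ n ∧ 1 ≤ p.2 ∧ p.2 ≤ n := by
    intro p hp
    have h1 := hI hp
    rw [Finset.mem_product, Finset.mem_Icc, Finset.mem_Icc] at h1
    omega
  have hfval : ∀ p, p ∈ I → ((f p).1.1 : ℕ) = p.1 - 1 ∧ ((f p).2.1 : ℕ) = p.2 - 1 := by
    intro p hp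
    obtain ⟨h1, h2, h3, h4⟩ := hmemf p hp
    constructor
    · show (p.1 - 1) % n = p.1 - 1
      exact Nat.mod_eq_of_lt (by omega)
    · show (p.2 - 1) % n = p.2 - 1
      exact Nat.mod_eq_of_lt (by omega)
  have hScard : S.card = I.card := by
    rw [hS]
    apply Finset.card_image_of_injOn
    intro p hp q hq he
    rw [Finset.mem_coe] at hp hq
    obtain ⟨hp1, hp2, hp3, hp4⟩ := hmemf p hp
    obtain ⟨hq1, hq2, hq3, hq4⟩ := hmemf q hq
    obtain ⟨he1, he2⟩ := hfval p hp
    obtain ⟨he3, he4⟩ := hfval q hq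
    have hv1 : ((f p).1.1 : ℕ) = ((f q).1.1 : ℕ) := by rw [he]
    have hv2 : ((f p).2.1 : ℕ) = ((f q).2.1 : ℕ) := by rw [he]
    rw [he1, he3] at hv1
    rw [he2, he4] at hv2
    exact Prod.ext (by omega) (by omega)
  have hSmem : ∀ a b : Fin n, (a, b) ∈ S → ((a : ℕ) + 1, (b : ℕ) + 1) ∈ I := by
    intro a b hab
    rw [hS, Finset.mem_image] at hab
    obtain ⟨p, hp, hfp⟩ := hab
    obtain ⟨h1, h2⟩ := hfval p hp
    obtain ⟨hm1, hm2, hm3, hm4⟩ := hmemf p hp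
    have e1 : ((f p).1.1 : ℕ) = (a : ℕ) := by rw [hfp]
    have e2 : ((f p).2.1 : ℕ) = (b : ℕ) := by rw [hfp]
    rw [h1] at e1
    rw [h2] at e2
    have : p = ((a : ℕ) + 1, (b : ℕ) + 1) := Prod.ext (by omega) (by omega)
    rwa [← this]
  set i₀ : Fin n := ⟨(i - 1) % n, Nat.mod_lt _ hn⟩ with hi₀def
  have hi₀ : (i₀, i₀) ∉ S := by
    intro hmem
    have h1 := hSmem i₀ i₀ hmem
    have hv : (i₀ : ℕ) = i - 1 := Nat.mod_eq_of_lt (by omega)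
    rw [hv] at h1
    rw [show i - 1 + 1 = i from by omega] at h1
    exact hiNot h1
  have hScard2 : n * (n - 1) / 2 + 1 ≤ S.card := by omega
  exact UPat.key S hn hi₀ hScard2 (fun A hA => by
    obtain ⟨U, hU, hz⟩ := huniv A hA
    exact ⟨U, hU, fun a b hab => hz a b (hSmem a b hab)⟩)
end
end

section
/- Let m > n ≥ 1, let I ∈ P_n be a strict n-universal pattern, and let J ∈ P_{m−n} be a strict (m−n)-universal pattern. Then the pattern I' = I ∪ {(n+i, n+j) : (i,j) ∈ J} ∪ ({1,…,n} × {n+1,…,m}) ⊆ {1,…,m}×{1,…,m} is m-universal. -/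
open Matrix


lemma exists_invariant_submodule {V : Type*} [AddCommGroup V] [Module ℂ V]
    [FiniteDimensional ℂ V] (f : Module.End ℂ V) :
    ∀ k, k ≤ Module.finrank ℂ V →
      ∃ W : Submodule ℂ V, (∀ x ∈ W, f x ∈ W) ∧ Module.finrank ℂ W = k := by
  intro k
  induction k with
  | zero => intro _; exact ⟨⊥, by simp, by simp⟩
  | succ k ih =>
    intro hk
    obtain ⟨W, hWinv, hWrank⟩ := ih (by omega)
    have hle : W ≤ W.comap f := fun x hx => hWinv x hx
    have hrankQ : Module.finrank ℂ (V ⧸ W) + Module.finrank ℂ W = Module.finrank ℂ V :=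
      Submodule.finrank_quotient_add_finrank W
    have hQpos : 0 < Module.finrank ℂ (V ⧸ W) := by omega
    have : Nontrivial (V ⧸ W) := Module.nontrivial_of_finrank_pos hQpos
    set g : Module.End ℂ (V ⧸ W) := W.mapQ W f hle with hg
    obtain ⟨μ, hμ⟩ := Module.End.exists_eigenvalue g
    obtain ⟨v, hv⟩ := hμ.exists_hasEigenvector
    have hv0 : v ≠ 0 := hv.right
    have hgv : g v = μ • v := hv.apply_eq_smul
    set W' : Submodule ℂ V := Submodule.comap W.mkQ (Submodule.span ℂ {v}) with hW'
    have hWleW' : W ≤ W' := by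
      intro x hx
      simp only [hW', Submodule.mem_comap, Submodule.mkQ_apply]
      rw [(Submodule.Quotient.mk_eq_zero W).mpr hx]
      exact zero_mem _
    refine ⟨W', ?_, ?_⟩
    · intro x hx
      simp only [hW', Submodule.mem_comap, Submodule.mkQ_apply] at hx ⊢
      have h1 : (Submodule.Quotient.mk (f x) : V ⧸ W) = g (Submodule.Quotient.mk x) :=
        (Submodule.mapQ_apply W W f x).symm
      rw [h1]
      obtain ⟨c, hc⟩ := Submodule.mem_span_singleton.mp hx
      rw [← hc, _root_.map_smul, hgv]
      exact Submodule.smul_mem _ _ (Submodule.smul_mem _ _ (Submodule.mem_span_singleton_self v))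
    · set φ : W' →ₗ[ℂ] V ⧸ W := W.mkQ ∘ₗ W'.subtype with hφ
      have hrange : LinearMap.range φ = Submodule.span ℂ {v} := by
        rw [hφ, LinearMap.range_comp, Submodule.range_subtype, hW',
          Submodule.map_comap_eq, Submodule.range_mkQ, top_inf_eq]
      have hker : LinearMap.ker φ = Submodule.comap W'.subtype W := by
        rw [hφ, LinearMap.ker_comp, Submodule.ker_mkQ]
      have h1 : Module.finrank ℂ (LinearMap.range φ) = 1 := by
        rw [hrange]; exact finrank_span_singleton hv0
      have h2 : Module.finrank ℂ (LinearMap.ker φ) = k := by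
        rw [hker, (Submodule.comapSubtypeEquivOfLe hWleW').finrank_eq, hWrank]
      have := LinearMap.finrank_range_add_finrank_ker φ
      omega



noncomputable def mulVecEnd (m : ℕ) (A : Matrix (Fin m) (Fin m) ℂ) :
    Module.End ℂ (EuclideanSpace ℂ (Fin m)) where
  toFun x := (WithLp.equiv 2 _).symm (A.mulVec ((WithLp.equiv 2 _) x))
  map_add' x y := by
    ext j
    simp [Matrix.mulVec_add]
  map_smul' c x := by
    ext j
    simp [Matrix.mulVec_smul]

lemma mulVecEnd_apply (m : ℕ) (A : Matrix (Fin m) (Fin m) ℂ)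
    (x : EuclideanSpace ℂ (Fin m)) (j : Fin m) :
    mulVecEnd m A x j = ∑ l, A j l * x l := by
  show (A.mulVec x) j = _
  simp [Matrix.mulVec, dotProduct]

lemma exists_block_triangular (n m : ℕ) (hnm : n ≤ m) (A : Matrix (Fin m) (Fin m) ℂ) :
    ∃ U ∈ Matrix.unitaryGroup (Fin m) ℂ,
      ∀ i j : Fin m, (i : ℕ) < n → n ≤ (j : ℕ) → (U * A * star U) i j = 0 := by
  set E := EuclideanSpace ℂ (Fin m) with hE
  set f := mulVecEnd m A with hf
  obtain ⟨W, hWinv, hWrank⟩ := exists_invariant_submodule f (m - n)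
    (by rw [finrank_euclideanSpace_fin]; omega)
  have hWorto : Module.finrank ℂ (Wᗮ) = n := by
    have := Submodule.finrank_add_finrank_orthogonal W
    rw [finrank_euclideanSpace_fin, hWrank] at this
    omega
  set o1 : OrthonormalBasis (Fin n) ℂ Wᗮ :=
    (stdOrthonormalBasis ℂ Wᗮ).reindex (finCongr hWorto) with ho1
  set o2 : OrthonormalBasis (Fin (m - n)) ℂ W :=
    (stdOrthonormalBasis ℂ W).reindex (finCongr hWrank) with ho2
  set b : Fin m → E := fun i =>
    if h : (i : ℕ) < n then (o1 ⟨i, h⟩ : E) else (o2 ⟨(i : ℕ) - n, by omega⟩ : E) with hb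
  have hbW : ∀ i : Fin m, n ≤ (i : ℕ) → b i ∈ W := by
    intro i hi
    simp only [hb]
    rw [dif_neg (by omega)]
    exact SetLike.coe_mem _
  have hbWo : ∀ i : Fin m, (i : ℕ) < n → b i ∈ Wᗮ := by
    intro i hi
    simp only [hb]
    rw [dif_pos hi]
    exact SetLike.coe_mem _
  have hortho : ∀ i k : Fin m, (inner ℂ (b i) (b k) : ℂ) = if i = k then 1 else 0 := by
    intro i k
    by_cases hi : (i : ℕ) < n <;> by_cases hk : (k : ℕ) < n
    · have h1 : b i = (o1 ⟨i, hi⟩ : E) := by simp [hb, dif_pos hi]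
      have h2 : b k = (o1 ⟨k, hk⟩ : E) := by simp [hb, dif_pos hk]
      rw [h1, h2, ← Submodule.coe_inner,
        orthonormal_iff_ite.mp o1.orthonormal]
      by_cases h : i = k
      · subst h; simp
      · rw [if_neg (by simp [Fin.ext_iff]; omega), if_neg h]
    · rw [if_neg (by omega)]
      exact Submodule.inner_left_of_mem_orthogonal (hbW k (by omega)) (hbWo i hi)
    · rw [if_neg (by omega)]
      exact Submodule.inner_right_of_mem_orthogonal (hbW i (by omega)) (hbWo k hk)
    · have h1 : b i = (o2 ⟨(i : ℕ) - n, by omega⟩ : E) := by simp [hb, dif_neg hi]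
      have h2 : b k = (o2 ⟨(k : ℕ) - n, by omega⟩ : E) := by simp [hb, dif_neg hk]
      rw [h1, h2, ← Submodule.coe_inner,
        orthonormal_iff_ite.mp o2.orthonormal]
      by_cases h : i = k
      · subst h; simp
      · rw [if_neg (by simp [Fin.ext_iff]; omega), if_neg h]
  set U : Matrix (Fin m) (Fin m) ℂ := Matrix.of fun i j => star (b i j) with hU
  have hUmem : U ∈ Matrix.unitaryGroup (Fin m) ℂ := by
    rw [Matrix.mem_unitaryGroup_iff]
    ext i k
    have := hortho i k
    rw [PiLp.inner_apply] at this
    simp only [RCLike.inner_apply] at this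
    simp only [Matrix.mul_apply, Matrix.one_apply, hU, Matrix.star_eq_conjTranspose,
      Matrix.conjTranspose_apply, Matrix.of_apply, star_star]
    rw [← this]
    refine Finset.sum_congr rfl fun _ _ => ?_
    simp only [RCLike.star_def]
    ring
  refine ⟨U, hUmem, ?_⟩
  intro i j hi hj
  have hentry : (U * A * star U) i j = (inner ℂ (b i) (f (b j)) : ℂ) := by
    rw [PiLp.inner_apply]
    simp only [RCLike.inner_apply]
    simp only [Matrix.mul_apply, hU, Matrix.star_eq_conjTranspose, Matrix.conjTranspose_apply,
      Matrix.of_apply, star_star, Finset.sum_mul]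
    rw [Finset.sum_comm]
    refine Finset.sum_congr rfl fun l _ => ?_
    rw [mulVecEnd_apply, Finset.sum_mul]
    refine Finset.sum_congr rfl fun t _ => ?_
    simp only [RCLike.star_def]
    ring
  rw [hentry]
  exact Submodule.inner_left_of_mem_orthogonal (hWinv _ (hbW j hj)) (hbWo i hi)

lemma conj_shift {n : ℕ} (V X : Matrix (Fin n) (Fin n) ℂ)
    (hV : V ∈ Matrix.unitaryGroup (Fin n) ℂ) (c : ℂ) :
    V * X * star V = V * (X - c • 1) * star V + c • 1 := by
  have h1 : V * star V = 1 := Matrix.mem_unitaryGroup_iff.mp hV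
  have h2 : V * (c • 1) * star V = c • 1 := by
    rw [mul_smul_comm, mul_one, smul_mul_assoc, h1]
  rw [mul_sub, sub_mul, h2]
  abel


/-- If `I ∈ P_n` and `J ∈ P_{m-n}` are strict universal patterns, then
`I' = I ∪ ((n,n) + J) ∪ ({1,…,n} × {n+1,…,m})` is `m`-universal. -/
theorem universal_extension (n m : ℕ) (hn : 1 ≤ n) (hnm : n < m)
    (I J : Finset (ℕ × ℕ))
    (hI : I ⊆ Finset.Icc 1 n ×ˢ Finset.Icc 1 n)
    (hIstrict : ∀ p ∈ I, p.1 ≠ p.2)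
    (hJ : J ⊆ Finset.Icc 1 (m - n) ×ˢ Finset.Icc 1 (m - n))
    (hJstrict : ∀ p ∈ J, p.1 ≠ p.2)
    (hIuniv : IsUniversal n I) (hJuniv : IsUniversal (m - n) J) :
    IsUniversal m
      (I ∪ J.image (fun p => (n + p.1, n + p.2)) ∪ Finset.Icc 1 n ×ˢ Finset.Icc (n + 1) m) := by

  intro A hA
  set k := m - n with hk
  have hnk : n + k = m := by omega
  set eq : (Fin n ⊕ Fin k) ≃ Fin m := finSumFinEquiv.trans (finCongr hnk) with heq
  have heql : ∀ p : Fin n, ((eq (Sum.inl p) : ℕ)) = (p : ℕ) := by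
    intro p; simp [heq]
  have heqr : ∀ q : Fin k, ((eq (Sum.inr q) : ℕ)) = n + (q : ℕ) := by
    intro q; simp [heq]
  -- step 1 : triangularize
  obtain ⟨U1, hU1, hU1z⟩ := exists_block_triangular n m (le_of_lt hnm) A
  set B := U1 * A * star U1 with hB
  have hBtr : B.trace = 0 := by
    rw [hB, Matrix.trace_mul_comm, ← Matrix.mul_assoc,
      Matrix.mem_unitaryGroup_iff'.mp hU1, Matrix.one_mul, hA]
  set M : Matrix (Fin n ⊕ Fin k) (Fin n ⊕ Fin k) ℂ := B.submatrix eq eq with hM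
  set X := M.toBlocks₁₁ with hX
  set Y := M.toBlocks₂₁ with hY
  set Z := M.toBlocks₂₂ with hZ
  have hM12 : M.toBlocks₁₂ = 0 := by
    ext p q
    simp only [Matrix.toBlocks₁₂, Matrix.of_apply, hM, Matrix.submatrix_apply, Matrix.zero_apply]
    exact hU1z _ _ (by rw [heql]; exact p.isLt) (by rw [heqr]; omega)
  have hMblocks : M = Matrix.fromBlocks X 0 Y Z := by
    rw [hX, hY, hZ, ← hM12]
    exact (Matrix.fromBlocks_toBlocks M).symm
  have hMtr : M.trace = 0 := by
    rw [hM, ← hBtr, Matrix.trace]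
    exact Fintype.sum_equiv eq _ _ (fun s => rfl)
  have htrXZ : X.trace + Z.trace = 0 := by
    rw [← hMtr]
    simp only [Matrix.trace, Matrix.diag, Fintype.sum_sum_type]
    rfl
  -- step 2 : fix the diagonal blocks
  have hkpos : 1 ≤ k := by omega
  set cX : ℂ := X.trace / n with hcX
  set cZ : ℂ := Z.trace / k with hcZ
  have hncast : (n : ℂ) ≠ 0 := Nat.cast_ne_zero.mpr (by omega)
  have hkcast : (k : ℂ) ≠ 0 := Nat.cast_ne_zero.mpr (by omega)
  have hXtr : (X - cX • 1).trace = 0 := by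
    rw [Matrix.trace_sub, Matrix.trace_smul, Matrix.trace_one]
    simp only [Fintype.card_fin, hcX, smul_eq_mul]
    field_simp
    ring
  have hZtr : (Z - cZ • 1).trace = 0 := by
    rw [Matrix.trace_sub, Matrix.trace_smul, Matrix.trace_one]
    simp only [Fintype.card_fin, hcZ, smul_eq_mul]
    field_simp
    ring
  obtain ⟨V, hV, hVz⟩ := hIuniv (X - cX • 1) hXtr
  obtain ⟨W0, hW0, hW0z⟩ := hJuniv (Z - cZ • 1) hZtr
  set U2' : Matrix (Fin n ⊕ Fin k) (Fin n ⊕ Fin k) ℂ := Matrix.fromBlocks V 0 0 W0 with hU2'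
  have hU2'mem : U2' * star U2' = 1 := by
    rw [hU2', Matrix.star_eq_conjTranspose, Matrix.fromBlocks_conjTranspose,
      Matrix.fromBlocks_multiply]
    simp only [Matrix.conjTranspose_zero, Matrix.mul_zero, Matrix.zero_mul, add_zero, zero_add]
    rw [show V * Vᴴ = 1 from Matrix.mem_unitaryGroup_iff.mp hV,
      show W0 * W0ᴴ = 1 from Matrix.mem_unitaryGroup_iff.mp hW0]
    exact Matrix.fromBlocks_one
  set U2 : Matrix (Fin m) (Fin m) ℂ := U2'.submatrix eq.symm eq.symm with hU2
  have hU2mem : U2 ∈ Matrix.unitaryGroup (Fin m) ℂ := by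
    rw [Matrix.mem_unitaryGroup_iff, hU2, Matrix.star_eq_conjTranspose,
      Matrix.conjTranspose_submatrix, Matrix.submatrix_mul_equiv, ← Matrix.star_eq_conjTranspose,
      hU2'mem, Matrix.submatrix_one_equiv]
  refine ⟨U2 * U1, mul_mem hU2mem hU1, ?_⟩
  have hBM : B = M.submatrix eq.symm eq.symm := by
    rw [hM, Matrix.submatrix_submatrix]
    simp only [Equiv.self_comp_symm, Matrix.submatrix_id_id]
  have hCform : (U2 * U1) * A * star (U2 * U1)
      = (U2' * M * star U2').submatrix eq.symm eq.symm := by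
    rw [StarMul.star_mul]
    calc U2 * U1 * A * (star U1 * star U2) = U2 * (U1 * A * star U1) * star U2 := by
          noncomm_ring
    _ = U2 * B * star U2 := by rw [hB]
    _ = _ := by
        rw [hBM, hU2, Matrix.star_eq_conjTranspose, Matrix.conjTranspose_submatrix,
          Matrix.submatrix_mul_equiv, Matrix.submatrix_mul_equiv,
          ← Matrix.star_eq_conjTranspose]
  set G : Matrix (Fin n ⊕ Fin k) (Fin n ⊕ Fin k) ℂ := U2' * M * star U2' with hG
  have hGblocks : G = Matrix.fromBlocks (V * X * star V) 0 (W0 * Y * star V)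
      (W0 * Z * star W0) := by
    rw [hG, hMblocks, hU2', Matrix.star_eq_conjTranspose, Matrix.fromBlocks_conjTranspose,
      Matrix.fromBlocks_multiply, Matrix.fromBlocks_multiply]
    simp only [Matrix.conjTranspose_zero, Matrix.mul_zero, Matrix.zero_mul, add_zero, zero_add,
      Matrix.star_eq_conjTranspose]
  -- the three vanishing claims
  have hVXV : ∀ p q : Fin n, ((p : ℕ) + 1, (q : ℕ) + 1) ∈ I → (V * X * star V) p q = 0 := by
    intro p q hpq
    have hne : p ≠ q := by
      intro h
      exact (hIstrict _ hpq) (by rw [h])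
    rw [conj_shift V X hV cX, Matrix.add_apply, hVz p q hpq, Matrix.smul_apply,
      Matrix.one_apply_ne hne, zero_add, smul_zero]
  have hWZW : ∀ p q : Fin k, ((p : ℕ) + 1, (q : ℕ) + 1) ∈ J → (W0 * Z * star W0) p q = 0 := by
    intro p q hpq
    have hne : p ≠ q := by
      intro h
      exact (hJstrict _ hpq) (by rw [h])
    rw [conj_shift W0 Z hW0 cZ, Matrix.add_apply, hW0z p q hpq, Matrix.smul_apply,
      Matrix.one_apply_ne hne, zero_add, smul_zero]
  -- symm computations
  have hsymml : ∀ (i : Fin m) (h : (i : ℕ) < n), eq.symm i = Sum.inl ⟨(i : ℕ), h⟩ := by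
    intro i h
    rw [Equiv.symm_apply_eq]
    exact Fin.ext (heql ⟨(i : ℕ), h⟩)
  have hsymmr : ∀ (i : Fin m) (h : n ≤ (i : ℕ)), eq.symm i = Sum.inr ⟨(i : ℕ) - n, by omega⟩ := by
    intro i h
    rw [Equiv.symm_apply_eq]
    refine Fin.ext ?_
    rw [heqr]
    simp
    omega
  intro i j hij
  rw [hCform, Matrix.submatrix_apply, hGblocks]
  rcases Finset.mem_union.mp hij with hij' | hrect
  · rcases Finset.mem_union.mp hij' with hinI | hinJ
    · -- I case
      have hmem := hI hinI
      rw [Finset.mem_product, Finset.mem_Icc, Finset.mem_Icc] at hmem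
      have hi : (i : ℕ) < n := by omega
      have hj : (j : ℕ) < n := by omega
      rw [hsymml i hi, hsymml j hj, Matrix.fromBlocks_apply₁₁]
      exact hVXV _ _ hinI
    · -- J case
      obtain ⟨p, hpJ, hpe⟩ := Finset.mem_image.mp hinJ
      have hmem := hJ hpJ
      rw [Finset.mem_product, Finset.mem_Icc, Finset.mem_Icc] at hmem
      have hpe1 : n + p.1 = (i : ℕ) + 1 := congrArg Prod.fst hpe
      have hpe2 : n + p.2 = (j : ℕ) + 1 := congrArg Prod.snd hpe
      have hi : n ≤ (i : ℕ) := by omega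
      have hj : n ≤ (j : ℕ) := by omega
      rw [hsymmr i hi, hsymmr j hj, Matrix.fromBlocks_apply₂₂]
      have : (((i : ℕ) - n) + 1, ((j : ℕ) - n) + 1) ∈ J := by
        have e1 : (i : ℕ) - n + 1 = p.1 := by omega
        have e2 : (j : ℕ) - n + 1 = p.2 := by omega
        rw [e1, e2]
        exact hpJ
      exact hWZW _ _ this
  · -- rectangle case
    rw [Finset.mem_product, Finset.mem_Icc, Finset.mem_Icc] at hrect
    have hi : (i : ℕ) < n := by omega
    have hj : n ≤ (j : ℕ) := by omega
    rw [hsymml i hi, hsymmr j hj, Matrix.fromBlocks_apply₁₂]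
    rfl
end

section
/- Let I ∈ P_3 be a pattern of size 3 which contains at least one diagonal position (i,i) but does not contain all three diagonal positions (1,1),(2,2),(3,3). Then I is not 3-universal: there exists a traceless complex 3×3 matrix A that is not unitarily similar to any matrix X with x_{ij} = 0 for all (i,j) ∈ I. -/
open Complex
noncomputable section
def ipf (f g : Fin 3 → ℂ) : ℂ :=
  f 0 * (starRingEnd ℂ) (g 0) + f 1 * (starRingEnd ℂ) (g 1) + f 2 * (starRingEnd ℂ) (g 2)
def xvf (f g : Fin 3 → ℂ) : ℂ :=
  2 * (f 0 * (starRingEnd ℂ) (g 0)) + (-1 + Complex.I) * (f 1 * (starRingEnd ℂ) (g 1))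
    + (-1 - Complex.I) * (f 2 * (starRingEnd ℂ) (g 2))

lemma diag_third (f : Fin 3 → ℂ) (h1 : ipf f f = 1) (h2 : xvf f f = 0) :
    normSq (f 0) = 1/3 ∧ normSq (f 1) = 1/3 ∧ normSq (f 2) = 1/3 := by
  simp only [ipf, xvf, Complex.mul_conj] at h1 h2
  have hre := congrArg Complex.re h2
  have him := congrArg Complex.im h2
  have hre1 := congrArg Complex.re h1
  simp [Complex.add_re, Complex.add_im, Complex.mul_re, Complex.mul_im] at hre him hre1
  refine ⟨by linarith, by linarith, by linarith⟩

lemma offdiag_rel (f g : Fin 3 → ℂ) (h1 : ipf f g = 0) (h2 : xvf f g = 0) :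
    5 * (f 0 * (starRingEnd ℂ) (g 0)) = (-1 + 3*Complex.I) * (f 2 * (starRingEnd ℂ) (g 2)) ∧
    5 * (f 1 * (starRingEnd ℂ) (g 1)) = -(4 + 3*Complex.I) * (f 2 * (starRingEnd ℂ) (g 2)) := by
  simp only [ipf, xvf] at h1 h2
  have hre := congrArg Complex.re h2
  have him := congrArg Complex.im h2
  have hre1 := congrArg Complex.re h1
  have him1 := congrArg Complex.im h1
  simp [Complex.add_re, Complex.add_im, Complex.mul_re, Complex.mul_im] at hre him hre1 him1
  constructor <;> rw [Complex.ext_iff] <;> constructor <;>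
    simp [Complex.add_re, Complex.add_im, Complex.mul_re, Complex.mul_im] <;> linarith

lemma mod0 (a b : ℂ) (h : 5 * a = (-1 + 3*Complex.I) * b) :
    25 * normSq a = 10 * normSq b := by
  have h2 := congrArg normSq h
  simp [Complex.normSq_mul] at h2
  have nw : normSq (-1 + 3*Complex.I) = 10 := by
    simp [Complex.normSq_apply]; norm_num
  rw [nw] at h2
  linarith

lemma mod1 (a b : ℂ) (h : 5 * a = -(4 + 3*Complex.I) * b) :
    normSq a = normSq b := by
  have h2 := congrArg normSq h
  simp [Complex.normSq_mul] at h2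
  have nw : normSq (-(3 * Complex.I) + -4) = 25 := by
    simp [Complex.normSq_apply]; norm_num
  rw [nw] at h2
  linarith

lemma ipf_norm (f : Fin 3 → ℂ) (h : ipf f f = 1) :
    normSq (f 0) + normSq (f 1) + normSq (f 2) = 1 := by
  simp only [ipf, Complex.mul_conj] at h
  exact_mod_cast congrArg Complex.re h

lemma diagval (v : Fin 3 → ℂ) (h0 : normSq (v 0) = 1/6) (h1 : normSq (v 1) = 5/12)
    (h2 : normSq (v 2) = 5/12) : xvf v v = -(1/2) := by
  simp only [xvf, Complex.mul_conj, h0, h1, h2]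
  push_cast
  ring

lemma diagval0 (v : Fin 3 → ℂ) (h0 : normSq (v 0) = 1/3) (h1 : normSq (v 1) = 1/3)
    (h2 : normSq (v 2) = 1/3) : xvf v v = 0 := by
  simp only [xvf, Complex.mul_conj, h0, h1, h2]
  push_cast
  ring

lemma normSq_conj_mul (x y : ℂ) : normSq (x * (starRingEnd ℂ) y) = normSq x * normSq y := by
  simp [Complex.normSq_mul]

lemma pairzero (f g : Fin 3 → ℂ)
    (h1 : ipf f g = 0) (h2 : xvf f g = 0) (h3 : ipf g f = 0) (h4 : xvf g f = 0) :
    ∀ k, f k * (starRingEnd ℂ) (g k) = 0 := by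
  obtain ⟨r1, r2⟩ := offdiag_rel _ _ h1 h2
  obtain ⟨s1, s2⟩ := offdiag_rel _ _ h3 h4
  have hs := congrArg (starRingEnd ℂ) s1
  simp only [map_mul, map_add, map_neg, map_ofNat, Complex.conj_I, Complex.conj_conj,
    map_one] at hs
  have h6 : 6 * Complex.I * (f 2 * (starRingEnd ℂ) (g 2)) = 0 := by
    linear_combination hs - r1
  have hc2 : f 2 * (starRingEnd ℂ) (g 2) = 0 := by
    have h6I : (6 : ℂ) * Complex.I ≠ 0 := by
      simp [Complex.I_ne_zero]
    exact (mul_eq_zero.mp h6).resolve_left h6I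
  have hc0 : f 0 * (starRingEnd ℂ) (g 0) = 0 := by
    have := r1; rw [hc2] at this; simpa using this
  have hc1 : f 1 * (starRingEnd ℂ) (g 1) = 0 := by
    have := r2; rw [hc2] at this; simpa using this
  intro k; fin_cases k <;> assumption

lemma rowzero (g e : Fin 3 → ℂ)
    (horth : ipf g e = 0) (hnorm : ipf g g = 1)
    (he0 : e 0 ≠ 0) (he1 : e 1 ≠ 0) (he2 : e 2 ≠ 0)
    (hzz : (g 0 = 0 ∧ g 1 = 0) ∨ (g 0 = 0 ∧ g 2 = 0) ∨ (g 1 = 0 ∧ g 2 = 0)) : False := by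
  have hce : ∀ k, (starRingEnd ℂ) (e k) ≠ 0 := by
    intro k h
    have := congrArg (starRingEnd ℂ) h
    simp only [Complex.conj_conj, map_zero] at this
    fin_cases k <;> simp_all
  simp only [ipf] at horth hnorm
  rcases hzz with ⟨ha, hb⟩ | ⟨ha, hb⟩ | ⟨ha, hb⟩ <;> rw [ha, hb] at horth hnorm <;>
    simp only [zero_mul, mul_zero, zero_add, add_zero] at horth hnorm
  · rcases mul_eq_zero.mp horth with h | h
    · rw [h] at hnorm; simp at hnorm
    · exact hce 2 h
  · rcases mul_eq_zero.mp horth with h | h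
    · rw [h] at hnorm; simp at hnorm
    · exact hce 1 h
  · rcases mul_eq_zero.mp horth with h | h
    · rw [h] at hnorm; simp at hnorm
    · exact hce 0 h

lemma fin3_cover (m x y a : Fin 3) (hx : x ≠ m) (hy : y ≠ m) (hxy : x ≠ y) (ha : a ≠ m) :
    a = x ∨ a = y := by revert m x y a; decide

lemma fin3_third (i j : Fin 3) (h : i ≠ j) : ∃ k, k ≠ i ∧ k ≠ j := by
  revert i j; decide

lemma fin3_all (i j k w : Fin 3) (hij : i ≠ j) (hik : i ≠ k) (hjk : j ≠ k) :
    w = i ∨ w = j ∨ w = k := by revert i j k w; decide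

lemma sum3 (F : Fin 3 → ℂ) (i j k : Fin 3) (hij : i ≠ j) (hik : i ≠ k) (hjk : j ≠ k) :
    F i + F j + F k = F 0 + F 1 + F 2 := by
  fin_cases i <;> fin_cases j <;> fin_cases k <;> simp_all <;> ring

lemma row_incident (f g : Fin 3 → ℂ)
    (hf0 : normSq (f 0) = 1/3) (hf1 : normSq (f 1) = 1/3) (hf2 : normSq (f 2) = 1/3)
    (hg : normSq (g 0) + normSq (g 1) + normSq (g 2) = 1)
    (h : (ipf f g = 0 ∧ xvf f g = 0) ∨ (ipf g f = 0 ∧ xvf g f = 0)) :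
    normSq (g 0) = 1/6 ∧ normSq (g 1) = 5/12 ∧ normSq (g 2) = 5/12 := by
  rcases h with ⟨h1, h2⟩ | ⟨h1, h2⟩ <;>
  · obtain ⟨r1, r2⟩ := offdiag_rel _ _ h1 h2
    have m0 := mod0 _ _ r1
    have m1 := mod1 _ _ r2
    rw [normSq_conj_mul, normSq_conj_mul] at m0 m1
    first
    | (rw [hf0, hf2] at m0; rw [hf1, hf2] at m1;
       refine ⟨by linarith, by linarith, by linarith⟩)

lemma row_chained (f g : Fin 3 → ℂ)
    (hf0 : normSq (f 0) = 1/6) (hf1 : normSq (f 1) = 5/12) (hf2 : normSq (f 2) = 5/12)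
    (hg : normSq (g 0) + normSq (g 1) + normSq (g 2) = 1)
    (h : (ipf f g = 0 ∧ xvf f g = 0) ∨ (ipf g f = 0 ∧ xvf g f = 0)) :
    normSq (g 0) = 1/3 ∧ normSq (g 1) = 1/3 ∧ normSq (g 2) = 1/3 := by
  rcases h with ⟨h1, h2⟩ | ⟨h1, h2⟩ <;>
  · obtain ⟨r1, r2⟩ := offdiag_rel _ _ h1 h2
    have m0 := mod0 _ _ r1
    have m1 := mod1 _ _ r2
    rw [normSq_conj_mul, normSq_conj_mul] at m0 m1
    rw [hf0, hf2] at m0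
    rw [hf1, hf2] at m1
    refine ⟨by linarith, by linarith, by linarith⟩

lemma scenA_contra (f g : Fin 3 → ℂ)
    (hf0 : normSq (f 0) = 1/3) (hf2 : normSq (f 2) = 1/3)
    (hg0 : normSq (g 0) = 1/3) (hg2 : normSq (g 2) = 1/3)
    (h1 : ipf f g = 0) (h2 : xvf f g = 0) : False := by
  obtain ⟨r1, _⟩ := offdiag_rel _ _ h1 h2
  have m0 := mod0 _ _ r1
  rw [normSq_conj_mul, normSq_conj_mul, hf0, hf2, hg0, hg2] at m0
  norm_num at m0

lemma nz13 (z : ℂ) (h : normSq z = 1/3) : z ≠ 0 := by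
  intro h0; rw [h0] at h; simp at h

lemma conj_eq_zero {z : ℂ} (h : (starRingEnd ℂ) z = 0) : z = 0 := by
  have := congrArg (starRingEnd ℂ) h
  simpa using this

lemma scenarioA (u : Fin 3 → Fin 3 → ℂ)
    (hnorm : ∀ i, ipf (u i) (u i) = 1)
    (horth : ∀ i j, i ≠ j → ipf (u i) (u j) = 0)
    (htr : xvf (u 0) (u 0) + xvf (u 1) (u 1) + xvf (u 2) (u 2) = 0)
    (m d : Fin 3) (hmd : m ≠ d)
    (hzm : xvf (u m) (u m) = 0) (hzd : xvf (u d) (u d) = 0)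
    (i j : Fin 3) (hij : i ≠ j) (hz : xvf (u i) (u j) = 0) : False := by
  obtain ⟨e, hem, hed⟩ := fin3_third m d hmd
  have hse := sum3 (fun w => xvf (u w) (u w)) m d e hmd (Ne.symm hem) (Ne.symm hed)
  rw [htr, hzm, hzd] at hse
  have hze : xvf (u e) (u e) = 0 := by linear_combination hse
  have hall : ∀ w : Fin 3,
      normSq (u w 0) = 1/3 ∧ normSq (u w 1) = 1/3 ∧ normSq (u w 2) = 1/3 := by
    intro w
    rcases fin3_all m d e w hmd (Ne.symm hem) (Ne.symm hed) with rfl | rfl | rfl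
    · exact diag_third _ (hnorm w) hzm
    · exact diag_third _ (hnorm w) hzd
    · exact diag_third _ (hnorm w) hze
  exact scenA_contra (u i) (u j) (hall i).1 (hall i).2.2 (hall j).1 (hall j).2.2
    (horth i j hij) hz

lemma scenT1 (u : Fin 3 → Fin 3 → ℂ)
    (hnorm : ∀ i, ipf (u i) (u i) = 1)
    (horth : ∀ i j, i ≠ j → ipf (u i) (u j) = 0)
    (m a : Fin 3) (hma : m ≠ a)
    (hzm : xvf (u m) (u m) = 0)
    (h1 : xvf (u m) (u a) = 0) (h2 : xvf (u a) (u m) = 0) : False := by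
  obtain ⟨q0, q1, q2⟩ := diag_third _ (hnorm m) hzm
  have pz := pairzero (u m) (u a) (horth m a hma) h1 (horth a m hma.symm) h2
  have hz : ∀ k, u a k = 0 := by
    intro k
    rcases mul_eq_zero.mp (pz k) with h | h
    · exfalso
      fin_cases k
      · exact nz13 _ q0 h
      · exact nz13 _ q1 h
      · exact nz13 _ q2 h
    · exact conj_eq_zero h
  have h1n := hnorm a
  simp [ipf, hz] at h1n

lemma scenT2 (u : Fin 3 → Fin 3 → ℂ)
    (hnorm : ∀ i, ipf (u i) (u i) = 1)
    (horth : ∀ i j, i ≠ j → ipf (u i) (u j) = 0)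
    (m a b : Fin 3) (ham : a ≠ m) (hbm : b ≠ m) (hab : a ≠ b)
    (hzm : xvf (u m) (u m) = 0)
    (h1 : xvf (u a) (u b) = 0) (h2 : xvf (u b) (u a) = 0) : False := by
  obtain ⟨q0, q1, q2⟩ := diag_third _ (hnorm m) hzm
  have hm0 := nz13 _ q0
  have hm1 := nz13 _ q1
  have hm2 := nz13 _ q2
  have pz := pairzero (u a) (u b) (horth a b hab) h1 (horth b a hab.symm) h2
  have hd : ∀ k, u a k = 0 ∨ u b k = 0 := by
    intro k
    rcases mul_eq_zero.mp (pz k) with h | h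
    · exact Or.inl h
    · exact Or.inr (conj_eq_zero h)
  rcases hd 0 with d0 | d0 <;> rcases hd 1 with d1 | d1 <;> rcases hd 2 with d2 | d2
  · exact rowzero (u a) (u m) (horth a m ham) (hnorm a) hm0 hm1 hm2 (Or.inl ⟨d0, d1⟩)
  · exact rowzero (u a) (u m) (horth a m ham) (hnorm a) hm0 hm1 hm2 (Or.inl ⟨d0, d1⟩)
  · exact rowzero (u a) (u m) (horth a m ham) (hnorm a) hm0 hm1 hm2 (Or.inr (Or.inl ⟨d0, d2⟩))
  · exact rowzero (u b) (u m) (horth b m hbm) (hnorm b) hm0 hm1 hm2 (Or.inr (Or.inr ⟨d1, d2⟩))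
  · exact rowzero (u a) (u m) (horth a m ham) (hnorm a) hm0 hm1 hm2 (Or.inr (Or.inr ⟨d1, d2⟩))
  · exact rowzero (u b) (u m) (horth b m hbm) (hnorm b) hm0 hm1 hm2 (Or.inr (Or.inl ⟨d0, d2⟩))
  · exact rowzero (u b) (u m) (horth b m hbm) (hnorm b) hm0 hm1 hm2 (Or.inl ⟨d0, d1⟩)
  · exact rowzero (u b) (u m) (horth b m hbm) (hnorm b) hm0 hm1 hm2 (Or.inl ⟨d0, d1⟩)

lemma scenB2 (u : Fin 3 → Fin 3 → ℂ)
    (hnorm : ∀ i, ipf (u i) (u i) = 1)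
    (horth : ∀ i j, i ≠ j → ipf (u i) (u j) = 0)
    (htr : xvf (u 0) (u 0) + xvf (u 1) (u 1) + xvf (u 2) (u 2) = 0)
    (m a b : Fin 3) (hma : m ≠ a) (hmb : m ≠ b) (hab : a ≠ b)
    (hzm : xvf (u m) (u m) = 0)
    (h1 : xvf (u m) (u a) = 0 ∨ xvf (u a) (u m) = 0)
    (h2 : xvf (u a) (u b) = 0 ∨ xvf (u b) (u a) = 0) : False := by
  obtain ⟨q0, q1, q2⟩ := diag_third _ (hnorm m) hzm
  have na := row_incident (u m) (u a) q0 q1 q2 (ipf_norm _ (hnorm a))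
    (h1.imp (fun h => ⟨horth m a hma, h⟩) (fun h => ⟨horth a m hma.symm, h⟩))
  have nb := row_chained (u a) (u b) na.1 na.2.1 na.2.2 (ipf_norm _ (hnorm b))
    (h2.imp (fun h => ⟨horth a b hab, h⟩) (fun h => ⟨horth b a hab.symm, h⟩))
  have va := diagval (u a) na.1 na.2.1 na.2.2
  have vb := diagval0 (u b) nb.1 nb.2.1 nb.2.2
  have hse := sum3 (fun w => xvf (u w) (u w)) m a b hma hmb hab
  rw [htr, hzm, va, vb] at hse
  norm_num at hse

lemma scenB1 (u : Fin 3 → Fin 3 → ℂ)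
    (hnorm : ∀ i, ipf (u i) (u i) = 1)
    (horth : ∀ i j, i ≠ j → ipf (u i) (u j) = 0)
    (htr : xvf (u 0) (u 0) + xvf (u 1) (u 1) + xvf (u 2) (u 2) = 0)
    (m a b : Fin 3) (hma : m ≠ a) (hmb : m ≠ b) (hab : a ≠ b)
    (hzm : xvf (u m) (u m) = 0)
    (h1 : xvf (u m) (u a) = 0 ∨ xvf (u a) (u m) = 0)
    (h2 : xvf (u m) (u b) = 0 ∨ xvf (u b) (u m) = 0) : False := by
  obtain ⟨q0, q1, q2⟩ := diag_third _ (hnorm m) hzm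
  have na := row_incident (u m) (u a) q0 q1 q2 (ipf_norm _ (hnorm a))
    (h1.imp (fun h => ⟨horth m a hma, h⟩) (fun h => ⟨horth a m hma.symm, h⟩))
  have nb := row_incident (u m) (u b) q0 q1 q2 (ipf_norm _ (hnorm b))
    (h2.imp (fun h => ⟨horth m b hmb, h⟩) (fun h => ⟨horth b m hmb.symm, h⟩))
  have va := diagval (u a) na.1 na.2.1 na.2.2
  have vb := diagval (u b) nb.1 nb.2.1 nb.2.2
  have hse := sum3 (fun w => xvf (u w) (u w)) m a b hma hmb hab
  rw [htr, hzm, va, vb] at hse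
  norm_num at hse

lemma core (u : Fin 3 → Fin 3 → ℂ)
    (hnorm : ∀ i, ipf (u i) (u i) = 1)
    (horth : ∀ i j, i ≠ j → ipf (u i) (u j) = 0)
    (htr : xvf (u 0) (u 0) + xvf (u 1) (u 1) + xvf (u 2) (u 2) = 0)
    (m : Fin 3) (q r : Fin 3 × Fin 3)
    (hzm : xvf (u m) (u m) = 0)
    (hzq : xvf (u q.1) (u q.2) = 0) (hzr : xvf (u r.1) (u r.2) = 0)
    (hpq : (m, m) ≠ q) (hpr : (m, m) ≠ r) (hqr : q ≠ r)
    (hnot : ¬(q.1 = q.2 ∧ r.1 = r.2)) : False := by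
  obtain ⟨q1, q2⟩ := q
  obtain ⟨r1, r2⟩ := r
  simp only at hzq hzr hnot
  by_cases hqd : q1 = q2
  · -- q diagonal, so r is off-diagonal
    subst hqd
    have hrd : r1 ≠ r2 := by
      intro h; exact hnot ⟨rfl, h⟩
    have hmq : m ≠ q1 := by
      intro h; exact hpq (by rw [h])
    exact scenarioA u hnorm horth htr m q1 hmq hzm hzq r1 r2 hrd hzr
  · by_cases hrd : r1 = r2
    · subst hrd
      have hmr : m ≠ r1 := by
        intro h; exact hpr (by rw [h])
      exact scenarioA u hnorm horth htr m r1 hmr hzm hzr q1 q2 hqd hzq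
    · -- both off-diagonal
      by_cases hq_m : q1 = m ∨ q2 = m
      · -- q incident to m
        -- extract endpoint a and orientation
        have hqdata : ∃ a : Fin 3, a ≠ m ∧
            (xvf (u m) (u a) = 0 ∨ xvf (u a) (u m) = 0) ∧
            ((q1 = m ∧ q2 = a) ∨ (q1 = a ∧ q2 = m)) := by
          rcases hq_m with h | h
          · exact ⟨q2, by rw [← h]; exact fun hh => hqd hh.symm, Or.inl (by rw [← h]; exact hzq),
              Or.inl ⟨h, rfl⟩⟩
          · exact ⟨q1, by rw [← h]; exact fun hh => hqd hh, Or.inr (by rw [← h]; exact hzq),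
              Or.inr ⟨rfl, h⟩⟩
        obtain ⟨a, ham, hoa, hrepq⟩ := hqdata
        by_cases hr_m : r1 = m ∨ r2 = m
        · have hrdata : ∃ b : Fin 3, b ≠ m ∧
              (xvf (u m) (u b) = 0 ∨ xvf (u b) (u m) = 0) ∧
              ((r1 = m ∧ r2 = b) ∨ (r1 = b ∧ r2 = m)) := by
            rcases hr_m with h | h
            · exact ⟨r2, by rw [← h]; exact fun hh => hrd hh.symm, Or.inl (by rw [← h]; exact hzr),
                Or.inl ⟨h, rfl⟩⟩
            · exact ⟨r1, by rw [← h]; exact fun hh => hrd hh, Or.inr (by rw [← h]; exact hzr),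
                Or.inr ⟨rfl, h⟩⟩
          obtain ⟨b, hbm, hob, hrepr⟩ := hrdata
          by_cases hab : a = b
          · -- same endpoint: positions are (m,a) and (a,m)
            subst hab
            rcases hrepq with ⟨e1, e2⟩ | ⟨e1, e2⟩ <;> rcases hrepr with ⟨e3, e4⟩ | ⟨e3, e4⟩
            · exact hqr (by rw [e1, e2, e3, e4])
            · exact scenT1 u hnorm horth m a (Ne.symm ham) hzm
                (by rw [← e1, ← e2]; exact hzq) (by rw [← e3, ← e4]; exact hzr)
            · exact scenT1 u hnorm horth m a (Ne.symm ham) hzm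
                (by rw [← e3, ← e4]; exact hzr) (by rw [← e1, ← e2]; exact hzq)
            · exact hqr (by rw [e1, e2, e3, e4])
          · exact scenB1 u hnorm horth htr m a b (Ne.symm ham) (Ne.symm hbm) hab hzm hoa hob
        · push_neg at hr_m
          obtain ⟨hr1m, hr2m⟩ := hr_m
          rcases fin3_cover m r1 r2 a hr1m hr2m hrd ham with h | h
          · rw [← h] at hzr hrd
            exact scenB2 u hnorm horth htr m a r2 (Ne.symm ham) (Ne.symm hr2m) hrd hzm hoa
              (Or.inl hzr)
          · rw [← h] at hzr hrd
            exact scenB2 u hnorm horth htr m a r1 (Ne.symm ham) (Ne.symm hr1m)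
              (fun hh => hrd hh.symm) hzm hoa (Or.inr hzr)
      · push_neg at hq_m
        obtain ⟨hq1m, hq2m⟩ := hq_m
        by_cases hr_m : r1 = m ∨ r2 = m
        · have hrdata : ∃ b : Fin 3, b ≠ m ∧
              (xvf (u m) (u b) = 0 ∨ xvf (u b) (u m) = 0) ∧
              ((r1 = m ∧ r2 = b) ∨ (r1 = b ∧ r2 = m)) := by
            rcases hr_m with h | h
            · exact ⟨r2, by rw [← h]; exact fun hh => hrd hh.symm, Or.inl (by rw [← h]; exact hzr),
                Or.inl ⟨h, rfl⟩⟩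
            · exact ⟨r1, by rw [← h]; exact fun hh => hrd hh, Or.inr (by rw [← h]; exact hzr),
                Or.inr ⟨rfl, h⟩⟩
          obtain ⟨b, hbm, hob, _⟩ := hrdata
          rcases fin3_cover m q1 q2 b hq1m hq2m hqd hbm with h | h
          · rw [← h] at hzq hqd
            exact scenB2 u hnorm horth htr m b q2 (Ne.symm hbm) (Ne.symm hq2m) hqd hzm hob
              (Or.inl hzq)
          · rw [← h] at hzq hqd
            exact scenB2 u hnorm horth htr m b q1 (Ne.symm hbm) (Ne.symm hq1m)
              (fun hh => hqd hh.symm) hzm hob (Or.inr hzq)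
        · push_neg at hr_m
          obtain ⟨hr1m, hr2m⟩ := hr_m
          rcases fin3_cover m q1 q2 r1 hq1m hq2m hqd hr1m with h1 | h1 <;>
            rcases fin3_cover m q1 q2 r2 hq1m hq2m hqd hr2m with h2 | h2
          · exact hrd (h1.trans h2.symm)
          · exact hqr (by rw [h1, h2])
          · rw [h1, h2] at hzr
            exact scenT2 u hnorm horth m q1 q2 hq1m hq2m hqd hzm hzq hzr
          · exact hrd (h1.trans h2.symm)

lemma pair_ne {a b c d : Fin 3} (h1 : a = c) (h2 : b = d) : (a, b) = (c, d) := by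
  rw [h1, h2]

/-- No pattern `I ∈ P_3` of size 3 containing some, but not all, of the diagonal
positions is 3-universal: some traceless `3 × 3` matrix is not unitarily similar to
any matrix vanishing on the positions of `I`. -/
theorem nonstrict_size_three_not_universal (I : Finset (ℕ × ℕ))
    (hI : I ⊆ Finset.Icc 1 3 ×ˢ Finset.Icc 1 3)
    (hcard : I.card = 3)
    (hdiag : ∃ i ∈ Finset.Icc 1 3, (i, i) ∈ I)
    (hnotall : ¬ ((1, 1) ∈ I ∧ (2, 2) ∈ I ∧ (3, 3) ∈ I)) :
    ∃ A : Matrix (Fin 3) (Fin 3) ℂ, A.trace = 0 ∧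
      ¬ ∃ U ∈ Matrix.unitaryGroup (Fin 3) ℂ,
          ∀ i j : Fin 3, ((i : ℕ) + 1, (j : ℕ) + 1) ∈ I → (U * A * star U) i j = 0 := by
  classical
  refine ⟨Matrix.diagonal ![2, -1 + Complex.I, -1 - Complex.I], ?_, ?_⟩
  · rw [Matrix.trace_diagonal]
    simp [Fin.sum_univ_three]
    ring
  · rintro ⟨U, hU, h⟩
    have hU1 : U * star U = 1 := Matrix.mem_unitaryGroup_iff.mp hU
    have hU2 : star U * U = 1 := Matrix.mem_unitaryGroup_iff'.mp hU
    set u : Fin 3 → Fin 3 → ℂ := fun i k => U i k with hu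
    have hnormr : ∀ i, ipf (u i) (u i) = 1 := by
      intro i
      have h1 : (U * star U) i i = (1 : Matrix (Fin 3) (Fin 3) ℂ) i i := by rw [hU1]
      rw [Matrix.one_apply_eq] at h1
      rw [← h1]
      simp [ipf, Matrix.mul_apply, Fin.sum_univ_three, Matrix.star_apply, Complex.star_def, hu]
    have horthr : ∀ i j, i ≠ j → ipf (u i) (u j) = 0 := by
      intro i j hij
      have h1 : (U * star U) i j = (1 : Matrix (Fin 3) (Fin 3) ℂ) i j := by rw [hU1]
      rw [Matrix.one_apply_ne hij] at h1
      rw [← h1]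
      simp [ipf, Matrix.mul_apply, Fin.sum_univ_three, Matrix.star_apply, Complex.star_def, hu]
    have hcolC : ∀ k : Fin 3,
        (starRingEnd ℂ) (u 0 k) * u 0 k + (starRingEnd ℂ) (u 1 k) * u 1 k
          + (starRingEnd ℂ) (u 2 k) * u 2 k = 1 := by
      intro k
      have h1 : (star U * U) k k = (1 : Matrix (Fin 3) (Fin 3) ℂ) k k := by rw [hU2]
      rw [Matrix.one_apply_eq] at h1
      rw [← h1]
      simp [Matrix.mul_apply, Fin.sum_univ_three, Matrix.star_apply, Complex.star_def, hu]
    have htr : xvf (u 0) (u 0) + xvf (u 1) (u 1) + xvf (u 2) (u 2) = 0 := by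
      simp only [xvf]
      linear_combination (2 : ℂ) * hcolC 0 + (-1 + Complex.I) * hcolC 1
        + (-1 - Complex.I) * hcolC 2
    have hXe : ∀ i j, (U * Matrix.diagonal ![2, -1 + Complex.I, -1 - Complex.I] * star U) i j
        = xvf (u i) (u j) := by
      intro i j
      simp [xvf, Matrix.mul_apply, Matrix.mul_diagonal, Fin.sum_univ_three,
        Matrix.star_apply, Complex.star_def, hu]
      ring
    have hz : ∀ i j : Fin 3, ((i : ℕ) + 1, (j : ℕ) + 1) ∈ I → xvf (u i) (u j) = 0 := by
      intro i j hm
      rw [← hXe]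
      exact h i j hm
    obtain ⟨x, y, z, hxy, hxz, hyz, hIxyz⟩ := Finset.card_eq_three.mp hcard
    have conv : ∀ w ∈ I, ∃ i j : Fin 3,
        w = (((i : ℕ) + 1), ((j : ℕ) + 1)) ∧ xvf (u i) (u j) = 0 := by
      intro w hw
      obtain ⟨w1, w2⟩ := w
      have hg := hI hw
      rw [Finset.mem_product, Finset.mem_Icc, Finset.mem_Icc] at hg
      obtain ⟨⟨h11, h12⟩, h21, h22⟩ := hg
      refine ⟨⟨w1 - 1, by omega⟩, ⟨w2 - 1, by omega⟩, ?_, ?_⟩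
      · simp only [Fin.val_mk]
        rw [Prod.mk.injEq]
        omega
      · apply hz
        simp only [Fin.val_mk]
        rw [show w1 - 1 + 1 = w1 by omega, show w2 - 1 + 1 = w2 by omega]
        exact hw
    obtain ⟨ix, jx, hxrep, hxz0⟩ := conv x (by rw [hIxyz]; simp)
    obtain ⟨iy, jy, hyrep, hyz0⟩ := conv y (by rw [hIxyz]; simp)
    obtain ⟨iz, jz, hzrep, hzz0⟩ := conv z (by rw [hIxyz]; simp)
    have dxy : (ix, jx) ≠ (iy, jy) := by
      intro hh
      rw [Prod.mk.injEq] at hh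
      exact hxy (by rw [hxrep, hyrep, hh.1, hh.2])
    have dxz : (ix, jx) ≠ (iz, jz) := by
      intro hh
      rw [Prod.mk.injEq] at hh
      exact hxz (by rw [hxrep, hzrep, hh.1, hh.2])
    have dyz : (iy, jy) ≠ (iz, jz) := by
      intro hh
      rw [Prod.mk.injEq] at hh
      exact hyz (by rw [hyrep, hzrep, hh.1, hh.2])
    have alldiagcon : ix = jx → iy = jy → iz = jz → False := by
      intro e1 e2 e3
      have n1 : ix ≠ iy := by
        intro hh; exact dxy (pair_ne hh (by rw [← e1, ← e2, hh]))
      have n2 : ix ≠ iz := by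
        intro hh; exact dxz (pair_ne hh (by rw [← e1, ← e3, hh]))
      have n3 : iy ≠ iz := by
        intro hh; exact dyz (pair_ne hh (by rw [← e2, ← e3, hh]))
      have hmd : ∀ n : Fin 3, (((n : ℕ) + 1), ((n : ℕ) + 1)) ∈ I := by
        intro n
        rcases fin3_all ix iy iz n n1 n2 n3 with rfl | rfl | rfl
        · rw [← e1] at hxrep; rw [hIxyz, ← hxrep]; simp
        · rw [← e2] at hyrep; rw [hIxyz, ← hyrep]; simp
        · rw [← e3] at hzrep; rw [hIxyz, ← hzrep]; simp
      refine hnotall ⟨?_, ?_, ?_⟩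
      · have := hmd 0; simpa using this
      · have := hmd 1; simpa using this
      · have := hmd 2; simpa using this
    obtain ⟨d, _, hdI⟩ := hdiag
    rw [hIxyz] at hdI
    simp only [Finset.mem_insert, Finset.mem_singleton] at hdI
    have diag_of : ∀ (i j : Fin 3), (d, d) = (((i : ℕ) + 1), ((j : ℕ) + 1)) → i = j := by
      intro i j hh
      rw [Prod.mk.injEq] at hh
      have : (i : ℕ) = (j : ℕ) := by omega
      exact Fin.ext this
    rcases hdI with hdx | hdy | hdz
    · have ex : ix = jx := diag_of ix jx (by rw [← hxrep]; exact hdx)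
      rw [← ex] at hxz0
      refine core u hnormr horthr htr ix (iy, jy) (iz, jz) hxz0 hyz0 hzz0 ?_ ?_ dyz ?_
      · intro hh
        rw [Prod.mk.injEq] at hh
        exact dxy (pair_ne hh.1 (ex ▸ hh.2))
      · intro hh
        rw [Prod.mk.injEq] at hh
        exact dxz (pair_ne hh.1 (ex ▸ hh.2))
      · rintro ⟨f1, f2⟩
        exact alldiagcon ex f1 f2
    · have ey : iy = jy := diag_of iy jy (by rw [← hyrep]; exact hdy)
      rw [← ey] at hyz0
      refine core u hnormr horthr htr iy (ix, jx) (iz, jz) hyz0 hxz0 hzz0 ?_ ?_ dxz ?_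
      · intro hh
        rw [Prod.mk.injEq] at hh
        exact dxy (pair_ne hh.1.symm (hh.2.symm.trans ey))
      · intro hh
        rw [Prod.mk.injEq] at hh
        exact dyz (pair_ne hh.1 (ey ▸ hh.2))
      · rintro ⟨f1, f2⟩
        exact alldiagcon f1 ey f2
    · have ez : iz = jz := diag_of iz jz (by rw [← hzrep]; exact hdz)
      rw [← ez] at hzz0
      refine core u hnormr horthr htr iz (ix, jx) (iy, jy) hzz0 hxz0 hyz0 ?_ ?_ dxy ?_
      · intro hh
        rw [Prod.mk.injEq] at hh
        exact dxz (pair_ne hh.1.symm (hh.2.symm.trans ez))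
      · intro hh
        rw [Prod.mk.injEq] at hh
        exact dyz (pair_ne hh.1.symm (hh.2.symm.trans ez))
      · rintro ⟨f1, f2⟩
        exact alldiagcon f1 f2 ez

end
end

section
/- If a pattern I ∈ P_n satisfies χ_I ∉ K(n), then for every m > n one also has χ_I ∉ K(m), where χ_I is viewed as a polynomial in ℝ[x_1,…,x_m]. In other words, every n-nonsingular pattern is m-nonsingular for all m > n. -/
/-- `χ_I = ∏_{(i,j) ∈ I} (x_i - x_j)`. -/
noncomputable def chiP (I : Finset (ℕ × ℕ)) : MvPolynomial ℕ ℝ :=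
  ∏ p ∈ I, (MvPolynomial.X p.1 - MvPolynomial.X p.2)

/-- `χ_n = ∏_{1 ≤ i < j ≤ n} (x_i - x_j)`. -/
noncomputable def chiV (n : ℕ) : MvPolynomial ℕ ℝ :=
  ∏ p ∈ (Finset.Icc 1 n ×ˢ Finset.Icc 1 n).filter (fun p => p.1 < p.2),
    (MvPolynomial.X p.1 - MvPolynomial.X p.2)

/-- The elementary symmetric polynomial `σ_{k,n}` in `x_1, …, x_n`. -/
noncomputable def sigmaE (n k : ℕ) : MvPolynomial ℕ ℝ :=
  ∑ s ∈ Finset.powersetCard k (Finset.Icc 1 n), ∏ i ∈ s, MvPolynomial.X i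

/-- The ideal `K(n)` of `ℝ[x_1, …, x_n]` generated by `σ_{1,n}, …, σ_{n,n}`. -/
noncomputable def Kideal (n : ℕ) : Ideal (MvPolynomial ℕ ℝ) :=
  Ideal.span (sigmaE n '' Set.Icc 1 n)

/-- Inner product for which the monomials form an orthonormal basis:
`⟨f, g⟩ = ∑_d (coeff of x^d in f) * (coeff of x^d in g)`. -/
noncomputable def pinner (f g : MvPolynomial ℕ ℝ) : ℝ :=
  ∑ d ∈ f.support, f.coeff d * g.coeff d

/-- Specialization map setting `x_i = 0` for `i > n`. -/
noncomputable def specAt (n : ℕ) : MvPolynomial ℕ ℝ →ₐ[ℝ] MvPolynomial ℕ ℝ :=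
  MvPolynomial.aeval (fun i => if i ≤ n then MvPolynomial.X i else 0)

lemma specAt_sigma (n m k : ℕ) (h : n ≤ m) :
    specAt n (sigmaE m k) = sigmaE n k := by
  unfold specAt sigmaE
  rw [map_sum]
  rw [← Finset.sum_subset (Finset.powersetCard_mono (Finset.Icc_subset_Icc_right h))]
  · refine Finset.sum_congr rfl fun s hs => ?_
    rw [map_prod]
    refine Finset.prod_congr rfl fun i hi => ?_
    have : i ≤ n := (Finset.mem_Icc.mp
      ((Finset.mem_powersetCard.mp hs).1 hi)).2
    simp [this]
  · intro s hs hns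
    rw [map_prod]
    obtain ⟨i, hi, hin⟩ : ∃ i ∈ s, i ∉ Finset.Icc 1 n := by
      by_contra hc
      push_neg at hc
      exact hns (Finset.mem_powersetCard.mpr ⟨hc, (Finset.mem_powersetCard.mp hs).2⟩)
    refine Finset.prod_eq_zero hi ?_
    have h1 : 1 ≤ i := (Finset.mem_Icc.mp ((Finset.mem_powersetCard.mp hs).1 hi)).1
    have h2 : ¬ i ≤ n := fun hle => hin (Finset.mem_Icc.mpr ⟨h1, hle⟩)
    simp [h2]

lemma sigma_mem_Kideal (n k : ℕ) (hk : 1 ≤ k) : sigmaE n k ∈ Kideal n := by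
  by_cases hkn : k ≤ n
  · exact Ideal.subset_span ⟨k, ⟨hk, hkn⟩, rfl⟩
  · have : sigmaE n k = 0 := by
      unfold sigmaE
      rw [Finset.powersetCard_eq_empty.mpr, Finset.sum_empty]
      simpa [Nat.card_Icc] using Nat.lt_of_not_le hkn
    rw [this]; exact Ideal.zero_mem _

/-- Every `n`-nonsingular pattern is `m`-nonsingular for `m > n`:
if `χ_I ∉ K(n)` then `χ_I ∉ K(m)`. -/
theorem nonsingular_of_le (n m : ℕ) (hnm : n < m) (I : Finset (ℕ × ℕ))
    (hI : I ⊆ Finset.Icc 1 n ×ˢ Finset.Icc 1 n)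
    (h : chiP I ∉ Kideal n) :
    chiP I ∉ Kideal m := by
  intro hm
  apply h
  have hspec : specAt n (chiP I) = chiP I := by
    unfold specAt chiP
    rw [map_prod]
    refine Finset.prod_congr rfl fun p hp => ?_
    have hp' := Finset.mem_product.mp (hI hp)
    have h1 : p.1 ≤ n := (Finset.mem_Icc.mp hp'.1).2
    have h2 : p.2 ≤ n := (Finset.mem_Icc.mp hp'.2).2
    simp [h1, h2]
  rw [← hspec]
  have hmap : (Kideal m).map (specAt n).toRingHom ≤ Kideal n := by
    unfold Kideal
    rw [Ideal.map_span]
    apply Ideal.span_le.mpr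
    rintro _ ⟨_, ⟨k, ⟨hk1, hkm⟩, rfl⟩, rfl⟩
    have : (specAt n).toRingHom (sigmaE m k) = sigmaE n k :=
      specAt_sigma n m k hnm.le
    rw [this]
    exact sigma_mem_Kideal n k hk1
  exact hmap (Ideal.mem_map_of_mem _ hm)
end

section
/- Let n ≥ 3 and let I ∈ P'_n have complexity 1. Let {i,j} be the unique 2-element subset of {1,…,n} with both (i,j) ∈ I and (j,i) ∈ I, and let {k,l} be the unique 2-element subset with neither (k,l) nor (l,k) in I. If i, j, k, l are not distinct (i.e., {i,j} ∩ {k,l} ≠ ∅), then ⟨χ_I, χ_n⟩ = ± n!/2, i.e., |⟨χ_I, χ_n⟩| = n!/2; in particular I is n-nonsingular. -/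
open MvPolynomial Finset

lemma pinner_eq_sum {f g : MvPolynomial ℕ ℝ} {A : Finset (ℕ →₀ ℕ)} (hA : f.support ⊆ A) :
    pinner f g = ∑ d ∈ A, f.coeff d * g.coeff d := by
  refine Finset.sum_subset hA fun d _ hd => ?_
  rw [MvPolynomial.notMem_support_iff.mp hd, zero_mul]

lemma pinner_add_left (f f' g : MvPolynomial ℕ ℝ) :
    pinner (f + f') g = pinner f g + pinner f' g := by
  classical
  set A := (f + f').support ∪ (f.support ∪ f'.support) with hA
  rw [pinner_eq_sum (f := f + f') (g := g) (A := A) subset_union_left,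
      pinner_eq_sum (f := f) (g := g) (A := A) (subset_union_left.trans subset_union_right),
      pinner_eq_sum (f := f') (g := g) (A := A) (subset_union_right.trans subset_union_right),
      ← Finset.sum_add_distrib]
  refine Finset.sum_congr rfl fun d _ => ?_
  rw [coeff_add]; ring

lemma pinner_smul_left (c : ℝ) (f g : MvPolynomial ℕ ℝ) :
    pinner (c • f) g = c * pinner f g := by
  rw [pinner_eq_sum (f := c • f) (g := g) (A := f.support) support_smul, pinner, Finset.mul_sum]
  refine Finset.sum_congr rfl fun d _ => ?_
  rw [coeff_smul]; simp; ring

lemma pinner_neg_right (f g : MvPolynomial ℕ ℝ) : pinner f (-g) = - pinner f g := by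
  unfold pinner
  rw [← Finset.sum_neg_distrib]
  refine Finset.sum_congr rfl fun d _ => ?_
  simp

lemma pinner_smul_right (c : ℝ) (f g : MvPolynomial ℕ ℝ) :
    pinner f (c • g) = c * pinner f g := by
  unfold pinner
  rw [Finset.mul_sum]
  refine Finset.sum_congr rfl fun d _ => ?_
  rw [coeff_smul]; simp; ring

lemma pinner_zero_left (g : MvPolynomial ℕ ℝ) : pinner 0 g = 0 := by
  unfold pinner; simp

lemma pinner_sum_left {α : Type*} (s : Finset α) (f : α → MvPolynomial ℕ ℝ)
    (g : MvPolynomial ℕ ℝ) : pinner (∑ x ∈ s, f x) g = ∑ x ∈ s, pinner (f x) g := by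
  classical
  induction s using Finset.induction with
  | empty => simp [pinner_zero_left]
  | insert _ _ h ih => rw [Finset.sum_insert h, Finset.sum_insert h, pinner_add_left, ih]

lemma pinner_monomial_left (e : ℕ →₀ ℕ) (c : ℝ) (g : MvPolynomial ℕ ℝ) :
    pinner (monomial e c) g = c * g.coeff e := by
  classical
  have hs : (monomial e c).support ⊆ {e} := by
    rw [support_monomial]; split_ifs <;> simp
  rw [pinner_eq_sum hs, Finset.sum_singleton, coeff_monomial, if_pos rfl]

lemma pinner_rename (σ : ℕ ≃ ℕ) (f g : MvPolynomial ℕ ℝ) :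
    pinner (rename σ f) (rename σ g) = pinner f g := by
  classical
  unfold pinner
  rw [support_rename_of_injective σ.injective, Finset.sum_image
    (fun x _ y _ h => Finsupp.mapDomain_injective σ.injective h)]
  refine Finset.sum_congr rfl fun d _ => ?_
  rw [coeff_rename_mapDomain _ σ.injective, coeff_rename_mapDomain _ σ.injective]
open MvPolynomial Finset

noncomputable def vv (n : ℕ) : Fin n → MvPolynomial ℕ ℝ := fun t => X (t.1 + 1)

noncomputable def Efin (n : ℕ) (σ : Equiv.Perm (Fin n)) : ℕ →₀ ℕ :=
  ∑ i : Fin n, Finsupp.single ((σ i : ℕ) + 1) (i : ℕ)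

noncomputable def sgnR {n : ℕ} (σ : Equiv.Perm (Fin n)) : ℝ :=
  ((Equiv.Perm.sign σ : ℤ) : ℝ)

lemma sgnR_one_or {n : ℕ} (σ : Equiv.Perm (Fin n)) : sgnR σ = 1 ∨ sgnR σ = -1 := by
  rcases Int.units_eq_one_or (Equiv.Perm.sign σ) with h | h <;> simp [sgnR, h]

lemma prod_X_pow {α : Type*} (s : Finset α) (g : α → ℕ) (e : α → ℕ) :
    ∏ i ∈ s, (X (g i) : MvPolynomial ℕ ℝ) ^ e i
      = monomial (∑ i ∈ s, Finsupp.single (g i) (e i)) 1 := by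
  classical
  induction s using Finset.induction with
  | empty => simp [monomial_zero']
  | insert _ _ h ih =>
    rw [Finset.prod_insert h, ih, Finset.sum_insert h, X_pow_eq_monomial, monomial_mul, one_mul]

lemma det_vv_eq (n : ℕ) :
    (Matrix.vandermonde (vv n)).det = ∑ σ : Equiv.Perm (Fin n), monomial (Efin n σ) (sgnR σ) := by
  rw [Matrix.det_apply]
  refine Finset.sum_congr rfl fun σ _ => ?_
  have h1 : ∏ i, Matrix.vandermonde (vv n) (σ i) i
      = (monomial (Efin n σ) 1 : MvPolynomial ℕ ℝ) := by
    simp only [Matrix.vandermonde_apply, vv]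
    rw [prod_X_pow (univ : Finset (Fin n)) (fun i => (σ i : ℕ) + 1) (fun i => (i : ℕ))]
    rfl
  rw [h1]
  rcases Int.units_eq_one_or (Equiv.Perm.sign σ) with h | h <;> rw [h]
  · simp [sgnR, h]
  · rw [sgnR, h]
    push_cast
    rw [map_neg (monomial (Efin n σ)) 1]
    simp [Units.smul_def]

lemma Efin_apply (n : ℕ) (σ : Equiv.Perm (Fin n)) (i : Fin n) :
    Efin n σ ((σ i : ℕ) + 1) = (i : ℕ) := by
  rw [Efin, Finsupp.finset_sum_apply]
  rw [Finset.sum_eq_single i]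
  · simp
  · intro j _ hj
    rw [Finsupp.single_apply, if_neg]
    intro h
    exact hj (σ.injective (Fin.val_injective (Nat.succ_injective h)))
  · simp

lemma Efin_injective (n : ℕ) : Function.Injective (Efin n) := by
  intro σ σ' h
  ext i
  set i' := σ'.symm (σ i) with hi'
  have h2 : Efin n σ' ((σ' i' : ℕ) + 1) = (i' : ℕ) := Efin_apply n σ' i'
  have h3 : (σ' i' : Fin n) = σ i := σ'.apply_symm_apply _
  rw [h3] at h2
  have h1 : Efin n σ ((σ i : ℕ) + 1) = (i : ℕ) := Efin_apply n σ i
  rw [h] at h1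
  rw [h1] at h2
  have : i' = i := (Fin.val_injective h2).symm
  rw [← h3, this]

lemma Efin_support (n : ℕ) (σ : Equiv.Perm (Fin n)) {t : ℕ} (ht : t ∉ Finset.Icc 1 n) :
    Efin n σ t = 0 := by
  rw [Efin, Finsupp.finset_sum_apply]
  refine Finset.sum_eq_zero fun j _ => ?_
  rw [Finsupp.single_apply, if_neg]
  intro h
  refine ht ?_
  rw [← h, Finset.mem_Icc]
  exact ⟨Nat.succ_le_succ (Nat.zero_le _), Nat.succ_le_of_lt (σ j).2⟩

lemma Efin_sum (n : ℕ) (σ : Equiv.Perm (Fin n)) :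
    ∑ a ∈ Finset.Icc 1 n, Efin n σ a = ∑ i ∈ range n, i := by
  have : ∀ a, Efin n σ a = ∑ j : Fin n, Finsupp.single ((σ j : ℕ) + 1) (j : ℕ) a := by
    intro a; rw [Efin, Finsupp.finset_sum_apply]
  simp_rw [this]
  rw [Finset.sum_comm]
  rw [← Fin.sum_univ_eq_sum_range]
  refine Finset.sum_congr rfl fun j _ => ?_
  simp_rw [Finsupp.single_apply]
  rw [Finset.sum_ite_eq]
  rw [if_pos]
  rw [Finset.mem_Icc]
  exact ⟨Nat.succ_le_succ (Nat.zero_le _), Nat.succ_le_of_lt (σ j).2⟩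
lemma chiV_eq_sigma (n : ℕ) :
    chiV n = ∏ x ∈ (univ : Finset (Fin n)).sigma (fun i => Finset.Ioi i),
      (X ((x.1 : ℕ) + 1) - X ((x.2 : ℕ) + 1) : MvPolynomial ℕ ℝ) := by
  rw [chiV]
  refine Finset.prod_bij' (i := ?_) (j := ?_) ?_ ?_ ?_ ?_ ?_
  · exact fun p hp => ⟨⟨p.1 - 1, by
      have := (Finset.mem_product.mp (Finset.mem_filter.mp hp).1).1
      rw [Finset.mem_Icc] at this; omega⟩, ⟨p.2 - 1, by
      have := (Finset.mem_product.mp (Finset.mem_filter.mp hp).1).2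
      rw [Finset.mem_Icc] at this; omega⟩⟩
  · exact fun x _ => ((x.1 : ℕ) + 1, (x.2 : ℕ) + 1)
  · intro p hp
    have h1 := (Finset.mem_product.mp (Finset.mem_filter.mp hp).1).1
    have h2 := (Finset.mem_product.mp (Finset.mem_filter.mp hp).1).2
    have h3 := (Finset.mem_filter.mp hp).2
    rw [Finset.mem_Icc] at h1 h2
    simp only [Finset.mem_sigma, Finset.mem_univ, Finset.mem_Ioi, true_and, Fin.lt_def]
    omega
  · intro x hx
    simp only [Finset.mem_sigma, Finset.mem_univ, Finset.mem_Ioi, true_and, Fin.lt_def] at hx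
    simp only [Finset.mem_filter, Finset.mem_product, Finset.mem_Icc]
    have := x.1.2
    have := x.2.2
    omega
  · intro p hp
    have h1 := (Finset.mem_product.mp (Finset.mem_filter.mp hp).1).1
    have h2 := (Finset.mem_product.mp (Finset.mem_filter.mp hp).1).2
    rw [Finset.mem_Icc] at h1 h2
    have e1 : p.1 - 1 + 1 = p.1 := by omega
    have e2 : p.2 - 1 + 1 = p.2 := by omega
    simp [e1, e2]
  · intro x _
    ext <;> simp
  · intro p hp
    have h1 := (Finset.mem_product.mp (Finset.mem_filter.mp hp).1).1
    have h2 := (Finset.mem_product.mp (Finset.mem_filter.mp hp).1).2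
    rw [Finset.mem_Icc] at h1 h2
    have e1 : p.1 - 1 + 1 = p.1 := by omega
    have e2 : p.2 - 1 + 1 = p.2 := by omega
    simp [e1, e2]

lemma chiV_eq_det (n : ℕ) : ∃ c : ℝ, (c = 1 ∨ c = -1) ∧
    chiV n = c • (Matrix.vandermonde (vv n)).det := by
  have hdet : (Matrix.vandermonde (vv n)).det
      = ∏ x ∈ (univ : Finset (Fin n)).sigma (fun i => Finset.Ioi i),
        (X ((x.2 : ℕ) + 1) - X ((x.1 : ℕ) + 1) : MvPolynomial ℕ ℝ) := by
    rw [Matrix.det_vandermonde, Finset.prod_sigma]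
    rfl
  set T := (univ : Finset (Fin n)).sigma (fun i : Fin n => Finset.Ioi i) with hT
  have key : chiV n = ((-1 : ℝ) ^ T.card) • (Matrix.vandermonde (vv n)).det := by
    rw [hdet, chiV_eq_sigma, ← C_mul', map_pow, ← Finset.prod_const, ← Finset.prod_mul_distrib]
    refine Finset.prod_congr rfl fun x _ => ?_
    have hC : (C (-1 : ℝ) : MvPolynomial ℕ ℝ) = -1 := by simp
    rw [hC]; ring
  rcases Nat.even_or_odd T.card with h | h
  · exact ⟨1, Or.inl rfl, by rw [key, h.neg_one_pow]⟩
  · exact ⟨-1, Or.inr rfl, by rw [key, h.neg_one_pow]⟩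

lemma rename_swap_chiV {n a b : ℕ} (ha : a ∈ Finset.Icc 1 n) (hb : b ∈ Finset.Icc 1 n)
    (hab : a ≠ b) : rename (Equiv.swap a b) (chiV n) = - chiV n := by
  rw [Finset.mem_Icc] at ha hb
  set a' : Fin n := ⟨a - 1, by omega⟩ with ha'
  set b' : Fin n := ⟨b - 1, by omega⟩ with hb'
  have ha'b' : a' ≠ b' := by
    intro h
    apply hab
    have := congrArg Fin.val h
    simp only [ha', hb'] at this
    omega
  set π := Equiv.swap a' b' with hπ
  have hcoh : ∀ t : Fin n, Equiv.swap a b ((t : ℕ) + 1) = ((π t : Fin n) : ℕ) + 1 := by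
    intro t
    by_cases h1 : t = a'
    · rw [h1]
      have e1 : ((a' : Fin n) : ℕ) + 1 = a := by simp only [ha']; omega
      rw [e1, Equiv.swap_apply_left, hπ, Equiv.swap_apply_left]
      simp only [hb']; omega
    · by_cases h2 : t = b'
      · rw [h2]
        have e1 : ((b' : Fin n) : ℕ) + 1 = b := by simp only [hb']; omega
        rw [e1, Equiv.swap_apply_right, hπ, Equiv.swap_apply_right]
        simp only [ha']; omega
      · have e1 : (t : ℕ) + 1 ≠ a := by
          intro h; exact h1 (Fin.ext (by simp only [ha']; omega))
        have e2 : (t : ℕ) + 1 ≠ b := by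
          intro h; exact h2 (Fin.ext (by simp only [hb']; omega))
        rw [Equiv.swap_apply_of_ne_of_ne e1 e2, hπ, Equiv.swap_apply_of_ne_of_ne h1 h2]
  have hdet2 : rename (Equiv.swap a b) (Matrix.vandermonde (vv n)).det
      = - (Matrix.vandermonde (vv n)).det := by
    rw [AlgHom.map_det]
    have hmap : (Matrix.vandermonde (vv n)).map (rename (Equiv.swap a b))
        = (Matrix.vandermonde (vv n)).submatrix π id := by
      ext i j : 2
      simp only [Matrix.map_apply, Matrix.vandermonde_apply, Matrix.submatrix_apply, id, vv]
      rw [map_pow, rename_X, hcoh i]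
    rw [AlgHom.mapMatrix_apply, hmap, Matrix.det_permute, Equiv.Perm.sign_swap ha'b']
    simp
  obtain ⟨c, hc, h⟩ := chiV_eq_det n
  rw [h, map_smul, hdet2, smul_neg]

lemma coeff_det_eq (n : ℕ) (d : ℕ →₀ ℕ) : coeff d (Matrix.vandermonde (vv n)).det
    = ∑ σ : Equiv.Perm (Fin n), if Efin n σ = d then sgnR σ else 0 := by
  rw [det_vv_eq, coeff_sum]
  exact Finset.sum_congr rfl fun σ _ => coeff_monomial _ _ _

lemma exists_perm_of_coeff_ne (n : ℕ) (d : ℕ →₀ ℕ)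
    (h : coeff d (Matrix.vandermonde (vv n)).det ≠ 0) : ∃ σ, Efin n σ = d := by
  by_contra hc
  push_neg at hc
  refine h ?_
  rw [coeff_det_eq]
  exact Finset.sum_eq_zero fun σ _ => if_neg (hc σ)

lemma coeff_det_Efin (n : ℕ) (σ : Equiv.Perm (Fin n)) :
    coeff (Efin n σ) (Matrix.vandermonde (vv n)).det = sgnR σ := by
  rw [coeff_det_eq, Finset.sum_eq_single σ]
  · rw [if_pos rfl]
  · intro σ' _ hne
    exact if_neg (fun h => hne (Efin_injective n h))
  · intro h
    exact absurd (Finset.mem_univ σ) h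

lemma pinner_det_det (n : ℕ) :
    pinner (Matrix.vandermonde (vv n)).det (Matrix.vandermonde (vv n)).det
      = (n.factorial : ℝ) := by
  have hsupp : (Matrix.vandermonde (vv n)).det.support
      ⊆ (univ : Finset (Equiv.Perm (Fin n))).image (Efin n) := by
    intro d hd
    obtain ⟨σ, hσ⟩ := exists_perm_of_coeff_ne n d (MvPolynomial.mem_support_iff.mp hd)
    exact Finset.mem_image.mpr ⟨σ, Finset.mem_univ _, hσ⟩
  rw [pinner_eq_sum hsupp, Finset.sum_image (fun x _ y _ h => Efin_injective n h)]
  have h1 : ∀ σ ∈ (univ : Finset (Equiv.Perm (Fin n))),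
      coeff (Efin n σ) (Matrix.vandermonde (vv n)).det
        * coeff (Efin n σ) (Matrix.vandermonde (vv n)).det = 1 := by
    intro σ _
    rw [coeff_det_Efin]
    rcases sgnR_one_or σ with h | h <;> rw [h] <;> ring
  rw [Finset.sum_congr rfl h1, Finset.sum_const, card_univ, Fintype.card_perm, Fintype.card_fin]
  simp

lemma pinner_chiV_self (n : ℕ) : pinner (chiV n) (chiV n) = (n.factorial : ℝ) := by
  obtain ⟨c, hc, h⟩ := chiV_eq_det n
  rw [h, pinner_smul_left, pinner_smul_right, pinner_det_det]
  rcases hc with rfl | rfl <;> ring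

lemma exists_perm_of_coeff_chiV_ne (n : ℕ) (d : ℕ →₀ ℕ)
    (h : coeff d (chiV n) ≠ 0) : ∃ σ, Efin n σ = d := by
  obtain ⟨c, hc, hch⟩ := chiV_eq_det n
  refine exists_perm_of_coeff_ne n d fun h0 => h ?_
  rw [hch, coeff_smul, h0, smul_zero]
noncomputable def ind (s : Finset ℕ) : ℕ →₀ ℕ := ∑ a ∈ s, Finsupp.single a 1

lemma sum_range_card_le : ∀ (N : ℕ) (T : Finset ℕ), T.card = N →
    ∑ i ∈ range N, i ≤ ∑ t ∈ T, t := by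
  intro N
  induction N with
  | zero => simp
  | succ N ih =>
    intro T hT
    have hne : T.Nonempty := Finset.card_pos.mp (by omega)
    set M := T.max' hne with hM
    have hMem : M ∈ T := T.max'_mem hne
    have hsub : T ⊆ range (M + 1) :=
      fun t ht => Finset.mem_range.mpr (Nat.lt_succ_of_le (T.le_max' t ht))
    have hNM : N ≤ M := by
      have := Finset.card_le_card hsub
      rw [Finset.card_range] at this
      omega
    have hc' : (T.erase M).card = N := by
      rw [Finset.card_erase_of_mem hMem, hT]
      omega
    have hsplit : ∑ t ∈ T, t = M + ∑ t ∈ T.erase M, t :=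
      (Finset.add_sum_erase T id hMem).symm
    rw [Finset.sum_range_succ, hsplit]
    have := ih (T.erase M) hc'
    omega

lemma coeff_swap_chiV {n a b : ℕ} (ha : a ∈ Finset.Icc 1 n) (hb : b ∈ Finset.Icc 1 n)
    (hab : a ≠ b) (e : ℕ →₀ ℕ) :
    coeff (Finsupp.mapDomain (Equiv.swap a b) e) (chiV n) = - coeff e (chiV n) := by
  have h := coeff_rename_mapDomain (⇑(Equiv.swap a b)) (Equiv.swap a b).injective (chiV n) e
  rw [rename_swap_chiV ha hb hab, coeff_neg] at h
  linarith

lemma mapDomain_ind (τ : ℕ ≃ ℕ) (s : Finset ℕ) :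
    Finsupp.mapDomain τ (ind s) = ind (s.image τ) := by
  classical
  rw [ind, Finsupp.mapDomain_finset_sum]
  simp_rw [Finsupp.mapDomain_single]
  rw [ind, Finset.sum_image (fun x _ y _ h => τ.injective h)]

lemma ind_apply (s : Finset ℕ) (t : ℕ) : ind s t = if t ∈ s then 1 else 0 := by
  classical
  rw [ind, Finsupp.finset_sum_apply]
  simp_rw [Finsupp.single_apply]
  rw [Finset.sum_ite_eq' s t (fun _ => (1:ℕ))]

lemma F_zero (n k : ℕ) (hk : 1 ≤ k) (m : ℕ →₀ ℕ) :
    ∑ s ∈ Finset.powersetCard k (Finset.Icc 1 n), coeff (m + ind s) (chiV n) = 0 := by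
  classical
  by_cases hcase : ∃ a ∈ Finset.Icc 1 n, ∃ b ∈ Finset.Icc 1 n, a ≠ b ∧ m a = m b
  · obtain ⟨a, ha, b, hb, hab, hmab⟩ := hcase
    set τ := Equiv.swap a b with hτ
    have himage : ∀ s ∈ Finset.powersetCard k (Finset.Icc 1 n),
        s.image τ ∈ Finset.powersetCard k (Finset.Icc 1 n) := by
      intro s hs
      obtain ⟨hsub, hcard⟩ := Finset.mem_powersetCard.mp hs
      refine Finset.mem_powersetCard.mpr ⟨?_, ?_⟩
      · intro x hx
        obtain ⟨y, hy, rfl⟩ := Finset.mem_image.mp hx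
        rcases eq_or_ne y a with rfl | h1
        · rw [hτ, Equiv.swap_apply_left]; exact hb
        rcases eq_or_ne y b with rfl | h2
        · rw [hτ, Equiv.swap_apply_right]; exact ha
        · rw [hτ, Equiv.swap_apply_of_ne_of_ne h1 h2]; exact hsub hy
      · rw [Finset.card_image_of_injective _ τ.injective, hcard]
    have himim : ∀ s : Finset ℕ, (s.image τ).image τ = s := by
      intro s
      rw [Finset.image_image]
      have : (⇑τ ∘ ⇑τ) = id := by
        funext x; simp [hτ, Equiv.swap_apply_self]
      rw [this, Finset.image_id]
    have hmfix : Finsupp.mapDomain (⇑τ) m = m := by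
      ext t
      rw [hτ, Finsupp.mapDomain_equiv_apply, Equiv.symm_swap]
      rcases eq_or_ne t a with rfl | h1
      · rw [Equiv.swap_apply_left]; exact hmab.symm
      rcases eq_or_ne t b with rfl | h2
      · rw [Equiv.swap_apply_right]; exact hmab
      · rw [Equiv.swap_apply_of_ne_of_ne h1 h2]
    have hswap : ∀ s ∈ Finset.powersetCard k (Finset.Icc 1 n),
        coeff (m + ind s) (chiV n) = - coeff (m + ind (s.image τ)) (chiV n) := by
      intro s hs
      have hmd : Finsupp.mapDomain (⇑τ) (m + ind (s.image τ)) = m + ind s := by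
        rw [Finsupp.mapDomain_add, hmfix, mapDomain_ind, himim]
      rw [← hmd, hτ]
      exact coeff_swap_chiV ha hb hab _
    have h5 : ∑ s ∈ Finset.powersetCard k (Finset.Icc 1 n), coeff (m + ind s) (chiV n)
        = - ∑ s ∈ Finset.powersetCard k (Finset.Icc 1 n),
            coeff (m + ind (s.image τ)) (chiV n) := by
      rw [← Finset.sum_neg_distrib]
      exact Finset.sum_congr rfl hswap
    have h6 : ∑ s ∈ Finset.powersetCard k (Finset.Icc 1 n),
        coeff (m + ind (s.image τ)) (chiV n)
        = ∑ s ∈ Finset.powersetCard k (Finset.Icc 1 n), coeff (m + ind s) (chiV n) := by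
      refine Finset.sum_nbij' (i := fun s => s.image τ) (j := fun s => s.image τ)
        himage himage (fun s _ => himim s) (fun s _ => himim s) (fun s _ => rfl)
    rw [h6] at h5
    linarith
  · push_neg at hcase
    refine Finset.sum_eq_zero fun s hs => ?_
    by_contra hne
    obtain ⟨σ, hσ⟩ := exists_perm_of_coeff_chiV_ne n _ hne
    obtain ⟨hsub, hcard⟩ := Finset.mem_powersetCard.mp hs
    have hms : ∀ t, t ∉ Finset.Icc 1 n → m t = 0 := by
      intro t ht
      have h0 : Efin n σ t = 0 := Efin_support n σ ht
      have h1 : m t + ind s t = 0 := by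
        rw [← Finsupp.add_apply, ← hσ]
        exact h0
      omega
    have hsum : ∑ a ∈ Finset.Icc 1 n, m a + k = ∑ i ∈ range n, i := by
      have h1 : ∑ a ∈ Finset.Icc 1 n, (m + ind s) a = ∑ i ∈ range n, i := by
        rw [← hσ]; exact Efin_sum n σ
      have h2 : ∑ a ∈ Finset.Icc 1 n, ind s a = k := by
        have : ∀ a ∈ Finset.Icc 1 n, ind s a = if a ∈ s then 1 else 0 :=
          fun a _ => ind_apply s a
        rw [Finset.sum_congr rfl this, Finset.sum_ite_mem, Finset.inter_comm,
          Finset.sum_const, (Finset.inter_eq_left.mpr hsub)]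
        simp [hcard]
      simp_rw [Finsupp.add_apply] at h1
      rw [Finset.sum_add_distrib, h2] at h1
      exact h1
    have hinj : ∀ x ∈ Finset.Icc 1 n, ∀ y ∈ Finset.Icc 1 n, m x = m y → x = y := by
      intro x hx y hy hxy
      by_contra hne'
      exact hcase x hx y hy hne' hxy
    have hge : ∑ i ∈ range n, i ≤ ∑ a ∈ Finset.Icc 1 n, m a := by
      have hT : ((Finset.Icc 1 n).image m).card = n := by
        rw [Finset.card_image_of_injOn (fun x hx y hy h => hinj x hx y hy h), Nat.card_Icc]
        omega
      have := sum_range_card_le n ((Finset.Icc 1 n).image m) hT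
      rw [Finset.sum_image (fun x hx y hy h => hinj x hx y hy h)] at this
      exact this
    omega

lemma pinner_Kideal_zero (n : ℕ) (f : MvPolynomial ℕ ℝ) (hf : f ∈ Kideal n) :
    pinner f (chiV n) = 0 := by
  classical
  have main : ∀ g ∈ Kideal n, ∀ q : MvPolynomial ℕ ℝ, pinner (q * g) (chiV n) = 0 := by
    intro g hg
    refine Submodule.span_induction ?_ ?_ ?_ ?_ hg
    · rintro x ⟨k, hk, rfl⟩ q
      rw [Set.mem_Icc] at hk
      have hexp : q * sigmaE n k = ∑ v ∈ q.support,
          ∑ s ∈ Finset.powersetCard k (Finset.Icc 1 n), monomial (v + ind s) (q.coeff v) := by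
        conv_lhs => rw [q.as_sum]
        rw [Finset.sum_mul]
        refine Finset.sum_congr rfl fun v _ => ?_
        rw [sigmaE, Finset.mul_sum]
        refine Finset.sum_congr rfl fun s _ => ?_
        have : ∏ i ∈ s, (X i : MvPolynomial ℕ ℝ) = monomial (ind s) 1 := by
          have h := prod_X_pow s (fun a => a) (fun _ => 1)
          simp only [pow_one] at h
          rw [h, ind]
        rw [this, monomial_mul, mul_one]
      rw [hexp, pinner_sum_left]
      refine Finset.sum_eq_zero fun v _ => ?_
      rw [pinner_sum_left]
      have : ∀ s ∈ Finset.powersetCard k (Finset.Icc 1 n),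
          pinner (monomial (v + ind s) (q.coeff v)) (chiV n)
            = q.coeff v * coeff (v + ind s) (chiV n) :=
        fun s _ => pinner_monomial_left _ _ _
      rw [Finset.sum_congr rfl this, ← Finset.mul_sum, F_zero n k hk.1 v, mul_zero]
    · intro q; rw [mul_zero, pinner_zero_left]
    · intro x y _ _ hx hy q
      rw [mul_add, pinner_add_left, hx q, hy q, add_zero]
    · intro a x _ hx q
      rw [smul_eq_mul, ← mul_assoc, hx (q * a)]
  have := main f hf 1
  rwa [one_mul] at this
lemma factor (n : ℕ) (I : Finset (ℕ × ℕ))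
    (hI : I ⊆ Finset.Icc 1 n ×ˢ Finset.Icc 1 n)
    (hstrict : ∀ p ∈ I, p.1 ≠ p.2)
    (a b c : ℕ) (ha : a ∈ Finset.Icc 1 n) (hb : b ∈ Finset.Icc 1 n) (hc : c ∈ Finset.Icc 1 n)
    (hab : a ≠ b) (hac : a ≠ c) (hbc : b ≠ c)
    (h1 : (a, b) ∈ I) (h2 : (b, a) ∈ I)
    (hiju : ∀ x y : ℕ, x ≠ y → (x, y) ∈ I → (y, x) ∈ I →
      (x = a ∧ y = b) ∨ (x = b ∧ y = a))
    (h3 : (a, c) ∉ I) (h4 : (c, a) ∉ I)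
    (hklu : ∀ x y : ℕ, x ∈ Finset.Icc 1 n → y ∈ Finset.Icc 1 n → x ≠ y →
      (x, y) ∉ I → (y, x) ∉ I → (x = a ∧ y = c) ∨ (x = c ∧ y = a)) :
    ∃ (e : ℝ) (P : MvPolynomial ℕ ℝ), (e = 1 ∨ e = -1) ∧
      chiP I = C e * ((X a - X b) * P) ∧ chiV n = (X a - X c) * P := by
  classical
  set S := (Finset.Icc 1 n ×ˢ Finset.Icc 1 n).filter (fun p => p.1 < p.2) with hS
  set g : ℕ × ℕ → MvPolynomial ℕ ℝ := fun q => X q.1 - X q.2 with hg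
  set m0 : ℕ × ℕ := if a < c then (a, c) else (c, a) with hm0
  set w : ℕ × ℕ := if a < b then (b, a) else (a, b) with hw
  have hm0S : m0 ∈ S := by
    rw [hm0]
    rcases hac.lt_or_gt with h | h
    · rw [if_pos h]
      exact Finset.mem_filter.mpr ⟨Finset.mem_product.mpr ⟨ha, hc⟩, h⟩
    · rw [if_neg (by omega)]
      exact Finset.mem_filter.mpr ⟨Finset.mem_product.mpr ⟨hc, ha⟩, h⟩
  have hm0I : m0 ∉ I ∧ (m0.2, m0.1) ∉ I := by
    rw [hm0]; split_ifs
    · exact ⟨h3, h4⟩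
    · exact ⟨h4, h3⟩
  have hwI : w ∈ I := by
    rw [hw]; split_ifs
    · exact h2
    · exact h1
  have hw21 : w.2 < w.1 := by
    rw [hw]; split_ifs with h
    · exact h
    · dsimp only; omega
  have hwswapI : (w.2, w.1) ∈ I := by
    rw [hw]; split_ifs
    · exact h1
    · exact h2
  set sg : ℕ × ℕ → ℝ := fun p => if p.1 < p.2 then 1 else -1 with hsg
  set srt : ℕ × ℕ → ℕ × ℕ := fun p => if p.1 < p.2 then p else (p.2, p.1) with hsrt
  have hchiP : chiP I = (X w.1 - X w.2) * ∏ p ∈ I.erase w, (X p.1 - X p.2) := by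
    rw [chiP, ← Finset.mul_prod_erase I _ hwI]
  have hchiV : chiV n = g m0 * ∏ q ∈ S.erase m0, g q := by
    have h0 : chiV n = ∏ p ∈ S, g p := rfl
    rw [h0, ← Finset.mul_prod_erase S g hm0S]
  have hfac : ∀ p ∈ I.erase w, (X p.1 - X p.2 : MvPolynomial ℕ ℝ) = C (sg p) * g (srt p) := by
    intro p hp
    have hne := hstrict p (Finset.mem_of_mem_erase hp)
    rw [hsg, hsrt]
    by_cases h : p.1 < p.2
    · dsimp only
      rw [if_pos h, if_pos h]
      simp [hg]
    · dsimp only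
      rw [if_neg h, if_neg h]
      simp only [hg, map_neg, map_one]
      ring
  have hprod : ∏ p ∈ I.erase w, (X p.1 - X p.2 : MvPolynomial ℕ ℝ)
      = C (∏ p ∈ I.erase w, sg p) * ∏ p ∈ I.erase w, g (srt p) := by
    rw [map_prod, ← Finset.prod_mul_distrib]
    exact Finset.prod_congr rfl hfac
  set t := ∏ p ∈ I.erase w, sg p with ht
  have htpm : t = 1 ∨ t = -1 := by
    rw [ht]
    refine Finset.prod_induction sg (fun x => x = 1 ∨ x = -1) ?_ (Or.inl rfl) ?_
    · rintro x y (rfl | rfl) (rfl | rfl) <;> norm_num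
    · intro p _
      rw [hsg]; dsimp only; split_ifs
      · exact Or.inl rfl
      · exact Or.inr rfl
  have hbij : ∏ p ∈ I.erase w, g (srt p) = ∏ q ∈ S.erase m0, g q := by
    refine Finset.prod_nbij' srt (fun q => if q ∈ I then q else (q.2, q.1)) ?_ ?_ ?_ ?_
      (fun p _ => rfl)
    · intro p hp
      have hpI := Finset.mem_of_mem_erase hp
      have hpw := Finset.ne_of_mem_erase hp
      have hne := hstrict p hpI
      have hmem := Finset.mem_product.mp (hI hpI)
      refine Finset.mem_erase.mpr ⟨?_, ?_⟩
      · intro hEq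
        rcases lt_or_gt_of_ne hne with h | h
        · rw [hsrt] at hEq; dsimp only at hEq; rw [if_pos h] at hEq
          exact hm0I.1 (hEq ▸ hpI)
        · rw [hsrt] at hEq; dsimp only at hEq; rw [if_neg (by omega)] at hEq
          refine hm0I.2 ?_
          rw [← hEq]
          exact hpI
      · rcases lt_or_gt_of_ne hne with h | h
        · rw [hsrt]; dsimp only; rw [if_pos h]
          exact Finset.mem_filter.mpr ⟨Finset.mem_product.mpr ⟨hmem.1, hmem.2⟩, h⟩
        · rw [hsrt]; dsimp only; rw [if_neg (by omega)]
          exact Finset.mem_filter.mpr ⟨Finset.mem_product.mpr ⟨hmem.2, hmem.1⟩, h⟩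
    · intro q hq
      obtain ⟨hqm0, hqS⟩ := Finset.mem_erase.mp hq
      have hq12 : q.1 < q.2 := (Finset.mem_filter.mp hqS).2
      have hqmem := Finset.mem_product.mp (Finset.mem_filter.mp hqS).1
      have hqI : (if q ∈ I then q else (q.2, q.1)) ∈ I := by
        split_ifs with hqi
        · exact hqi
        · by_contra hq'
          have hq'' : (q.1, q.2) ∉ I := hqi
          rcases hklu q.1 q.2 hqmem.1 hqmem.2 (by omega) hq'' hq' with ⟨e1, e2⟩ | ⟨e1, e2⟩
          · exact hqm0 (by rw [hm0, if_pos (by omega)]; exact Prod.ext e1 e2)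
          · exact hqm0 (by rw [hm0, if_neg (by omega)]; exact Prod.ext e1 e2)
      refine Finset.mem_erase.mpr ⟨?_, hqI⟩
      intro hEq
      by_cases hqi : q ∈ I
      · rw [if_pos hqi] at hEq
        rw [hEq] at hq12
        omega
      · rw [if_neg hqi] at hEq
        apply hqi
        have hq' : q = (w.2, w.1) := by rw [← hEq]
        rw [hq']
        exact hwswapI
    · intro p hp
      have hpI := Finset.mem_of_mem_erase hp
      have hpw := Finset.ne_of_mem_erase hp
      have hne := hstrict p hpI
      rcases lt_or_gt_of_ne hne with h | h
      · have hsrtp : srt p = p := by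
          rw [hsrt]; dsimp only; rw [if_pos h]
        rw [hsrtp, if_pos hpI]
      · have hsrtp : srt p = (p.2, p.1) := by
          rw [hsrt]; dsimp only; rw [if_neg (show ¬ p.1 < p.2 by omega)]
        rw [hsrtp]
        have hnotin : (p.2, p.1) ∉ I := by
          intro hin
          have hpI' : (p.1, p.2) ∈ I := hpI
          rcases hiju p.1 p.2 hne hpI' hin with ⟨e1, e2⟩ | ⟨e1, e2⟩
          · exact hpw (by rw [hw, if_neg (show ¬ a < b by omega)]; exact Prod.ext e1 e2)
          · exact hpw (by rw [hw, if_pos (show a < b by omega)]; exact Prod.ext e1 e2)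
        rw [if_neg hnotin]
    · intro q hq
      have hq12 : q.1 < q.2 := (Finset.mem_filter.mp (Finset.mem_of_mem_erase hq)).2
      by_cases hqi : q ∈ I
      · rw [if_pos hqi]
        rw [hsrt]
        dsimp only
        rw [if_pos hq12]
      · rw [if_neg hqi]
        rw [hsrt]
        dsimp only
        rw [if_neg (show ¬ q.2 < q.1 by omega)]
  have hPfact : chiP I = (X w.1 - X w.2) * (C t * ∏ q ∈ S.erase m0, g q) := by
    rw [hchiP, hprod, hbij]
  set R := ∏ q ∈ S.erase m0, g q with hR
  rcases lt_or_gt_of_ne hab with hab' | hab' <;> rcases lt_or_gt_of_ne hac with hac' | hac'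
  · refine ⟨-t, R, ?_, ?_, ?_⟩
    · rcases htpm with h | h <;> rw [h] <;> norm_num
    · have hw' : w = (b, a) := by rw [hw, if_pos hab']
      have hXw : (X w.1 - X w.2 : MvPolynomial ℕ ℝ) = -(X a - X b) := by
        rw [hw']; dsimp only; ring
      rw [hPfact, hXw, map_neg]
      ring
    · have hm0' : m0 = (a, c) := by rw [hm0, if_pos hac']
      have hXm : g m0 = (X a - X c : MvPolynomial ℕ ℝ) := by rw [hm0', hg]
      rw [hchiV, hXm]
  · refine ⟨t, -R, htpm, ?_, ?_⟩
    · have hw' : w = (b, a) := by rw [hw, if_pos hab']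
      have hXw : (X w.1 - X w.2 : MvPolynomial ℕ ℝ) = -(X a - X b) := by
        rw [hw']; dsimp only; ring
      rw [hPfact, hXw]
      ring
    · have hm0' : m0 = (c, a) := by rw [hm0, if_neg (by omega)]
      have hXm : g m0 = (X c - X a : MvPolynomial ℕ ℝ) := by rw [hm0', hg]
      rw [hchiV, hXm]
      ring
  · refine ⟨t, R, htpm, ?_, ?_⟩
    · have hw' : w = (a, b) := by rw [hw, if_neg (by omega)]
      have hXw : (X w.1 - X w.2 : MvPolynomial ℕ ℝ) = X a - X b := by rw [hw']
      rw [hPfact, hXw]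
      ring
    · have hm0' : m0 = (a, c) := by rw [hm0, if_pos hac']
      have hXm : g m0 = (X a - X c : MvPolynomial ℕ ℝ) := by rw [hm0', hg]
      rw [hchiV, hXm]
  · refine ⟨-t, -R, ?_, ?_, ?_⟩
    · rcases htpm with h | h <;> rw [h] <;> norm_num
    · have hw' : w = (a, b) := by rw [hw, if_neg (by omega)]
      have hXw : (X w.1 - X w.2 : MvPolynomial ℕ ℝ) = X a - X b := by rw [hw']
      rw [hPfact, hXw, map_neg]
      ring
    · have hm0' : m0 = (c, a) := by rw [hm0, if_neg (by omega)]
      have hXm : g m0 = (X c - X a : MvPolynomial ℕ ℝ) := by rw [hm0', hg]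
      rw [hchiV, hXm]
      ring
lemma X_sub_X_ne (a b : ℕ) (h : a ≠ b) : (X a - X b : MvPolynomial ℕ ℝ) ≠ 0 := by
  intro h0
  have h1 : coeff (Finsupp.single a 1) (X a - X b : MvPolynomial ℕ ℝ) = 1 := by
    rw [coeff_sub, coeff_X, coeff_X']
    rw [if_pos rfl, if_neg (fun hEq => h (by
      have : b = a := Finsupp.single_left_injective (one_ne_zero) hEq
      omega))]
    norm_num
  rw [h0] at h1
  simp at h1

lemma key_lemma (n : ℕ) (I : Finset (ℕ × ℕ))
    (hI : I ⊆ Finset.Icc 1 n ×ˢ Finset.Icc 1 n)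
    (hstrict : ∀ p ∈ I, p.1 ≠ p.2)
    (a b c : ℕ) (ha : a ∈ Finset.Icc 1 n) (hb : b ∈ Finset.Icc 1 n) (hc : c ∈ Finset.Icc 1 n)
    (hab : a ≠ b) (hac : a ≠ c) (hbc : b ≠ c)
    (h1 : (a, b) ∈ I) (h2 : (b, a) ∈ I)
    (hiju : ∀ x y : ℕ, x ≠ y → (x, y) ∈ I → (y, x) ∈ I →
      (x = a ∧ y = b) ∨ (x = b ∧ y = a))
    (h3 : (a, c) ∉ I) (h4 : (c, a) ∉ I)
    (hklu : ∀ x y : ℕ, x ∈ Finset.Icc 1 n → y ∈ Finset.Icc 1 n → x ≠ y →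
      (x, y) ∉ I → (y, x) ∉ I → (x = a ∧ y = c) ∨ (x = c ∧ y = a)) :
    |pinner (chiP I) (chiV n)| = (n.factorial : ℝ) / 2 ∧ chiP I ∉ Kideal n := by
  obtain ⟨e, P, he, hPI, hV⟩ :=
    factor n I hI hstrict a b c ha hb hc hab hac hbc h1 h2 hiju h3 h4 hklu
  set τ := Equiv.swap a c with hτ
  have hren : rename (⇑τ) (chiV n) = - chiV n := rename_swap_chiV ha hc hac
  have hPfix : rename (⇑τ) P = P := by
    have h0 : (X a - X c : MvPolynomial ℕ ℝ) ≠ 0 := X_sub_X_ne a c hac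
    apply mul_left_cancel₀ h0
    have hthis : rename (⇑τ) (chiV n) = rename (⇑τ) ((X a - X c) * P) := by rw [← hV]
    rw [hren, hV, map_mul, map_sub, rename_X, rename_X, hτ, Equiv.swap_apply_left,
      Equiv.swap_apply_right] at hthis
    rw [hτ]
    linear_combination hthis
  have hf : pinner ((X a - X b) * P) (chiV n) = (n.factorial : ℝ) / 2 := by
    have hfg : (X a - X b) * P = chiV n + (X c - X b) * P := by rw [hV]; ring
    have hrg : rename (⇑τ) ((X c - X b) * P) = (X a - X b) * P := by
      rw [map_mul, map_sub, rename_X, rename_X, hτ, Equiv.swap_apply_right,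
        Equiv.swap_apply_of_ne_of_ne (Ne.symm hab) hbc]
      rw [← hτ, hPfix]
    have h5 : pinner ((X c - X b) * P) (chiV n) = - pinner ((X a - X b) * P) (chiV n) := by
      have h6 := pinner_rename τ ((X c - X b) * P) (chiV n)
      rw [hrg, hren] at h6
      rw [← h6]
      have : (- chiV n) = (-1 : ℝ) • chiV n := by rw [neg_one_smul]
      rw [this, pinner_smul_right]
      ring
    have h7 : pinner ((X a - X b) * P) (chiV n)
        = pinner (chiV n) (chiV n) + pinner ((X c - X b) * P) (chiV n) := by
      rw [← pinner_add_left, ← hfg]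
    rw [pinner_chiV_self, h5] at h7
    linarith
  have hval : pinner (chiP I) (chiV n) = e * ((n.factorial : ℝ) / 2) := by
    rw [hPI, C_mul', pinner_smul_left, hf]
  have habs : |(n.factorial : ℝ) / 2| = (n.factorial : ℝ) / 2 := by
    apply abs_of_nonneg
    positivity
  constructor
  · rw [hval, abs_mul]
    rcases he with rfl | rfl <;> simp [habs]
  · intro hmem
    have h8 := pinner_Kideal_zero n _ hmem
    rw [hval] at h8
    have h9 : (0 : ℝ) < n.factorial := by exact_mod_cast Nat.factorial_pos n
    rcases he with rfl | rfl <;> nlinarith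

/-- A pattern `I ∈ P'_n` of complexity 1 whose doubled pair `{i,j}` meets the missing
pair `{k,l}` satisfies `⟨χ_I, χ_n⟩ = ± n!/2`; in particular `I` is `n`-nonsingular. -/
theorem complexity_one_overlap (n : ℕ) (hn : 3 ≤ n) (I : Finset (ℕ × ℕ))
    (hI : I ⊆ Finset.Icc 1 n ×ˢ Finset.Icc 1 n)
    (hstrict : ∀ p ∈ I, p.1 ≠ p.2)
    (hcard : I.card = n * (n - 1) / 2)
    (i j k l : ℕ)
    (hij : i ≠ j) (hijmem : (i, j) ∈ I ∧ (j, i) ∈ I)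
    (hij_unique : ∀ a b : ℕ, a ≠ b → (a, b) ∈ I → (b, a) ∈ I →
      (a = i ∧ b = j) ∨ (a = j ∧ b = i))
    (hk : k ∈ Finset.Icc 1 n) (hl : l ∈ Finset.Icc 1 n) (hkl : k ≠ l)
    (hklmem : (k, l) ∉ I ∧ (l, k) ∉ I)
    (hkl_unique : ∀ a b : ℕ, a ∈ Finset.Icc 1 n → b ∈ Finset.Icc 1 n → a ≠ b →
      (a, b) ∉ I → (b, a) ∉ I → (a = k ∧ b = l) ∨ (a = l ∧ b = k))
    (hmeet : i = k ∨ i = l ∨ j = k ∨ j = l) :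
    |pinner (chiP I) (chiV n)| = (n.factorial : ℝ) / 2 ∧ chiP I ∉ Kideal n := by
  obtain ⟨him, hjm⟩ := hijmem
  obtain ⟨hkl1, hkl2⟩ := hklmem
  have hiIcc : i ∈ Finset.Icc 1 n := (Finset.mem_product.mp (hI him)).1
  have hjIcc : j ∈ Finset.Icc 1 n := (Finset.mem_product.mp (hI him)).2
  rcases hmeet with rfl | rfl | rfl | rfl
  · -- i = k
    have hjl : j ≠ l := fun h => hkl1 (by rw [← h]; exact him)
    exact key_lemma n I hI hstrict i j l hiIcc hjIcc hl hij hkl hjl him hjm hij_unique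
      hkl1 hkl2 hkl_unique
  · -- i = l
    have hik : i ≠ k := Ne.symm hkl
    have hjk : j ≠ k := fun h => hkl1 (by rw [← h]; exact hjm)
    exact key_lemma n I hI hstrict i j k hiIcc hjIcc hk hij hik hjk him hjm hij_unique
      hkl2 hkl1 (fun x y hx hy hxy hu hv => (hkl_unique x y hx hy hxy hu hv).symm)
  · -- j = k
    have hil : i ≠ l := fun h => hkl2 (by rw [← h]; exact him)
    exact key_lemma n I hI hstrict j i l hjIcc hiIcc hl hij.symm hkl hil hjm him
      (fun x y hxy hx hy => (hij_unique x y hxy hx hy).symm) hkl1 hkl2 hkl_unique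
  · -- j = l
    have hjk : j ≠ k := Ne.symm hkl
    have hik : i ≠ k := fun h => hkl2 (by rw [← h]; exact hjm)
    exact key_lemma n I hI hstrict j i k hjIcc hiIcc hk hij.symm hjk hik hjm him
      (fun x y hxy hx hy => (hij_unique x y hxy hx hy).symm) hkl2 hkl1
      (fun x y hx hy hxy hu hv => (hkl_unique x y hx hy hxy hu hv).symm)
end

section
/- Let n ≥ 4 and let I ∈ P'_n have complexity 1. Let {i,j} be the unique 2-element subset of {1,…,n} with both (i,j) ∈ I and (j,i) ∈ I, and let {k,l} be the unique 2-element subset with neither (k,l) nor (l,k) in I. If i, j, k, l are four distinct integers, then I is n-singular, i.e., χ_I ∈ K(n). -/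
section Aux

open Finset MvPolynomial

abbrev Rr := MvPolynomial ℕ ℝ

lemma sigmaE_zero (n : ℕ) : sigmaE n 0 = 1 := by
  simp [sigmaE]

lemma sigmaE_mem (n m : ℕ) (h1 : 1 ≤ m) (h2 : m ≤ n) : sigmaE n m ∈ Kideal n :=
  Ideal.subset_span ⟨m, ⟨h1, h2⟩, rfl⟩

noncomputable def SPoly (n : ℕ) : Polynomial Rr :=
  ∏ a ∈ Finset.Icc 1 n, (Polynomial.X - Polynomial.C (MvPolynomial.X a))

lemma SPoly_eq (n : ℕ) : SPoly n =
    ∑ m ∈ Finset.range (n+1),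
      (-1)^m * (Polynomial.C (sigmaE n m) * Polynomial.X ^ (n - m)) := by
  have hcard : (Finset.Icc 1 n).card = n := by simp
  have h := Multiset.prod_X_sub_X_eq_sum_esymm (((Finset.Icc 1 n).val.map MvPolynomial.X : Multiset Rr))
  rw [Multiset.map_map] at h
  have hc : Multiset.card ((Finset.Icc 1 n).val.map (MvPolynomial.X : ℕ → Rr)) = n := by
    simp [hcard]
  rw [hc] at h
  have : SPoly n = (Multiset.map (fun a => Polynomial.X - Polynomial.C (MvPolynomial.X a))
      (Finset.Icc 1 n).val).prod := rfl
  have e1 : (Multiset.map (fun a => Polynomial.X - Polynomial.C (MvPolynomial.X a))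
      (Finset.Icc 1 n).val : Multiset (Polynomial Rr)) =
      Multiset.map ((fun t => Polynomial.X - Polynomial.C t) ∘ (MvPolynomial.X : ℕ → Rr))
      (Finset.Icc 1 n).val := rfl
  rw [this, e1, h]
  refine Finset.sum_congr rfl fun m _ => ?_
  rw [Finset.esymm_map_val]
  rfl

lemma SPoly_eval_zero {n c : ℕ} (hc : c ∈ Finset.Icc 1 n) :
    (SPoly n).eval (MvPolynomial.X c) = 0 := by
  rw [SPoly, Polynomial.eval_prod]
  exact Finset.prod_eq_zero hc (by simp)

lemma eval_sum_eq {n c : ℕ} (hc : c ∈ Finset.Icc 1 n) :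
    ∑ m ∈ Finset.range (n+1), (-1 : Rr)^m * (sigmaE n m * (MvPolynomial.X c) ^ (n - m)) = 0 := by
  have h := SPoly_eval_zero hc
  rw [SPoly_eq n] at h
  rw [Polynomial.eval_finset_sum] at h
  simpa using h

lemma Xpow_mem {n c : ℕ} (hc : c ∈ Finset.Icc 1 n) : (MvPolynomial.X c : Rr)^n ∈ Kideal n := by
  have h := eval_sum_eq hc
  rw [Finset.sum_range_succ'] at h
  have h0 : ((-1:Rr))^0 * (sigmaE n 0 * (MvPolynomial.X c)^(n-0)) = (MvPolynomial.X c)^n := by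
    simp [sigmaE_zero]
  rw [h0] at h
  have : (MvPolynomial.X c : Rr)^n
      = -∑ m ∈ Finset.range n, (-1:Rr)^(m+1) * (sigmaE n (m+1) * (MvPolynomial.X c)^(n-(m+1))) := by
    linear_combination h
  rw [this]
  refine neg_mem (Ideal.sum_mem _ fun m hm => ?_)
  have hmem : sigmaE n (m+1) ∈ Kideal n :=
    sigmaE_mem n (m+1) (Nat.le_add_left 1 m) (Nat.succ_le_of_lt (Finset.mem_range.mp hm))
  have : ((-1:Rr))^(m+1) * (sigmaE n (m+1) * (MvPolynomial.X c)^(n-(m+1)))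
      = ((-1:Rr))^(m+1) * (MvPolynomial.X c)^(n-(m+1)) * sigmaE n (m+1) := by ring
  rw [this]
  exact Ideal.mul_mem_left _ _ hmem

lemma prod_erase_sub_mem {n c : ℕ} (hc : c ∈ Finset.Icc 1 n) :
    (∏ b ∈ (Finset.Icc 1 n).erase c, (MvPolynomial.X c - MvPolynomial.X b : Rr))
      - (n : Rr) * (MvPolynomial.X c) ^ (n - 1) ∈ Kideal n := by
  classical
  set Rc : Polynomial Rr :=
    ∏ b ∈ (Finset.Icc 1 n).erase c, (Polynomial.X - Polynomial.C (MvPolynomial.X b)) with hRc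
  have hfac : SPoly n = (Polynomial.X - Polynomial.C (MvPolynomial.X c)) * Rc := by
    rw [SPoly, hRc, ← Finset.mul_prod_erase _ _ hc]
  -- derivative of SPoly, evaluated at X c, equals Rc.eval (X c)
  have hder : (Polynomial.derivative (SPoly n)).eval (MvPolynomial.X c)
      = Rc.eval (MvPolynomial.X c) := by
    rw [hfac, Polynomial.derivative_mul]
    simp
  have hRceval : Rc.eval (MvPolynomial.X c)
      = ∏ b ∈ (Finset.Icc 1 n).erase c, (MvPolynomial.X c - MvPolynomial.X b : Rr) := by
    rw [hRc, Polynomial.eval_prod]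
    simp
  -- derivative from the sum side
  have hder2 : (Polynomial.derivative (SPoly n)).eval (MvPolynomial.X c)
      = ∑ m ∈ Finset.range (n+1),
          (-1:Rr)^m * (sigmaE n m * (((n - m : ℕ) : Rr) * (MvPolynomial.X c)^(n - m - 1))) := by
    rw [SPoly_eq n, map_sum, Polynomial.eval_finset_sum]
    refine Finset.sum_congr rfl fun m _ => ?_
    have : Polynomial.derivative ((-1:Polynomial Rr)^m *
        (Polynomial.C (sigmaE n m) * Polynomial.X ^ (n - m)))
        = (-1:Polynomial Rr)^m * (Polynomial.C (sigmaE n m) *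
            (Polynomial.C ((n - m : ℕ) : Rr) * Polynomial.X ^ (n - m - 1))) := by
      rw [show ((-1:Polynomial Rr))^m = Polynomial.C ((-1:Rr)^m) by simp]
      rw [← mul_assoc, ← Polynomial.C_mul, Polynomial.derivative_C_mul_X_pow]
      rw [Polynomial.C_mul, Polynomial.C_mul]
      ring
    rw [this]
    simp
  have key : (∏ b ∈ (Finset.Icc 1 n).erase c, (MvPolynomial.X c - MvPolynomial.X b : Rr))
      = ∑ m ∈ Finset.range (n+1),
          (-1:Rr)^m * (sigmaE n m * (((n - m : ℕ) : Rr) * (MvPolynomial.X c)^(n - m - 1))) := by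
    rw [← hder2, hder, hRceval]
  rw [key, Finset.sum_range_succ']
  have h0 : (-1:Rr)^0 * (sigmaE n 0 * (((n - 0 : ℕ) : Rr) * (MvPolynomial.X c)^(n - 0 - 1)))
      = (n : Rr) * (MvPolynomial.X c)^(n-1) := by
    simp [sigmaE_zero]
  rw [h0, add_sub_cancel_right]
  refine Ideal.sum_mem _ fun m hm => ?_
  have hmem : sigmaE n (m+1) ∈ Kideal n :=
    sigmaE_mem n (m+1) (Nat.le_add_left 1 m) (Nat.succ_le_of_lt (Finset.mem_range.mp hm))
  have : (-1:Rr)^(m+1) * (sigmaE n (m+1) * (((n - (m+1) : ℕ) : Rr) * (MvPolynomial.X c)^(n-(m+1)-1)))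
      = ((-1:Rr)^(m+1) * (((n - (m+1) : ℕ) : Rr) * (MvPolynomial.X c)^(n-(m+1)-1))) * sigmaE n (m+1) := by
    ring
  rw [this]
  exact Ideal.mul_mem_left _ _ hmem

lemma X_sub_X_ne_s9 {a b : ℕ} (hab : a ≠ b) : (MvPolynomial.X a - MvPolynomial.X b : Rr) ≠ 0 := by
  intro h
  exact hab (MvPolynomial.X_injective (by linear_combination h))

lemma h_mem {n a b : ℕ} (ha : a ∈ Finset.Icc 1 n) (hb : b ∈ Finset.Icc 1 n) (hab : a ≠ b) :
    (∑ p ∈ Finset.range n, (MvPolynomial.X a : Rr)^p * (MvPolynomial.X b)^(n - 1 - p))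
      ∈ Kideal n := by
  have hA := eval_sum_eq ha
  have hB := eval_sum_eq hb
  have hsub : ∑ m ∈ Finset.range (n+1), (-1:Rr)^m * (sigmaE n m *
      ((MvPolynomial.X a)^(n-m) - (MvPolynomial.X b)^(n-m))) = 0 := by
    have : ∑ m ∈ Finset.range (n+1), (-1:Rr)^m * (sigmaE n m *
        ((MvPolynomial.X a)^(n-m) - (MvPolynomial.X b)^(n-m)))
      = (∑ m ∈ Finset.range (n+1), (-1:Rr)^m * (sigmaE n m * (MvPolynomial.X a)^(n-m)))
        - ∑ m ∈ Finset.range (n+1), (-1:Rr)^m * (sigmaE n m * (MvPolynomial.X b)^(n-m)) := by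
      rw [← Finset.sum_sub_distrib]
      exact Finset.sum_congr rfl fun m _ => by ring
    rw [this, hA, hB, sub_zero]
  -- factor out (X a - X b) from each term
  have hfac : ∀ m : ℕ, ((MvPolynomial.X a : Rr)^(n-m) - (MvPolynomial.X b)^(n-m))
      = (∑ p ∈ Finset.range (n-m), (MvPolynomial.X a : Rr)^p * (MvPolynomial.X b)^(n-m-1-p))
        * (MvPolynomial.X a - MvPolynomial.X b) := by
    intro m
    exact (geom_sum₂_mul (MvPolynomial.X a : Rr) (MvPolynomial.X b) (n-m)).symm
  have hsum0 : (∑ m ∈ Finset.range (n+1), (-1:Rr)^m * (sigmaE n m *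
      (∑ p ∈ Finset.range (n-m), (MvPolynomial.X a : Rr)^p * (MvPolynomial.X b)^(n-m-1-p))))
      * (MvPolynomial.X a - MvPolynomial.X b) = 0 := by
    rw [Finset.sum_mul, ← hsub]
    refine Finset.sum_congr rfl fun m _ => ?_
    rw [hfac m]; ring
  have hz : (∑ m ∈ Finset.range (n+1), (-1:Rr)^m * (sigmaE n m *
      (∑ p ∈ Finset.range (n-m), (MvPolynomial.X a : Rr)^p * (MvPolynomial.X b)^(n-m-1-p)))) = 0 := by
    rcases mul_eq_zero.mp hsum0 with h | h
    · exact h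
    · exact absurd h (X_sub_X_ne_s9 hab)
  rw [Finset.sum_range_succ'] at hz
  have h0 : (-1:Rr)^0 * (sigmaE n 0 *
      (∑ p ∈ Finset.range (n-0), (MvPolynomial.X a : Rr)^p * (MvPolynomial.X b)^(n-0-1-p)))
      = ∑ p ∈ Finset.range n, (MvPolynomial.X a : Rr)^p * (MvPolynomial.X b)^(n - 1 - p) := by
    simp [sigmaE_zero]
  rw [h0] at hz
  have : (∑ p ∈ Finset.range n, (MvPolynomial.X a : Rr)^p * (MvPolynomial.X b)^(n - 1 - p))
      = -∑ m ∈ Finset.range n, (-1:Rr)^(m+1) * (sigmaE n (m+1) *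
        (∑ p ∈ Finset.range (n-(m+1)), (MvPolynomial.X a : Rr)^p * (MvPolynomial.X b)^(n-(m+1)-1-p))) := by
    linear_combination hz
  rw [this]
  refine neg_mem (Ideal.sum_mem _ fun m hm => ?_)
  have hmem : sigmaE n (m+1) ∈ Kideal n :=
    sigmaE_mem n (m+1) (Nat.le_add_left 1 m) (Nat.succ_le_of_lt (Finset.mem_range.mp hm))
  have : (-1:Rr)^(m+1) * (sigmaE n (m+1) *
      (∑ p ∈ Finset.range (n-(m+1)), (MvPolynomial.X a : Rr)^p * (MvPolynomial.X b)^(n-(m+1)-1-p)))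
      = ((-1:Rr)^(m+1) *
      (∑ p ∈ Finset.range (n-(m+1)), (MvPolynomial.X a : Rr)^p * (MvPolynomial.X b)^(n-(m+1)-1-p)))
        * sigmaE n (m+1) := by ring
  rw [this]
  exact Ideal.mul_mem_left _ _ hmem

lemma pow_pow_mem {n a b : ℕ} (ha : a ∈ Finset.Icc 1 n) (hb : b ∈ Finset.Icc 1 n) (hab : a ≠ b) :
    (MvPolynomial.X a : Rr)^(n-1) * (MvPolynomial.X b)^(n-1) ∈ Kideal n := by
  have hn : 1 ≤ n := by
    rcases Finset.mem_Icc.mp ha with ⟨h1, h2⟩; omega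
  have key : (MvPolynomial.X a : Rr)^(n-1) * (MvPolynomial.X b)^(n-1)
      = (MvPolynomial.X b : Rr)^(n-1) *
          (∑ p ∈ Finset.range n, (MvPolynomial.X a : Rr)^p * (MvPolynomial.X b)^(n - 1 - p))
        - ∑ p ∈ Finset.range (n-1),
            (MvPolynomial.X a : Rr)^p * ((MvPolynomial.X b)^n * (MvPolynomial.X b)^(n-2-p)) := by
    rw [Finset.mul_sum]
    rw [show Finset.range n = Finset.range ((n-1)+1) by rw [Nat.sub_add_cancel hn],
      Finset.sum_range_succ]
    have hlast : (MvPolynomial.X b : Rr)^(n-1) *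
        ((MvPolynomial.X a)^(n-1) * (MvPolynomial.X b)^(n - 1 - (n-1)))
        = (MvPolynomial.X a : Rr)^(n-1) * (MvPolynomial.X b)^(n-1) := by
      rw [Nat.sub_self]; ring
    rw [hlast]
    have hterm : ∀ p ∈ Finset.range (n-1),
        (MvPolynomial.X b : Rr)^(n-1) * ((MvPolynomial.X a)^p * (MvPolynomial.X b)^(n - 1 - p))
        = (MvPolynomial.X a : Rr)^p * ((MvPolynomial.X b)^n * (MvPolynomial.X b)^(n-2-p)) := by
      intro p hp
      have hp' : p < n - 1 := Finset.mem_range.mp hp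
      have hexp : (n-1) + (n-1-p) = n + (n-2-p) := by omega
      calc (MvPolynomial.X b : Rr)^(n-1) * ((MvPolynomial.X a)^p * (MvPolynomial.X b)^(n - 1 - p))
          = (MvPolynomial.X a : Rr)^p * (MvPolynomial.X b)^((n-1) + (n-1-p)) := by
            rw [pow_add]; ring
        _ = (MvPolynomial.X a : Rr)^p * (MvPolynomial.X b)^(n + (n-2-p)) := by rw [hexp]
        _ = (MvPolynomial.X a : Rr)^p * ((MvPolynomial.X b)^n * (MvPolynomial.X b)^(n-2-p)) := by
            rw [pow_add]
    rw [Finset.sum_congr rfl hterm]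
    ring
  rw [key]
  refine sub_mem (Ideal.mul_mem_left _ _ (h_mem ha hb hab)) (Ideal.sum_mem _ fun p hp => ?_)
  have : (MvPolynomial.X a : Rr)^p * ((MvPolynomial.X b)^n * (MvPolynomial.X b)^(n-2-p))
      = ((MvPolynomial.X a : Rr)^p * (MvPolynomial.X b)^(n-2-p)) * (MvPolynomial.X b)^n := by ring
  rw [this]
  exact Ideal.mul_mem_left _ _ (Xpow_mem hb)

lemma PP_mem {n i j : ℕ} (hi : i ∈ Finset.Icc 1 n) (hj : j ∈ Finset.Icc 1 n) (hij : i ≠ j)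
    (g : Rr) :
    (∏ b ∈ (Finset.Icc 1 n).erase i, (MvPolynomial.X i - MvPolynomial.X b : Rr)) *
    (∏ b ∈ (Finset.Icc 1 n).erase j, (MvPolynomial.X j - MvPolynomial.X b : Rr)) * g
      ∈ Kideal n := by
  set Pi := ∏ b ∈ (Finset.Icc 1 n).erase i, (MvPolynomial.X i - MvPolynomial.X b : Rr) with hPi
  set Pj := ∏ b ∈ (Finset.Icc 1 n).erase j, (MvPolynomial.X j - MvPolynomial.X b : Rr) with hPj
  have hki := prod_erase_sub_mem hi
  have hkj := prod_erase_sub_mem hj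
  have key : Pi * Pj * g
      = (Pi - (n:Rr) * (MvPolynomial.X i)^(n-1)) * (Pj * g)
        + ((n:Rr) * (MvPolynomial.X i)^(n-1)) * ((Pj - (n:Rr) * (MvPolynomial.X j)^(n-1)) * g)
        + ((n:Rr) * (n:Rr) * g) * ((MvPolynomial.X i)^(n-1) * (MvPolynomial.X j)^(n-1)) := by
    ring
  rw [key]
  exact add_mem (add_mem (Ideal.mul_mem_right _ _ hki) (Ideal.mul_mem_left _ _
      (Ideal.mul_mem_right _ _ hkj))) (Ideal.mul_mem_left _ _ (pow_pow_mem hi hj hij))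

lemma chiP_factor (n : ℕ) (I : Finset (ℕ × ℕ))
    (hI : I ⊆ Finset.Icc 1 n ×ˢ Finset.Icc 1 n)
    (hstrict : ∀ p ∈ I, p.1 ≠ p.2)
    (i j k l : ℕ)
    (hij : i ≠ j) (hijmem : (i, j) ∈ I ∧ (j, i) ∈ I)
    (hij_unique : ∀ a b : ℕ, a ≠ b → (a, b) ∈ I → (b, a) ∈ I →
      (a = i ∧ b = j) ∨ (a = j ∧ b = i))
    (hkl_unique : ∀ a b : ℕ, a ∈ Finset.Icc 1 n → b ∈ Finset.Icc 1 n → a ≠ b →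
      (a, b) ∉ I → (b, a) ∉ I → (a = k ∧ b = l) ∨ (a = l ∧ b = k))
    (hdistinct : i ≠ k ∧ i ≠ l ∧ j ≠ k ∧ j ≠ l) :
    ∃ B : Rr, chiP I =
      (∏ b ∈ (Finset.Icc 1 n).erase i, (MvPolynomial.X i - MvPolynomial.X b : Rr)) *
      (∏ b ∈ (Finset.Icc 1 n).erase j, (MvPolynomial.X j - MvPolynomial.X b : Rr)) * B := by
  classical
  set s := Finset.Icc 1 n with hs
  have hi : i ∈ s := (Finset.mem_product.mp (hI hijmem.1)).1
  have hj : j ∈ s := (Finset.mem_product.mp (hI hijmem.1)).2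
  set z := (s.erase j).erase i with hz
  have hzmem : ∀ b ∈ z, b ∈ s ∧ b ≠ i ∧ b ≠ j := by
    intro b hb
    have h1 : b ≠ i := Finset.ne_of_mem_erase hb
    have h2 : b ∈ s.erase j := Finset.mem_of_mem_erase hb
    exact ⟨Finset.mem_of_mem_erase h2, h1, Finset.ne_of_mem_erase h2⟩
  have hmemz : ∀ b, b ∈ s → b ≠ i → b ≠ j → b ∈ z := by
    intro b hbs hbi hbj
    exact Finset.mem_erase.mpr ⟨hbi, Finset.mem_erase.mpr ⟨hbj, hbs⟩⟩
  -- orientation lemmas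
  have horj : ∀ b ∈ z, (j, b) ∈ I ∨ (b, j) ∈ I := by
    intro b hb
    obtain ⟨hbs, hbi, hbj⟩ := hzmem b hb
    by_contra hcon
    push_neg at hcon
    rcases hkl_unique j b hj hbs (Ne.symm hbj) hcon.1 hcon.2 with ⟨h1, _⟩ | ⟨h1, _⟩
    · exact hdistinct.2.2.1 h1
    · exact hdistinct.2.2.2 h1
  have hori : ∀ b ∈ z, (i, b) ∈ I ∨ (b, i) ∈ I := by
    intro b hb
    obtain ⟨hbs, hbi, hbj⟩ := hzmem b hb
    by_contra hcon
    push_neg at hcon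
    rcases hkl_unique i b hi hbs (Ne.symm hbi) hcon.1 hcon.2 with ⟨h1, _⟩ | ⟨h1, _⟩
    · exact hdistinct.1 h1
    · exact hdistinct.2.1 h1
  -- predicates
  set q1 : ℕ × ℕ → Prop := fun p => p.1 = j ∨ p.2 = j with hq1def
  set q2 : ℕ × ℕ → Prop := fun p => p = (i, j) ∨ p = (j, i) with hq2def
  set q3 : ℕ × ℕ → Prop := fun p => p.1 = i ∨ p.2 = i with hq3def
  set fpr : ℕ × ℕ → Rr := fun p => MvPolynomial.X p.1 - MvPolynomial.X p.2 with hfpr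
  have hsplit1 : (∏ p ∈ I.filter q1, fpr p) * (∏ p ∈ I.filter (fun p => ¬ q1 p), fpr p)
      = chiP I := Finset.prod_filter_mul_prod_filter_not I q1 fpr
  have hsplit2 : (∏ p ∈ (I.filter q1).filter q2, fpr p) *
      (∏ p ∈ (I.filter q1).filter (fun p => ¬ q2 p), fpr p) = ∏ p ∈ I.filter q1, fpr p :=
    Finset.prod_filter_mul_prod_filter_not (I.filter q1) q2 fpr
  have hsplit3 : (∏ p ∈ (I.filter (fun p => ¬ q1 p)).filter q3, fpr p) *
      (∏ p ∈ (I.filter (fun p => ¬ q1 p)).filter (fun p => ¬ q3 p), fpr p)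
      = ∏ p ∈ I.filter (fun p => ¬ q1 p), fpr p :=
    Finset.prod_filter_mul_prod_filter_not (I.filter (fun p => ¬ q1 p)) q3 fpr
  -- the doubled pair
  have hAset : (I.filter q1).filter q2 = ({(i, j), (j, i)} : Finset (ℕ × ℕ)) := by
    ext p
    simp only [Finset.mem_filter, Finset.mem_insert, Finset.mem_singleton, hq1def, hq2def]
    constructor
    · rintro ⟨_, h⟩; exact h
    · rintro (rfl | rfl)
      · exact ⟨⟨hijmem.1, Or.inr rfl⟩, Or.inl rfl⟩
      · exact ⟨⟨hijmem.2, Or.inl rfl⟩, Or.inr rfl⟩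
  have hprodA : ∏ p ∈ (I.filter q1).filter q2, fpr p
      = (MvPolynomial.X i - MvPolynomial.X j) * (MvPolynomial.X j - MvPolynomial.X i) := by
    rw [hAset, Finset.prod_pair (by intro h; exact hij (congrArg Prod.fst h))]
  -- the pairs touching j (other than the doubled pair)
  have hJ1 : ∏ p ∈ (I.filter q1).filter (fun p => ¬ q2 p), fpr p
      = ∏ b ∈ z, ((if (j, b) ∈ I then (1 : Rr) else -1) *
          (MvPolynomial.X j - MvPolynomial.X b)) := by
    refine (Finset.prod_nbij' (fun b => if (j, b) ∈ I then ((j, b) : ℕ × ℕ) else (b, j))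
      (fun p => if p.1 = j then p.2 else p.1) ?_ ?_ ?_ ?_ ?_).symm
    · intro b hb
      obtain ⟨hbs, hbi, hbj⟩ := hzmem b hb
      by_cases hcase : (j, b) ∈ I
      · simp only [if_pos hcase]
        refine Finset.mem_filter.mpr ⟨Finset.mem_filter.mpr ⟨hcase, Or.inl rfl⟩, ?_⟩
        rintro (h | h)
        · injection h with h1 h2; exact hij h1.symm
        · injection h with h1 h2; exact hbi h2
      · have hmem : (b, j) ∈ I := (horj b hb).resolve_left hcase
        simp only [if_neg hcase]
        refine Finset.mem_filter.mpr ⟨Finset.mem_filter.mpr ⟨hmem, Or.inr rfl⟩, ?_⟩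
        rintro (h | h)
        · injection h with h1 h2; exact hbi h1
        · injection h with h1 h2; exact hbj h1
    · intro p hp
      obtain ⟨hp1, hp2⟩ := Finset.mem_filter.mp hp
      obtain ⟨hpI, hpq1⟩ := Finset.mem_filter.mp hp1
      have hne := hstrict p hpI
      have hps := Finset.mem_product.mp (hI hpI)
      by_cases hcase : p.1 = j
      · simp only [if_pos hcase]
        refine hmemz p.2 hps.2 ?_ ?_
        · intro h; exact hp2 (Or.inr (Prod.ext_iff.mpr ⟨hcase, h⟩))
        · intro h; exact hne (by rw [hcase, h])
      · have hcase2 : p.2 = j := hpq1.resolve_left hcase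
        simp only [if_neg hcase]
        refine hmemz p.1 hps.1 ?_ hcase
        intro h; exact hp2 (Or.inl (Prod.ext_iff.mpr ⟨h, hcase2⟩))
    · intro b hb
      obtain ⟨hbs, hbi, hbj⟩ := hzmem b hb
      by_cases hcase : (j, b) ∈ I
      · simp [hcase]
      · simp [hcase, hbj]
    · intro p hp
      obtain ⟨hp1, hp2⟩ := Finset.mem_filter.mp hp
      obtain ⟨hpI, hpq1⟩ := Finset.mem_filter.mp hp1
      by_cases hcase : p.1 = j
      · have hpe : p = (j, p.2) := Prod.ext_iff.mpr ⟨hcase, rfl⟩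
        simp only [if_pos hcase]
        rw [if_pos (show ((j, p.2) : ℕ × ℕ) ∈ I by rw [← hpe]; exact hpI)]
        exact hpe.symm
      · have hcase2 : p.2 = j := hpq1.resolve_left hcase
        have hpe : p = (p.1, j) := Prod.ext_iff.mpr ⟨rfl, hcase2⟩
        simp only [if_neg hcase]
        have hnot : (j, p.1) ∉ I := by
          intro hcon
          have hpi : (p.1, j) ∈ I := by rw [← hpe]; exact hpI
          rcases hij_unique p.1 j hcase hpi hcon with ⟨h1, _⟩ | ⟨h1, _⟩
          · exact hp2 (Or.inl (Prod.ext_iff.mpr ⟨h1, hcase2⟩))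
          · exact hcase h1
        rw [if_neg hnot]
        exact hpe.symm
    · intro b hb
      by_cases hcase : (j, b) ∈ I
      · simp only [if_pos hcase, hfpr]; ring
      · simp only [if_neg hcase, hfpr]; ring
  -- the pairs touching i but not j
  have hJ2 : ∏ p ∈ (I.filter (fun p => ¬ q1 p)).filter q3, fpr p
      = ∏ b ∈ z, ((if (i, b) ∈ I then (1 : Rr) else -1) *
          (MvPolynomial.X i - MvPolynomial.X b)) := by
    refine (Finset.prod_nbij' (fun b => if (i, b) ∈ I then ((i, b) : ℕ × ℕ) else (b, i))
      (fun p => if p.1 = i then p.2 else p.1) ?_ ?_ ?_ ?_ ?_).symm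
    · intro b hb
      obtain ⟨hbs, hbi, hbj⟩ := hzmem b hb
      by_cases hcase : (i, b) ∈ I
      · simp only [if_pos hcase]
        refine Finset.mem_filter.mpr ⟨Finset.mem_filter.mpr ⟨hcase, ?_⟩, Or.inl rfl⟩
        rintro (h | h)
        · exact hij h
        · exact hbj h
      · have hmem : (b, i) ∈ I := (hori b hb).resolve_left hcase
        simp only [if_neg hcase]
        refine Finset.mem_filter.mpr ⟨Finset.mem_filter.mpr ⟨hmem, ?_⟩, Or.inr rfl⟩
        rintro (h | h)
        · exact hbj h
        · exact hij h
    · intro p hp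
      obtain ⟨hp1, hp3⟩ := Finset.mem_filter.mp hp
      obtain ⟨hpI, hpq1⟩ := Finset.mem_filter.mp hp1
      have hne := hstrict p hpI
      have hps := Finset.mem_product.mp (hI hpI)
      have hq1' : p.1 ≠ j ∧ p.2 ≠ j := by
        constructor
        · intro h; exact hpq1 (Or.inl h)
        · intro h; exact hpq1 (Or.inr h)
      by_cases hcase : p.1 = i
      · simp only [if_pos hcase]
        refine hmemz p.2 hps.2 ?_ hq1'.2
        intro h; exact hne (by rw [hcase, h])
      · have hcase2 : p.2 = i := hp3.resolve_left hcase
        simp only [if_neg hcase]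
        exact hmemz p.1 hps.1 hcase hq1'.1
    · intro b hb
      obtain ⟨hbs, hbi, hbj⟩ := hzmem b hb
      by_cases hcase : (i, b) ∈ I
      · simp [hcase]
      · simp [hcase, hbi]
    · intro p hp
      obtain ⟨hp1, hp3⟩ := Finset.mem_filter.mp hp
      obtain ⟨hpI, hpq1⟩ := Finset.mem_filter.mp hp1
      have hq1' : p.1 ≠ j ∧ p.2 ≠ j := by
        constructor
        · intro h; exact hpq1 (Or.inl h)
        · intro h; exact hpq1 (Or.inr h)
      by_cases hcase : p.1 = i
      · have hpe : p = (i, p.2) := Prod.ext_iff.mpr ⟨hcase, rfl⟩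
        simp only [if_pos hcase]
        rw [if_pos (show ((i, p.2) : ℕ × ℕ) ∈ I by rw [← hpe]; exact hpI)]
        exact hpe.symm
      · have hcase2 : p.2 = i := hp3.resolve_left hcase
        have hpe : p = (p.1, i) := Prod.ext_iff.mpr ⟨rfl, hcase2⟩
        simp only [if_neg hcase]
        have hnot : (i, p.1) ∉ I := by
          intro hcon
          have hpi : (p.1, i) ∈ I := by rw [← hpe]; exact hpI
          rcases hij_unique p.1 i hcase hpi hcon with ⟨_, h2⟩ | ⟨h1, _⟩
          · exact hij h2
          · exact hq1'.1 h1
        rw [if_neg hnot]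
        exact hpe.symm
    · intro b hb
      by_cases hcase : (i, b) ∈ I
      · simp only [if_pos hcase, hfpr]; ring
      · simp only [if_neg hcase, hfpr]; ring
  -- pull out the signs
  have hC1 : ∏ b ∈ z, ((if (j, b) ∈ I then (1 : Rr) else -1) *
      (MvPolynomial.X j - MvPolynomial.X b))
      = (∏ b ∈ z, (if (j, b) ∈ I then (1 : Rr) else -1)) *
        ∏ b ∈ z, (MvPolynomial.X j - MvPolynomial.X b) := Finset.prod_mul_distrib
  have hC2 : ∏ b ∈ z, ((if (i, b) ∈ I then (1 : Rr) else -1) *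
      (MvPolynomial.X i - MvPolynomial.X b))
      = (∏ b ∈ z, (if (i, b) ∈ I then (1 : Rr) else -1)) *
        ∏ b ∈ z, (MvPolynomial.X i - MvPolynomial.X b) := Finset.prod_mul_distrib
  -- relate to the full products
  have hPj : ∏ b ∈ s.erase j, (MvPolynomial.X j - MvPolynomial.X b : Rr)
      = (MvPolynomial.X j - MvPolynomial.X i) *
        ∏ b ∈ z, (MvPolynomial.X j - MvPolynomial.X b) := by
    rw [hz, ← Finset.mul_prod_erase _ _ (Finset.mem_erase.mpr ⟨hij, hi⟩)]
  have hPi : ∏ b ∈ s.erase i, (MvPolynomial.X i - MvPolynomial.X b : Rr)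
      = (MvPolynomial.X i - MvPolynomial.X j) *
        ∏ b ∈ z, (MvPolynomial.X i - MvPolynomial.X b) := by
    have hzz : (s.erase i).erase j = (s.erase j).erase i := by
      ext x; simp only [Finset.mem_erase]; tauto
    rw [hz, ← hzz, ← Finset.mul_prod_erase _ _ (Finset.mem_erase.mpr ⟨Ne.symm hij, hj⟩)]
  refine ⟨(∏ b ∈ z, (if (j, b) ∈ I then (1 : Rr) else -1)) *
    (∏ b ∈ z, (if (i, b) ∈ I then (1 : Rr) else -1)) *
    (∏ p ∈ (I.filter (fun p => ¬ q1 p)).filter (fun p => ¬ q3 p), fpr p), ?_⟩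
  rw [← hsplit1, ← hsplit2, ← hsplit3, hprodA, hJ1, hJ2, hC1, hC2, hPi, hPj]
  ring

end Aux

/-- A pattern `I ∈ P'_n` of complexity 1 whose doubled pair `{i,j}` is disjoint from
the missing pair `{k,l}` is `n`-singular: `χ_I ∈ K(n)`. -/
theorem complexity_one_disjoint_singular (n : ℕ) (hn : 4 ≤ n) (I : Finset (ℕ × ℕ))
    (hI : I ⊆ Finset.Icc 1 n ×ˢ Finset.Icc 1 n)
    (hstrict : ∀ p ∈ I, p.1 ≠ p.2)
    (hcard : I.card = n * (n - 1) / 2)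
    (i j k l : ℕ)
    (hij : i ≠ j) (hijmem : (i, j) ∈ I ∧ (j, i) ∈ I)
    (hij_unique : ∀ a b : ℕ, a ≠ b → (a, b) ∈ I → (b, a) ∈ I →
      (a = i ∧ b = j) ∨ (a = j ∧ b = i))
    (hk : k ∈ Finset.Icc 1 n) (hl : l ∈ Finset.Icc 1 n) (hkl : k ≠ l)
    (hklmem : (k, l) ∉ I ∧ (l, k) ∉ I)
    (hkl_unique : ∀ a b : ℕ, a ∈ Finset.Icc 1 n → b ∈ Finset.Icc 1 n → a ≠ b →
      (a, b) ∉ I → (b, a) ∉ I → (a = k ∧ b = l) ∨ (a = l ∧ b = k))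
    (hdistinct : i ≠ k ∧ i ≠ l ∧ j ≠ k ∧ j ≠ l) :
    chiP I ∈ Kideal n := by
  obtain ⟨B, hB⟩ := chiP_factor n I hI hstrict i j k l hij hijmem hij_unique hkl_unique hdistinct
  have hi : i ∈ Finset.Icc 1 n := (Finset.mem_product.mp (hI hijmem.1)).1
  have hj : j ∈ Finset.Icc 1 n := (Finset.mem_product.mp (hI hijmem.1)).2
  rw [hB]
  exact PP_mem hi hj hij B
end

section
/- For integers 1 ≤ r ≤ m ≤ n, the polynomial ∏_{m < i ≤ n} (x_r − x_i) is congruent to ∂_r h_{n−m+1,m} modulo K(n); that is, ∏_{i=m+1}^{n} (x_r − x_i) − ∂h_{n−m+1,m}/∂x_r ∈ K(n). -/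
/-- The complete homogeneous symmetric polynomial `h_{k,m}` of degree `k`
in the variables `x_1, …, x_m`. -/
noncomputable def hsym (k m : ℕ) : MvPolynomial ℕ ℝ :=
  ∑ s ∈ (Finset.Icc 1 m).sym k, (Multiset.map MvPolynomial.X s.1).prod

open MvPolynomial Finset

noncomputable def EP (S : Finset ℕ) (k : ℕ) : MvPolynomial ℕ ℝ :=
  ∑ s ∈ S.powersetCard k, ∏ i ∈ s, X i

noncomputable def HP (S : Finset ℕ) (k : ℕ) : MvPolynomial ℕ ℝ :=
  ∑ s ∈ S.sym k, (Multiset.map X s.1).prod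

lemma EP_zero (S : Finset ℕ) : EP S 0 = 1 := by
  simp [EP]

lemma HP_zero (S : Finset ℕ) : HP S 0 = 1 := by
  simp [HP, Finset.sym_zero]; rfl

lemma EP_empty (k : ℕ) : EP ∅ (k+1) = 0 := by
  rw [EP, Finset.powersetCard_eq_empty.2 (by simp), Finset.sum_empty]

lemma HP_empty (k : ℕ) : HP ∅ (k+1) = 0 := by
  simp [HP, Finset.sym_empty]

lemma EP_card_lt {S : Finset ℕ} {k : ℕ} (h : S.card < k) : EP S k = 0 := by
  rw [EP, Finset.powersetCard_eq_empty.2 h, Finset.sum_empty]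

lemma EP_insert {r : ℕ} {S : Finset ℕ} (h : r ∉ S) (k : ℕ) :
    EP (insert r S) (k+1) = EP S (k+1) + X r * EP S k := by
  have hdisj : Disjoint (powersetCard (k+1) S) ((powersetCard k S).image (insert r)) := by
    rw [Finset.disjoint_left]
    intro a ha ha'
    obtain ⟨b, hb, rfl⟩ := Finset.mem_image.1 ha'
    exact h ((Finset.mem_powersetCard.1 ha).1 (Finset.mem_insert_self r b))
  have hinj : ∀ a ∈ powersetCard k S, ∀ b ∈ powersetCard k S,
      insert r a = insert r b → a = b := by
    intro a ha b hb hab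
    have hra : r ∉ a := fun hr => h ((Finset.mem_powersetCard.1 ha).1 hr)
    have hrb : r ∉ b := fun hr => h ((Finset.mem_powersetCard.1 hb).1 hr)
    rw [← Finset.erase_insert hra, ← Finset.erase_insert hrb, hab]
  rw [EP, Finset.powersetCard_succ_insert h, Finset.sum_union hdisj, Finset.sum_image hinj]
  rw [EP, EP, Finset.mul_sum]
  congr 1
  apply Finset.sum_congr rfl
  intro s hs
  rw [Finset.prod_insert (fun hrs => h ((Finset.mem_powersetCard.1 hs).1 hrs))]

lemma HP_erase {r : ℕ} {S : Finset ℕ} (h : r ∈ S) (k : ℕ) :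
    HP S (k+1) = X r * HP S k + HP (S.erase r) (k+1) := by
  classical
  rw [HP, ← Finset.sum_filter_add_sum_filter_not (S.sym (k+1)) (fun s => r ∈ s)]
  congr 1
  · rw [HP, Finset.mul_sum]
    refine Finset.sum_bij' (fun (s : Sym ℕ (k+1)) hs => s.erase r (Finset.mem_filter.1 hs).2)
      (fun (t : Sym ℕ k) _ => r ::ₛ t) ?_ ?_ ?_ ?_ ?_
    · intro a ha
      rw [Finset.mem_sym_iff]
      intro b hb
      have hb' : b ∈ a := by
        have hcoe : (a.erase r (Finset.mem_filter.1 ha).2 : Multiset ℕ) =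
            (a : Multiset ℕ).erase r := Sym.coe_erase _
        have hb2 : b ∈ ((a : Multiset ℕ).erase r) := by rw [← hcoe]; exact hb
        exact Multiset.mem_of_mem_erase hb2
      exact Finset.mem_sym_iff.1 (Finset.mem_filter.1 ha).1 b hb'
    · intro a ha
      rw [Finset.mem_filter]
      refine ⟨Finset.mem_sym_iff.2 ?_, Sym.mem_cons_self r a⟩
      intro b hb
      rcases Sym.mem_cons.1 hb with rfl | hb
      · exact h
      · exact Finset.mem_sym_iff.1 ha b hb
    · intro a ha
      exact Sym.cons_erase _
    · intro a ha
      exact Sym.erase_cons_head _ _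
    · intro a ha
      have hra : r ∈ (a : Multiset ℕ) := (Finset.mem_filter.1 ha).2
      have hcoe : (a.erase r (Finset.mem_filter.1 ha).2).1 = (a.1).erase r := Sym.coe_erase _
      simp only [hcoe]
      exact (Multiset.prod_map_erase (f := X) hra).symm
  · congr 1
    ext s
    simp only [Finset.mem_filter, Finset.mem_sym_iff, Finset.mem_erase]
    constructor
    · rintro ⟨h1, h2⟩ a ha
      exact ⟨fun he => h2 (he ▸ ha), h1 a ha⟩
    · intro h1
      exact ⟨fun a ha => (h1 a ha).2, fun hr => (h1 r hr).1 rfl⟩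

lemma HP_insert {r : ℕ} {S : Finset ℕ} (h : r ∉ S) (k : ℕ) :
    HP (insert r S) (k+1) = X r * HP (insert r S) k + HP S (k+1) := by
  have := HP_erase (Finset.mem_insert_self r S) k
  rwa [Finset.erase_insert h] at this

lemma pderiv_multiset {r : ℕ} (t : Multiset ℕ) (h : r ∉ t) :
    pderiv r ((Multiset.map X t).prod : MvPolynomial ℕ ℝ) = 0 := by
  induction t using Multiset.induction_on with
  | empty => simp
  | cons a s ih =>
    have har : a ≠ r := fun he => h (he ▸ Multiset.mem_cons_self a s)
    have hrs : r ∉ s := fun hr => h (Multiset.mem_cons_of_mem hr)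
    rw [Multiset.map_cons, Multiset.prod_cons, pderiv_mul, ih hrs,
      pderiv_X_of_ne har]
    ring

lemma pderiv_HP {r : ℕ} {S : Finset ℕ} (h : r ∉ S) (k : ℕ) :
    pderiv r (HP S k) = 0 := by
  rw [HP, map_sum]
  apply Finset.sum_eq_zero
  intro s hs
  apply pderiv_multiset
  intro hr
  exact h (Finset.mem_sym_iff.1 hs r hr)

lemma pderiv_HP_succ {r : ℕ} {S : Finset ℕ} (h : r ∈ S) (K : ℕ) :
    pderiv r (HP S (K+1)) = ∑ k ∈ range (K+1), X r ^ (K - k) * HP S k := by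
  induction K with
  | zero =>
    rw [HP_erase h 0, HP_zero, map_add, pderiv_mul, pderiv_X_self,
      pderiv_HP (Finset.notMem_erase r S) 1]
    simp [HP_zero]
  | succ K ih =>
    have hterm : ∀ k ∈ range (K+1),
        X (R := ℝ) r * (X r ^ (K - k) * HP S k) = X r ^ (K + 1 - k) * HP S k := by
      intro k hk
      have hkK : k ≤ K := Nat.lt_succ_iff.1 (Finset.mem_range.1 hk)
      have h2 : K + 1 - k = (K - k) + 1 := by omega
      rw [h2, pow_succ]
      ring
    rw [HP_erase h (K+1), map_add, pderiv_mul, pderiv_X_self,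
      pderiv_HP (Finset.notMem_erase r S) (K+2), ih, Finset.mul_sum,
      Finset.sum_congr rfl hterm, Finset.sum_range_succ _ (K+1)]
    simp only [Nat.sub_self, pow_zero, one_mul, add_zero]
    ring

lemma prod_expand {r : ℕ} {T : Finset ℕ} (h : r ∉ T) :
    ∏ i ∈ T, (X (R := ℝ) r - X i) =
      ∑ k ∈ range (T.card + 1), (-1 : MvPolynomial ℕ ℝ)^k * EP T k * X r ^ (T.card - k) := by
  induction T using Finset.induction_on with
  | empty => simp [EP_zero]
  | @insert a T haT ih =>
    have hra : r ∉ T := fun hr => h (Finset.mem_insert_of_mem hr)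
    have hrna : r ≠ a := fun he => h (he ▸ Finset.mem_insert_self a T)
    rw [Finset.prod_insert haT, ih hra, Finset.card_insert_of_notMem haT, sub_mul]
    -- RHS: sum over range (T.card + 2)
    rw [Finset.sum_range_succ' _ (T.card + 1)]
    -- peeled j=0 term : (-1)^0 * EP (insert a T) 0 * X r ^ (T.card + 1)
    have hsplit : ∀ k ∈ range (T.card + 1),
        (-1 : MvPolynomial ℕ ℝ)^(k+1) * EP (insert a T) (k+1) * X r ^ (T.card + 1 - (k+1)) =
        (-1 : MvPolynomial ℕ ℝ)^(k+1) * EP T (k+1) * X r ^ (T.card - k) +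
        (-(X a)) * ((-1 : MvPolynomial ℕ ℝ)^k * EP T k * X r ^ (T.card - k)) := by
      intro k hk
      rw [EP_insert haT, show T.card + 1 - (k+1) = T.card - k from by omega, pow_succ]
      ring
    rw [Finset.sum_congr rfl hsplit, Finset.sum_add_distrib, ← Finset.mul_sum]
    -- Now : Σ (-1)^{k+1} EP T (k+1) X^{c-k} + (-X a) * S + EP(insert) 0 * X^{c+1}
    -- LHS : X r * S - X a * S
    rw [EP_zero]
    have hXrS : X (R := ℝ) r * ∑ k ∈ range (T.card + 1),
        (-1 : MvPolynomial ℕ ℝ)^k * EP T k * X r ^ (T.card - k) =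
        (∑ k ∈ range (T.card + 1),
          (-1 : MvPolynomial ℕ ℝ)^(k+1) * EP T (k+1) * X r ^ (T.card - k)) +
        X r ^ (T.card + 1) := by
      rw [Finset.mul_sum]
      have h1 : ∀ k ∈ range (T.card + 1),
          X (R := ℝ) r * ((-1 : MvPolynomial ℕ ℝ)^k * EP T k * X r ^ (T.card - k)) =
          (-1 : MvPolynomial ℕ ℝ)^k * EP T k * X r ^ (T.card + 1 - k) := by
        intro k hk
        have : T.card + 1 - k = (T.card - k) + 1 := by
          have := Nat.lt_succ_iff.1 (Finset.mem_range.1 hk); omega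
        rw [this, pow_succ]; ring
      rw [Finset.sum_congr rfl h1]
      -- peel k = 0 : (-1)^0 EP T 0 X^{c+1} = X^{c+1}
      rw [Finset.sum_range_succ' _ T.card]
      have h2 : ∀ k ∈ range T.card,
          (-1 : MvPolynomial ℕ ℝ)^(k+1) * EP T (k+1) * X r ^ (T.card + 1 - (k+1)) =
          (-1 : MvPolynomial ℕ ℝ)^(k+1) * EP T (k+1) * X r ^ (T.card - k) := by
        intro k hk
        rw [show T.card + 1 - (k+1) = T.card - k by omega]
      rw [Finset.sum_congr rfl h2, EP_zero]
      -- now add back last term of target sum which vanishes : k = T.card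
      rw [Finset.sum_range_succ _ T.card, EP_card_lt (Nat.lt_succ_self _)]
      simp only [Nat.sub_zero]
      ring
    rw [hXrS]
    simp only [Nat.sub_zero]
    ring

lemma EH (k : ℕ) : ∀ (S : Finset ℕ),
    ∑ j ∈ range (k+1), (-1 : MvPolynomial ℕ ℝ)^(k-j) * EP S j * HP S (k-j)
      = if k = 0 then 1 else 0 := by
  induction k with
  | zero => intro S; simp [EP_zero, HP_zero]
  | succ k ihk =>
    intro S
    rw [if_neg (Nat.succ_ne_zero k)]
    induction S using Finset.induction_on with
    | empty =>
      apply Finset.sum_eq_zero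
      intro j hj
      match j with
      | 0 => rw [Nat.sub_zero, HP_empty, mul_zero]
      | j+1 => rw [EP_empty, mul_zero, zero_mul]
    | @insert a S ha ih =>
      have hC : ∑ j ∈ range (k+2),
          (-1 : MvPolynomial ℕ ℝ)^(k+1-j) * EP (insert a S) j * HP S (k+1-j)
          = X a * (if k = 0 then 1 else 0) := by
        rw [Finset.sum_range_succ' _ (k+1)]
        have hterm : ∀ j ∈ range (k+1),
            (-1 : MvPolynomial ℕ ℝ)^(k+1-(j+1)) * EP (insert a S) (j+1) * HP S (k+1-(j+1)) =
            (-1 : MvPolynomial ℕ ℝ)^(k-j) * EP S (j+1) * HP S (k-j) +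
            X a * ((-1 : MvPolynomial ℕ ℝ)^(k-j) * EP S j * HP S (k-j)) := by
          intro j hj
          rw [show k+1-(j+1) = k-j from by omega, EP_insert ha]
          ring
        rw [Finset.sum_congr rfl hterm, Finset.sum_add_distrib, ← Finset.mul_sum, ihk S]
        have hih := ih
        rw [Finset.sum_range_succ' _ (k+1)] at hih
        have hterm2 : ∀ j ∈ range (k+1),
            (-1 : MvPolynomial ℕ ℝ)^(k+1-(j+1)) * EP S (j+1) * HP S (k+1-(j+1)) =
            (-1 : MvPolynomial ℕ ℝ)^(k-j) * EP S (j+1) * HP S (k-j) := by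
          intro j hj
          rw [show k+1-(j+1) = k-j from by omega]
        rw [Finset.sum_congr rfl hterm2] at hih
        rw [Nat.sub_zero, EP_zero] at hih
        rw [Nat.sub_zero, EP_zero]
        linear_combination hih
      rw [Finset.sum_range_succ _ (k+1)]
      have hterm3 : ∀ j ∈ range (k+1),
          (-1 : MvPolynomial ℕ ℝ)^(k+1-j) * EP (insert a S) j * HP (insert a S) (k+1-j) =
          (-(X a)) * ((-1 : MvPolynomial ℕ ℝ)^(k-j) * EP (insert a S) j * HP (insert a S) (k-j))
          + (-1 : MvPolynomial ℕ ℝ)^(k+1-j) * EP (insert a S) j * HP S (k+1-j) := by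
        intro j hj
        rw [show k+1-j = (k-j)+1 from by
              have := Nat.lt_succ_iff.1 (Finset.mem_range.1 hj); omega,
            HP_insert ha, pow_succ]
        ring
      rw [Finset.sum_congr rfl hterm3, Finset.sum_add_distrib, ← Finset.mul_sum, ihk (insert a S)]
      rw [Finset.sum_range_succ _ (k+1)] at hC
      simp only [Nat.sub_self, pow_zero, one_mul, HP_zero, mul_one] at hC ⊢
      linear_combination hC

lemma EPT (A : Finset ℕ) (T : Finset ℕ) : Disjoint A T → ∀ k,
    EP T k = ∑ j ∈ range (k+1), (-1 : MvPolynomial ℕ ℝ)^(k-j) * EP (A ∪ T) j * HP A (k-j) := by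
  induction T using Finset.induction_on with
  | empty =>
    intro _ k
    rw [Finset.union_empty, EH k A]
    cases k with
    | zero => rw [if_pos rfl, EP_zero]
    | succ k => rw [if_neg (Nat.succ_ne_zero k), EP_empty]
  | @insert a T' haT ih =>
    intro hd k
    have haA : a ∉ A := (Finset.disjoint_insert_right.1 hd).1
    have hd' : Disjoint A T' := (Finset.disjoint_insert_right.1 hd).2
    have haAT : a ∉ A ∪ T' := by
      rw [Finset.mem_union]
      rintro (h | h)
      · exact haA h
      · exact haT h
    rw [Finset.union_insert]
    cases k with
    | zero =>
      simp [EP_zero, HP_zero]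
    | succ k =>
      rw [EP_insert haT k, Finset.sum_range_succ' _ (k+1)]
      have hterm : ∀ j ∈ range (k+1),
          (-1 : MvPolynomial ℕ ℝ)^(k+1-(j+1)) * EP (insert a (A ∪ T')) (j+1) * HP A (k+1-(j+1)) =
          (-1 : MvPolynomial ℕ ℝ)^(k-j) * EP (A ∪ T') (j+1) * HP A (k-j) +
          X a * ((-1 : MvPolynomial ℕ ℝ)^(k-j) * EP (A ∪ T') j * HP A (k-j)) := by
        intro j hj
        rw [show k+1-(j+1) = k-j from by omega, EP_insert haAT]
        ring
      rw [Finset.sum_congr rfl hterm, Finset.sum_add_distrib, ← Finset.mul_sum, ← ih hd' k]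
      have hih := ih hd' (k+1)
      rw [Finset.sum_range_succ' _ (k+1)] at hih
      have hterm2 : ∀ j ∈ range (k+1),
          (-1 : MvPolynomial ℕ ℝ)^(k+1-(j+1)) * EP (A ∪ T') (j+1) * HP A (k+1-(j+1)) =
          (-1 : MvPolynomial ℕ ℝ)^(k-j) * EP (A ∪ T') (j+1) * HP A (k-j) := by
        intro j hj
        rw [show k+1-(j+1) = k-j from by omega]
      rw [Finset.sum_congr rfl hterm2, Nat.sub_zero, EP_zero] at hih
      rw [Nat.sub_zero, show EP (insert a (A ∪ T')) 0 = 1 from EP_zero _]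
      linear_combination hih

lemma sigma_mem {n j : ℕ} (h1 : 1 ≤ j) (h2 : j ≤ n) : EP (Finset.Icc 1 n) j ∈ Kideal n :=
  Ideal.subset_span ⟨j, ⟨h1, h2⟩, rfl⟩

lemma key (n : ℕ) {A T : Finset ℕ} (hd : Disjoint A T) (hU : A ∪ T = Finset.Icc 1 n)
    {k : ℕ} (hk : k ≤ n) :
    (-1 : MvPolynomial ℕ ℝ)^k * EP T k - HP A k ∈ Kideal n := by
  have h := EPT A T hd k
  rw [hU, Finset.sum_range_succ' _ k, Nat.sub_zero, EP_zero] at h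
  have hone : ((-1 : MvPolynomial ℕ ℝ)^k) * ((-1)^k) = 1 := by
    rw [← pow_add]
    exact Even.neg_one_pow ⟨k, rfl⟩
  have hsum : (∑ j ∈ range k,
      (-1 : MvPolynomial ℕ ℝ)^(k-(j+1)) * EP (Finset.Icc 1 n) (j+1) * HP A (k-(j+1)))
      ∈ Kideal n := by
    apply Ideal.sum_mem
    intro j hj
    have hjn : j + 1 ≤ n := by
      have := Finset.mem_range.1 hj; omega
    exact Ideal.mul_mem_right _ _
      (Ideal.mul_mem_left _ _ (sigma_mem (Nat.succ_le_succ (Nat.zero_le j)) hjn))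
  have heq : (-1 : MvPolynomial ℕ ℝ)^k * EP T k - HP A k =
      (-1 : MvPolynomial ℕ ℝ)^k * ∑ j ∈ range k,
      (-1 : MvPolynomial ℕ ℝ)^(k-(j+1)) * EP (Finset.Icc 1 n) (j+1) * HP A (k-(j+1)) := by
    linear_combination ((-1 : MvPolynomial ℕ ℝ)^k) * h + (HP A k) * hone
  rw [heq]
  exact Ideal.mul_mem_left _ _ hsum


/-- For `1 ≤ r ≤ m ≤ n`:
`∏_{m < i ≤ n} (x_r - x_i) ≡ ∂_r h_{n-m+1,m}  (mod K(n))`. -/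
theorem prod_congruent_pderiv_hsym (n m r : ℕ) (hr : 1 ≤ r) (hrm : r ≤ m) (hmn : m ≤ n) :
    (∏ i ∈ Finset.Icc (m + 1) n, (MvPolynomial.X r - MvPolynomial.X i)) -
      MvPolynomial.pderiv r (hsym (n - m + 1) m) ∈ Kideal n := by
  have hrA : r ∈ Finset.Icc 1 m := Finset.mem_Icc.2 ⟨hr, hrm⟩
  have hrT : r ∉ Finset.Icc (m+1) n := by
    rw [Finset.mem_Icc]; omega
  have hd : Disjoint (Finset.Icc 1 m) (Finset.Icc (m+1) n) := by
    rw [Finset.disjoint_left]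
    intro x hx hx'
    rw [Finset.mem_Icc] at hx hx'
    omega
  have hU : Finset.Icc 1 m ∪ Finset.Icc (m+1) n = Finset.Icc 1 n := by
    ext x
    simp only [Finset.mem_union, Finset.mem_Icc]
    omega
  have hcard : (Finset.Icc (m+1) n).card = n - m := by
    rw [Nat.card_Icc]; omega
  have hhsym : hsym (n - m + 1) m = HP (Finset.Icc 1 m) ((n-m) + 1) := rfl
  rw [hhsym, prod_expand hrT, hcard, pderiv_HP_succ hrA (n-m), ← Finset.sum_sub_distrib]
  apply Ideal.sum_mem
  intro k hk
  have hkn : k ≤ n := by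
    have := Finset.mem_range.1 hk; omega
  have hmem := key n hd hU hkn
  have : (-1 : MvPolynomial ℕ ℝ)^k * EP (Finset.Icc (m+1) n) k * X r ^ (n - m - k) -
      X r ^ (n - m - k) * HP (Finset.Icc 1 m) k =
      ((-1 : MvPolynomial ℕ ℝ)^k * EP (Finset.Icc (m+1) n) k - HP (Finset.Icc 1 m) k) *
        X r ^ (n - m - k) := by ring
  rw [this]
  exact Ideal.mul_mem_right _ _ hmem
end
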